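/- arXiv:1206.5504 — 11 statements merged into one kernel-verified Lean document; each statement's English description precedes it below -/
import Mathlib

section
/- Let (V, B) be a symplectic vector space over ℂ and let C, C' be linear endomorphisms of V that are skew-symmetric with respect to B. Then the following are equivalent: (i) there exist an invertible linear map P : V → V and a nonzero scalar λ ∈ ℂ such that C' = λ • (P ∘ C ∘ P⁻¹) and B(P(C x), P y) = B(C x, y) for all x, y ∈ V; (ii) there exist an isometry Q of (V, B) and a nonzero scalar μ ∈ ℂ such that C' = μ • (Q ∘ C ∘ Q⁻¹). (This is the linear-algebra content of Theorem 2(i)/Proposition 3.4.13: two quadratic Lie superalgebra structures with 2-dimensional even part, realized as double extensions of (V, B) by C and C', are isomorphic if and only if they are isometrically isomorphic.) -/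
open Polynomial


private lemma aux_sqrt_nilpotent {R : Type*} [CommRing R] [Algebra ℂ R]
    {n : R} (hn : IsNilpotent n) : ∃ r : R, r ^ 2 = 1 + n := by
  have key : ∀ j : ℕ, ∃ r : R, (n ∣ r - 1) ∧ (n ^ (j + 1) ∣ r ^ 2 - (1 + n)) := by
    intro j
    induction j using Nat.strong_induction_on with
    | _ j ih =>
      rcases j with _ | j
      · exact ⟨1, ⟨0, by ring⟩, ⟨-1, by ring⟩⟩
      · have hj' : (j + 1) / 2 < j + 1 := Nat.div_lt_self (Nat.succ_pos _) one_lt_two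
        obtain ⟨r, h1, h2⟩ := ih ((j + 1) / 2) hj'
        have hrnil : IsNilpotent (r - 1) := by
          obtain ⟨c, hc⟩ := h1
          obtain ⟨k, hk⟩ := hn
          exact ⟨k, by rw [hc, mul_pow, hk, zero_mul]⟩
        have hu : IsUnit r := by
          have := hrnil.isUnit_one_add
          simpa using this
        obtain ⟨u, hu'⟩ := hu
        set v : R := ↑u⁻¹ with hv'
        have hv : r * v = 1 := by rw [← hu', hv']; exact u.mul_inv
        set h2c : R := algebraMap ℂ R 2⁻¹ with hh2
        have h2one : (2 : R) * h2c = 1 := by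
          rw [hh2]
          have : (2 : R) = algebraMap ℂ R 2 := (map_ofNat (algebraMap ℂ R) 2).symm
          rw [this, ← map_mul]
          norm_num
        set e := r ^ 2 - (1 + n) with he
        refine ⟨r - e * v * h2c, ?_, ?_⟩
        · have hne : n ∣ e := dvd_trans (dvd_pow_self n (Nat.succ_ne_zero _)) h2
          have : n ∣ e * v * h2c := Dvd.dvd.mul_right (Dvd.dvd.mul_right hne v) h2c
          have : n ∣ (r - e * v * h2c) - 1 := by
            have : r - e * v * h2c - 1 = (r - 1) - e * v * h2c := by ring
            rw [this]
            exact dvd_sub h1 ‹n ∣ e * v * h2c›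
          exact this
        · have expand : (r - e * v * h2c) ^ 2 - (1 + n)
              = e * (1 - ((2 : R) * h2c) * (r * v)) + e ^ 2 * v ^ 2 * h2c ^ 2 := by
            rw [he]; ring
          rw [h2one, hv] at expand
          have expand2 : (r - e * v * h2c) ^ 2 - (1 + n) = e ^ 2 * v ^ 2 * h2c ^ 2 := by
            rw [expand]; ring
          rw [expand2]
          obtain ⟨d, hd⟩ := h2
          have hpow : n ^ (j + 2) ∣ e ^ 2 := by
            have h2le : j + 2 ≤ 2 * ((j + 1) / 2 + 1) := by omega
            calc n ^ (j + 2) ∣ n ^ (2 * ((j + 1) / 2 + 1)) := pow_dvd_pow n h2le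
            _ ∣ e ^ 2 := by
                rw [hd, mul_pow, ← pow_mul, mul_comm ((j+1)/2 + 1) 2]
                exact Dvd.intro _ rfl
          exact Dvd.dvd.mul_right (Dvd.dvd.mul_right hpow _) _
  obtain ⟨k, hk⟩ := hn
  obtain ⟨r, _, hr⟩ := key k
  have : n ^ (k + 1) = 0 := by rw [pow_succ, hk, zero_mul]
  rw [this, zero_dvd_iff, sub_eq_zero] at hr
  exact ⟨r, hr⟩

private lemma aux_sqrt_local (lam : ℂ) (hlam : lam ≠ 0) (e : ℕ) :
    ∃ p : ℂ[X], (X - C lam) ^ e ∣ p ^ 2 - X := by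
  obtain ⟨mu, hmu⟩ := IsAlgClosed.exists_pow_nat_eq lam (n := 2) (by norm_num)
  set I := Ideal.span {(X - C lam) ^ e} with hI
  set mk := Ideal.Quotient.mk I with hmk
  set n : ℂ[X] ⧸ I := mk ((X - C lam) * C lam⁻¹) with hn
  have hnil : IsNilpotent n := by
    refine ⟨e, ?_⟩
    rw [hn, ← map_pow, Ideal.Quotient.eq_zero_iff_mem, mul_pow]
    exact Ideal.mul_mem_right _ _ (Ideal.subset_span (Set.mem_singleton _))
  obtain ⟨r, hr⟩ := aux_sqrt_nilpotent hnil
  obtain ⟨q, hq⟩ := Ideal.Quotient.mk_surjective (I := I) (mk (C mu) * r)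
  refine ⟨q, ?_⟩
  rw [← Ideal.mem_span_singleton, ← hI, ← Ideal.Quotient.eq_zero_iff_mem]
  have hq2 : mk (q ^ 2 - X) = mk (C mu) ^ 2 * r ^ 2 - mk X := by
    rw [map_sub, map_pow, hq]; ring
  rw [hq2, hr, ← map_pow, ← map_pow, hmu]
  have hpoly : C lam * (1 : ℂ[X]) + C lam * ((X - C lam) * C lam⁻¹) = X := by
    rw [mul_one]
    have : C lam * ((X - C lam) * C lam⁻¹) = (X - C lam) * (C lam * C lam⁻¹) := by ring
    rw [this, ← C_mul, mul_inv_cancel₀ hlam, C_1, mul_one]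
    ring
  calc mk (C lam) * (1 + n) - mk X
      = mk (C lam * 1 + C lam * ((X - C lam) * C lam⁻¹)) - mk X := by
        rw [hn]; push_cast [map_add, map_mul, map_one, mul_add]; ring
    _ = 0 := by rw [hpoly, sub_self]

private lemma aux_sqrt_mod : ∀ (N : ℕ) (f : ℂ[X]), f.natDegree ≤ N → f.eval 0 ≠ 0 →
    ∃ p : ℂ[X], f ∣ p ^ 2 - X := by
  intro N
  induction N with
  | zero =>
    intro f hdeg h0
    have hf : f = C (f.coeff 0) := eq_C_of_natDegree_eq_zero (Nat.le_zero.mp hdeg)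
    have : IsUnit f := by
      rw [hf]
      exact isUnit_C.mpr (isUnit_iff_ne_zero.mpr (by rwa [coeff_zero_eq_eval_zero]))
    exact ⟨0, this.dvd⟩
  | succ N ih =>
    intro f hdeg h0
    by_cases hd : f.natDegree = 0
    · have hf : f = C (f.coeff 0) := eq_C_of_natDegree_eq_zero hd
      have : IsUnit f := by
        rw [hf]
        exact isUnit_C.mpr (isUnit_iff_ne_zero.mpr (by rwa [coeff_zero_eq_eval_zero]))
      exact ⟨0, this.dvd⟩
    · have hf0 : f ≠ 0 := fun h => h0 (by simp [h])
      have hdeg0 : f.degree ≠ 0 := by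
        rw [degree_eq_natDegree hf0]
        exact_mod_cast hd
      obtain ⟨lam, hroot⟩ := IsAlgClosed.exists_root f hdeg0
      have hlam0 : lam ≠ 0 := fun h => h0 (by rwa [h] at hroot)
      set e := rootMultiplicity lam f with he
      obtain ⟨g, hg⟩ := pow_rootMultiplicity_dvd f lam
      rw [← he] at hg
      have hgl : ¬(X - C lam) ∣ g := by
        rintro ⟨h, hh⟩
        have hdd : (X - C lam) ^ (e + 1) ∣ f := ⟨h, by rw [hg, hh, pow_succ]; ring⟩
        exact pow_rootMultiplicity_not_dvd hf0 lam hdd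
      have hgeval : g.eval lam ≠ 0 := fun h => hgl (dvd_iff_isRoot.mpr h)
      have hg0 : g.eval 0 ≠ 0 := by
        intro h
        apply h0
        rw [hg, eval_mul, h, mul_zero]
      have hgne : g ≠ 0 := fun h => hgeval (by rw [h, eval_zero])
      have hepos : 0 < e := (rootMultiplicity_pos hf0).2 hroot
      have hglt : g.natDegree ≤ N := by
        have hXe : ((X - C lam) ^ e : ℂ[X]) ≠ 0 := pow_ne_zero _ (X_sub_C_ne_zero lam)
        have hnat : f.natDegree = e + g.natDegree := by
          rw [hg, natDegree_mul hXe hgne, natDegree_pow, natDegree_X_sub_C, mul_one]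
        omega
      obtain ⟨p1, hp1⟩ := aux_sqrt_local lam hlam0 e
      obtain ⟨p2, hp2⟩ := ih g hglt hg0
      have hcop : IsCoprime ((X - C lam) ^ e) g :=
        (((irreducible_X_sub_C lam).coprime_iff_not_dvd).mpr hgl).pow_left
      obtain ⟨u, v, huv⟩ := hcop
      set a : ℂ[X] := (X - C lam) ^ e with ha
      set p := p2 * u * a + p1 * v * g with hp
      have h1 : a ∣ p - p1 := ⟨(p2 - p1) * u, by rw [hp]; linear_combination (p1 : ℂ[X]) * huv⟩
      have h2 : g ∣ p - p2 := ⟨(p1 - p2) * v, by rw [hp]; linear_combination (p2 : ℂ[X]) * huv⟩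
      have hA : a ∣ p ^ 2 - X := by
        have : p ^ 2 - X = (p - p1) * (p + p1) + (p1 ^ 2 - X) := by ring
        rw [this]
        exact dvd_add (h1.mul_right _) hp1
      have hG : g ∣ p ^ 2 - X := by
        have : p ^ 2 - X = (p - p2) * (p + p2) + (p2 ^ 2 - X) := by ring
        rw [this]
        exact dvd_add (h2.mul_right _) hp2
      have hcop2 : IsCoprime a g := ⟨u, v, huv⟩
      refine ⟨p, ?_⟩
      rw [hg]
      exact hcop2.mul_dvd hA hG

private lemma aux_sqrt_end {V : Type*} [AddCommGroup V] [Module ℂ V] [FiniteDimensional ℂ V]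
    (S : V →ₗ[ℂ] V) (hS : IsUnit S) :
    ∃ p : ℂ[X], (aeval S p) * (aeval S p) = S := by
  have hint : IsIntegral ℂ S := Algebra.IsIntegral.isIntegral S
  have hfne : minpoly ℂ S ≠ 0 := minpoly.ne_zero hint
  have h0 : (minpoly ℂ S).eval 0 ≠ 0 := by
    intro h
    have hXdvd : X ∣ minpoly ℂ S := by
      rw [X_dvd_iff, coeff_zero_eq_eval_zero]; exact h
    obtain ⟨g, hg⟩ := hXdvd
    have hm : (minpoly ℂ S).Monic := minpoly.monic hint
    have hgm : g.Monic := by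
      have := hm
      rw [hg] at this
      exact monic_X.of_mul_monic_left this
    have haev : aeval S (minpoly ℂ S) = 0 := minpoly.aeval ℂ S
    rw [hg, map_mul, aeval_X] at haev
    have hgz : aeval S g = 0 := by
      have h2 : S * aeval S g = S * 0 := by rw [mul_zero]; exact haev
      exact hS.mul_left_cancel h2
    have hlt : (minpoly ℂ S).degree ≤ g.degree := minpoly.min ℂ S hgm hgz
    have hnd : (minpoly ℂ S).natDegree ≤ g.natDegree := natDegree_le_natDegree hlt
    have hgne : g ≠ 0 := hgm.ne_zero
    have : (minpoly ℂ S).natDegree = 1 + g.natDegree := by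
      rw [hg, natDegree_mul X_ne_zero hgne, natDegree_X]
    omega
  obtain ⟨p, hp⟩ := aux_sqrt_mod (minpoly ℂ S).natDegree (minpoly ℂ S) le_rfl h0
  obtain ⟨q, hq⟩ := hp
  refine ⟨p, ?_⟩
  have : aeval S (p ^ 2 - X) = 0 := by
    rw [hq, map_mul, minpoly.aeval, zero_mul]
  rw [map_sub, map_pow, aeval_X, sub_eq_zero] at this
  rw [← sq]
  exact this

private lemma aux_commute {A : Type*} [Ring A] [Algebra ℂ A] (S T : A)
    (h : Commute S T) (p : ℂ[X]) : Commute (aeval S p) T := by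
  induction p using Polynomial.induction_on' with
  | add p q hp hq =>
    rw [map_add]
    exact hp.add_left hq
  | monomial n a =>
    rw [aeval_monomial]
    exact (Algebra.commute_algebraMap_left a T).mul_left (h.pow_left n)

private lemma aux_selfadj {V : Type*} [AddCommGroup V] [Module ℂ V]
    (B : LinearMap.BilinForm ℂ V) (S : V →ₗ[ℂ] V)
    (hS : ∀ x y, B (S x) y = B x (S y)) (p : ℂ[X]) :
    ∀ x y, B ((aeval S p) x) y = B x ((aeval S p) y) := by
  have hpow : ∀ (n : ℕ) (x y : V), B ((S ^ n) x) y = B x ((S ^ n) y) := by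
    intro n
    induction n with
    | zero => intro x y; simp
    | succ n ihn =>
      intro x y
      have h1 : (S ^ (n + 1)) x = S ((S ^ n) x) := by rw [pow_succ']; rfl
      rw [h1, hS, ihn, ← Module.End.mul_apply, ← pow_succ]
  induction p using Polynomial.induction_on' with
  | add p q hp hq =>
    intro x y
    simp [map_add, LinearMap.add_apply, hp x y, hq x y]
  | monomial n a =>
    intro x y
    rw [aeval_monomial, Module.End.mul_apply, Module.End.mul_apply,
      Module.algebraMap_end_apply, Module.algebraMap_end_apply, map_smul,
      LinearMap.smul_apply, map_smul, smul_eq_mul, smul_eq_mul, hpow n]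

/-- For a symplectic vector space `(V, B)` over `ℂ` and skew-symmetric
endomorphisms `C, C'`, the existence of an invertible `P` and nonzero `λ` with
`C' = λ • P C P⁻¹` and `P*P C = C` is equivalent to the existence of an isometry `Q`
and nonzero `μ` with `C' = μ • Q C Q⁻¹`. -/
theorem stmt0 {V : Type*} [AddCommGroup V] [Module ℂ V] [FiniteDimensional ℂ V]
    (B : LinearMap.BilinForm ℂ V) (hB : B.Nondegenerate)
    (hBalt : ∀ x y : V, B x y = - B y x)
    (C C' : V →ₗ[ℂ] V)
    (hC : ∀ x y : V, B (C x) y = - B x (C y))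
    (hC' : ∀ x y : V, B (C' x) y = - B x (C' y)) :
    (∃ (P : V ≃ₗ[ℂ] V) (lam : ℂ), lam ≠ 0 ∧
        (∀ x : V, C' x = lam • P (C (P.symm x))) ∧
        (∀ x y : V, B (P (C x)) (P y) = B (C x) y)) ↔
    (∃ (Q : V ≃ₗ[ℂ] V) (mu : ℂ), mu ≠ 0 ∧
        (∀ x y : V, B (Q x) (Q y) = B x y) ∧
        (∀ x : V, C' x = mu • Q (C (Q.symm x)))) := by
  constructor
  · rintro ⟨P, lam, hlam, hC'eq, hP⟩
    -- the "Gram" endomorphism S with B (S x) y = B (P x) (P y)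
    set B2 : LinearMap.BilinForm ℂ V :=
      B.compl₁₂ (P : V →ₗ[ℂ] V) (P : V →ₗ[ℂ] V) with hB2
    set S : V →ₗ[ℂ] V :=
      ((B.toDual hB).symm : Module.Dual ℂ V →ₗ[ℂ] V) ∘ₗ B2 with hSdef'
    have hSdef : ∀ x y : V, B (S x) y = B (P x) (P y) := by
      intro x y
      have h1 : S x = (B.toDual hB).symm (B2 x) := rfl
      rw [h1, LinearMap.BilinForm.apply_toDual_symm_apply]
      rfl
    -- S is self-adjoint
    have hSsa : ∀ x y : V, B (S x) y = B x (S y) := by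
      intro x y
      rw [hSdef x y, hBalt (P x) (P y), hBalt x (S y), hSdef y x]
    -- S C = C
    have hSC : ∀ x : V, S (C x) = C x := by
      intro x
      have : ∀ y : V, B (S (C x) - C x) y = 0 := by
        intro y
        rw [map_sub, LinearMap.sub_apply, hSdef (C x) y, hP x y, sub_self]
      have := hB.1 _ this
      rwa [sub_eq_zero] at this
    -- C S = C
    have hCS : ∀ x : V, C (S x) = C x := by
      intro x
      have key : ∀ y : V, B (C (S x) - C x) y = 0 := by
        intro y
        rw [map_sub, LinearMap.sub_apply, sub_eq_zero]
        calc B (C (S x)) y = - B (S x) (C y) := hC (S x) y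
          _ = - B x (S (C y)) := by rw [hSsa]
          _ = - B x (C y) := by rw [hSC y]
          _ = B (C x) y := (hC x y).symm
      have := hB.1 _ key
      rwa [sub_eq_zero] at this
    -- S is invertible
    have hSinj : Function.Injective S := by
      intro x z hxz
      have hxz0 : S (x - z) = 0 := by rw [map_sub, hxz, sub_self]
      have hPx : P (x - z) = 0 := by
        apply hB.1
        intro n
        have : B (S (x - z)) (P.symm n) = B (P (x - z)) (P (P.symm n)) := hSdef _ _
        rw [hxz0, map_zero, LinearMap.zero_apply, P.apply_symm_apply] at this
        exact this.symm
      have := P.injective (by rw [hPx, map_zero] : P (x - z) = P 0)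
      exact sub_eq_zero.mp (by rwa [sub_eq_zero] at this ⊢)
    have hSbij : Function.Bijective S :=
      ⟨hSinj, (LinearMap.injective_iff_surjective).mp hSinj⟩
    have hSunit : IsUnit S := (Module.End.isUnit_iff S).mpr hSbij
    -- square root R of S
    obtain ⟨p, hp⟩ := aux_sqrt_end S hSunit
    set R : V →ₗ[ℂ] V := aeval S p with hRdef
    have hRsa : ∀ x y : V, B (R x) y = B x (R y) := aux_selfadj B S hSsa p
    have hCScomm : Commute S C := by
      ext x
      show S (C x) = C (S x)
      rw [hSC, hCS]
    have hRC : Commute R C := aux_commute S C hCScomm p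
    have hRS : Commute R S := (aux_commute S S (Commute.refl S) p)
    -- R is invertible
    have hRunit : IsUnit R := by
      obtain ⟨u, hu⟩ := hSunit
      refine isUnit_iff_exists.mpr ⟨R * ↑u⁻¹, ?_, ?_⟩
      · rw [← mul_assoc, hp, ← hu, u.mul_inv]
      · have hcomm : Commute R (↑u⁻¹ : V →ₗ[ℂ] V) := by
          refine Commute.units_inv_right ?_
          rw [hu]; exact hRS
        rw [mul_assoc, ← hcomm.eq, ← mul_assoc, hp, ← hu, u.mul_inv]
    have hRbij : Function.Bijective R := (Module.End.isUnit_iff R).mp hRunit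
    set Re : V ≃ₗ[ℂ] V := LinearEquiv.ofBijective R hRbij with hRe
    have hReapp : ∀ x : V, Re x = R x := fun x => rfl
    refine ⟨Re.symm.trans P, lam, hlam, ?_, ?_⟩
    · -- isometry
      intro x y
      have hQ : ∀ z : V, (Re.symm.trans P) z = P (Re.symm z) := fun z => rfl
      rw [hQ x, hQ y, ← hSdef, ← hp]
      have h1 : (R * R) (Re.symm x) = R (R (Re.symm x)) := rfl
      rw [h1, hRsa, ← hReapp, ← hReapp, Re.apply_symm_apply, Re.apply_symm_apply]
    · -- conjugation equation
      intro x
      have hQs : (Re.symm.trans P).symm x = Re (P.symm x) := by simp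
      have hQ : ∀ z : V, (Re.symm.trans P) z = P (Re.symm z) := fun z => rfl
      rw [hQs, hQ]
      have hCR : C (Re (P.symm x)) = R (C (P.symm x)) := by
        rw [hReapp]
        show (C * R) (P.symm x) = (R * C) (P.symm x)
        rw [hRC.eq]
      rw [hCR, ← hReapp, Re.symm_apply_apply]
      exact hC'eq x
  · rintro ⟨Q, mu, hmu, hiso, heq⟩
    exact ⟨Q, mu, hmu, heq, fun x y => hiso (C x) y⟩
end

section
/- Let (q₀, B₀) be a quadratic vector space and (q₁, B₁) a symplectic vector space over ℂ. Let C₀, C₀' be endomorphisms of q₀ skew-symmetric with respect to B₀, and let C₁, C₁' be endomorphisms of q₁ skew-symmetric with respect to B₁, with C₁ ≠ 0. Then the following are equivalent: (i) there exist invertible linear maps P of q₀ and Q of q₁ and a nonzero λ ∈ ℂ such that C₀' = λ • (P ∘ C₀ ∘ P⁻¹), B₀(P(C₀ x), P y) = B₀(C₀ x, y) for all x, y ∈ q₀, C₁' = λ • (Q ∘ C₁ ∘ Q⁻¹), and B₁(Q(C₁ u), Q v) = B₁(C₁ u, v) for all u, v ∈ q₁; (ii) there exist a nonzero μ ∈ ℂ,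 an isometry P' of (q₀, B₀) and an isometry Q' of (q₁, B₁) such that C₀' = μ • (P' ∘ C₀ ∘ P'⁻¹) and C₁' = μ • (Q' ∘ C₁ ∘ Q'⁻¹). (This is the linear-algebra content of Theorems 3 and 4: two singular quadratic Lie superalgebras of type S₁, realized as double extensions by C₀ + C₁ and C₀' + C₁', are isomorphic if and only if they are isometrically isomorphic.) -/
open Polynomial

private lemma sqrt_hensel (α : ℂ) (hα : α ≠ 0) :
    ∀ k : ℕ, ∃ p : ℂ[X], ((X - C α) ^ (k + 1) ∣ p ^ 2 - X) ∧ (p.eval α) ^ 2 = α := by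
  intro k
  induction k with
  | zero =>
    obtain ⟨β, hβ⟩ := IsAlgClosed.exists_pow_nat_eq α (n := 2) (by norm_num)
    refine ⟨C β, ⟨-1, ?_⟩, by simpa using hβ⟩
    rw [← C_pow, hβ]; ring
  | succ k ih =>
    obtain ⟨p, ⟨q, hq⟩, heval⟩ := ih
    have hp : p.eval α ≠ 0 := by
      intro h; rw [h] at heval; simp at heval; exact hα heval.symm
    set t : ℂ := -(q.eval α) / (2 * p.eval α) with ht
    refine ⟨p + Polynomial.C t * (X - C α) ^ (k + 1), ?_, by simp [heval]⟩
    have key : (p + Polynomial.C t * (X - C α) ^ (k + 1)) ^ 2 - X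
        = (X - C α) ^ (k + 1) * (q + 2 * Polynomial.C t * p)
          + (Polynomial.C t) ^ 2 * ((X - C α) ^ (k + 1)) ^ 2 := by
      linear_combination hq
    rw [key]
    apply dvd_add
    · have h1 : (X - C α) ∣ (q + 2 * Polynomial.C t * p) := by
        rw [dvd_iff_isRoot]
        simp only [IsRoot, eval_add, eval_mul, eval_ofNat, eval_C]
        field_simp [ht]
        rw [ht]; field_simp; ring
      have : (X - C α) ^ (k + 1 + 1) = (X - C α) ^ (k + 1) * (X - C α) := by ring
      rw [this]
      exact mul_dvd_mul_left _ h1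
    · rw [← pow_mul]
      exact Dvd.dvd.mul_left (pow_dvd_pow _ (by omega)) _

private lemma crt_sqrt {R : Type*} [CommRing R] {m₁ m₂ p₁ p₂ g : R}
    (h : IsCoprime m₁ m₂) (h₁ : m₁ ∣ p₁ ^ 2 - g) (h₂ : m₂ ∣ p₂ ^ 2 - g) :
    ∃ p, m₁ * m₂ ∣ p ^ 2 - g := by
  obtain ⟨u, v, huv⟩ := h
  refine ⟨p₁ * (v * m₂) + p₂ * (u * m₁), (IsCoprime.mul_dvd ⟨u, v, huv⟩ ?_ ?_)⟩
  · set p := p₁ * (v * m₂) + p₂ * (u * m₁) with hp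
    have key : p - p₁ = (p₂ - p₁) * u * m₁ := by rw [hp]; linear_combination p₁ * huv
    have : p ^ 2 - g = (p - p₁) * (p + p₁) + (p₁ ^ 2 - g) := by ring
    rw [this, key]
    exact dvd_add (dvd_mul_of_dvd_left (Dvd.intro_left _ rfl) _) h₁
  · set p := p₁ * (v * m₂) + p₂ * (u * m₁) with hp
    have key : p - p₂ = (p₁ - p₂) * v * m₂ := by rw [hp]; linear_combination p₂ * huv
    have : p ^ 2 - g = (p - p₂) * (p + p₂) + (p₂ ^ 2 - g) := by ring
    rw [this, key]
    exact dvd_add (dvd_mul_of_dvd_left (Dvd.intro_left _ rfl) _) h₂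

private lemma sqrt_mod_prod (t : Finset ℂ) (h0 : ∀ α ∈ t, α ≠ 0) (k : ℂ → ℕ) :
    ∃ p : ℂ[X], (∏ α ∈ t, (X - C α) ^ (k α + 1)) ∣ p ^ 2 - X := by
  classical
  induction t using Finset.induction_on with
  | empty => exact ⟨0, by simp⟩
  | @insert a s ha ih =>
    obtain ⟨p₁, hd₁, _⟩ := sqrt_hensel a (h0 a (Finset.mem_insert_self a s)) (k a)
    obtain ⟨p₂, hd₂⟩ := ih (fun α hα => h0 α (Finset.mem_insert_of_mem hα))
    have hcop : IsCoprime ((X - C a) ^ (k a + 1)) (∏ α ∈ s, (X - C α) ^ (k α + 1)) := by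
      apply IsCoprime.pow_left
      apply IsCoprime.prod_right
      intro β hβ
      apply IsCoprime.pow_right
      apply Polynomial.isCoprime_X_sub_C_of_isUnit_sub
      have : a ≠ β := fun h => ha (h ▸ hβ)
      exact (sub_ne_zero_of_ne this).isUnit
    rw [Finset.prod_insert ha]
    exact crt_sqrt hcop hd₁ hd₂

private lemma exists_sqrt_end {q : Type*} [AddCommGroup q] [Module ℂ q] [FiniteDimensional ℂ q]
    (U : q →ₗ[ℂ] q) (hU : Function.Injective U) :
    ∃ p : ℂ[X], (aeval U p) * (aeval U p) = U := by
  classical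
  set m := minpoly ℂ U with hm
  have hint : IsIntegral ℂ U := Algebra.IsIntegral.isIntegral (R := ℂ) U
  have hmonic : m.Monic := minpoly.monic hint
  have hsplits : Splits m := IsAlgClosed.splits m
  have hprod : m = (m.roots.map fun α => X - C α).prod :=
    hsplits.eq_prod_roots_of_monic hmonic
  have hroots0 : ∀ α ∈ m.roots.toFinset, α ≠ 0 := by
    intro α hα heq
    have hroot : m.IsRoot α := isRoot_of_mem_roots (Multiset.mem_toFinset.mp hα)
    have heig : Module.End.HasEigenvalue U 0 := by
      rw [← heq]
      exact (Module.End.hasEigenvalue_iff_isRoot (f := U)).mpr hroot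
    obtain ⟨v, hv⟩ := heig.exists_hasEigenvector
    have : U v = 0 := by
      have := hv.apply_eq_smul
      simpa using this
    exact hv.2 (hU (by simpa using this))
  obtain ⟨p, hdvd⟩ := sqrt_mod_prod m.roots.toFinset hroots0 (fun α => m.roots.count α - 1)
  have hprodeq : (∏ α ∈ m.roots.toFinset, (X - C α) ^ (m.roots.count α - 1 + 1)) = m := by
    conv_rhs => rw [hprod]
    rw [Finset.prod_multiset_map_count]
    exact Finset.prod_congr rfl fun α hα => by
      rw [Nat.sub_add_cancel (Multiset.count_pos.mpr (Multiset.mem_toFinset.mp hα))]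
  rw [hprodeq] at hdvd
  obtain ⟨r, hr⟩ := hdvd
  have haev : aeval U (p ^ 2 - X) = 0 := by
    rw [hr, map_mul, hm, minpoly.aeval, zero_mul]
  have := sub_eq_zero.mp (by rwa [map_sub] at haev)
  rw [map_pow, aeval_X, pow_two] at this
  exact ⟨p, this⟩

private lemma key_isometry {q : Type*} [AddCommGroup q] [Module ℂ q] [FiniteDimensional ℂ q]
    (B : LinearMap.BilinForm ℂ q) (hB : B.Nondegenerate) (ε : ℂ) (hε : ε * ε = 1)
    (hsymm : ∀ x y : q, B x y = ε * B y x)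
    (C : q →ₗ[ℂ] q) (hC : ∀ x y : q, B (C x) y = - B x (C y))
    (P : q ≃ₗ[ℂ] q) (hP : ∀ x y : q, B (P (C x)) (P y) = B (C x) y) :
    ∃ P' : q ≃ₗ[ℂ] q, (∀ x y : q, B (P' x) (P' y) = B x y) ∧
      ∀ x : q, P' (C (P'.symm x)) = P (C (P.symm x)) := by
  classical
  -- the operator U = P* P
  set D : q →ₗ[ℂ] q →ₗ[ℂ] ℂ := B.compl₁₂ P.toLinearMap P.toLinearMap with hD
  set U : q →ₗ[ℂ] q :=
    (LinearMap.BilinForm.toDual B hB).symm.toLinearMap ∘ₗ D with hUdefn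
  have hUdef : ∀ x y : q, B (U x) y = B (P x) (P y) := by
    intro x y
    have h1 : ((B.toDual hB) ((B.toDual hB).symm (D x))) y = (D x) y := by
      rw [LinearEquiv.apply_symm_apply]
    have h2 : ((B.toDual hB) ((B.toDual hB).symm (D x))) y
        = B ((B.toDual hB).symm (D x)) y := LinearMap.BilinForm.toDual_def hB
    have h3 : B ((B.toDual hB).symm (D x)) y = (D x) y := h2.symm.trans h1
    simp only [hUdefn, hD] at h3 ⊢
    simpa [LinearMap.compl₁₂_apply] using h3
  have hnd : ∀ z w : q, (∀ y, B z y = B w y) → z = w := by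
    intro z w h
    have h0 : ∀ n, B (z - w) n = 0 := fun n => by
      rw [map_sub, LinearMap.sub_apply, h n, sub_self]
    exact sub_eq_zero.mp (hB.1 _ h0)
  have hUC : ∀ x : q, U (C x) = C x := fun x =>
    hnd _ _ (fun y => by rw [hUdef, hP])
  have hCU : ∀ x : q, C (U x) = C x := by
    intro x
    refine hnd _ _ (fun y => ?_)
    calc B (C (U x)) y = - B (U x) (C y) := hC _ _
      _ = - B (P x) (P (C y)) := by rw [hUdef]
      _ = - (ε * B (P (C y)) (P x)) := by rw [hsymm (P x) (P (C y))]
      _ = - (ε * B (C y) x) := by rw [hP]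
      _ = - (ε * (- B y (C x))) := by rw [hC]
      _ = ε * B y (C x) := by ring
      _ = ε * (ε * B (C x) y) := by rw [hsymm y (C x)]
      _ = B (C x) y := by rw [← mul_assoc, hε, one_mul]
  have hUsym : ∀ x y : q, B (U x) y = B x (U y) := by
    intro x y
    calc B (U x) y = B (P x) (P y) := hUdef _ _
      _ = ε * B (P y) (P x) := hsymm _ _
      _ = ε * B (U y) x := by rw [hUdef]
      _ = ε * (ε * B x (U y)) := by rw [hsymm (U y) x]
      _ = B x (U y) := by rw [← mul_assoc, hε, one_mul]
  have hU0 : ∀ x : q, U x = 0 → x = 0 := by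
    intro x hx
    have hz : ∀ z, B (P x) z = 0 := by
      intro z
      have h1 := hUdef x (P.symm z)
      rw [hx] at h1
      simpa using h1.symm
    have hPx : P x = 0 := hB.1 _ hz
    have : P x = P 0 := by simpa using hPx
    exact P.injective this
  have hUinj : Function.Injective U := by
    intro a b hab
    have : U (a - b) = 0 := by rw [map_sub, hab, sub_self]
    exact sub_eq_zero.mp (hU0 _ this)
  -- square root of U
  obtain ⟨p, hVp⟩ := exists_sqrt_end U hUinj
  set V : q →ₗ[ℂ] q := Polynomial.aeval U p with hVdefn
  have hVVU : ∀ x : q, V (V x) = U x := by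
    intro x
    rw [← hVp]
    rfl
  have hpow : ∀ (n : ℕ) (x y : q), B ((U ^ n) x) y = B x ((U ^ n) y) := by
    intro n
    induction n with
    | zero => intro x y; simp
    | succ n ih =>
      intro x y
      calc B ((U ^ (n + 1)) x) y = B ((U ^ n) (U x)) y := by rw [pow_succ]; rfl
        _ = B (U x) ((U ^ n) y) := ih _ _
        _ = B x (U ((U ^ n) y)) := hUsym _ _
        _ = B x ((U ^ (n + 1)) y) := by rw [show U ^ (n + 1) = U * U ^ n from pow_succ' U n]; rfl
  have hVsym : ∀ x y : q, B (V x) y = B x (V y) := by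
    intro x y
    rw [hVdefn, Polynomial.aeval_eq_sum_range (x := U)]
    simp only [LinearMap.sum_apply, LinearMap.smul_apply, map_sum, map_smul,
      LinearMap.smul_apply, smul_eq_mul]
    refine Finset.sum_congr rfl fun i _ => ?_
    rw [hpow]
  have hUCm : U * C = C := LinearMap.ext fun x => hUC x
  have hCUm : C * U = C := LinearMap.ext fun x => hCU x
  have hcomm : Commute U C := by
    show U * C = C * U
    rw [hUCm, hCUm]
  have hVcomm : Commute V C := by
    rw [hVdefn, Polynomial.aeval_eq_sum_range (x := U)]
    exact Commute.sum_left _ _ _ fun i _ => (hcomm.pow_left i).smul_left _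
  have hVC : ∀ x : q, V (C x) = C (V x) := by
    intro x
    have := congrArg (fun f : q →ₗ[ℂ] q => f x) hVcomm.eq
    simpa [Module.End.mul_apply] using this
  have hVinj : Function.Injective V := by
    intro a b hab
    have h1 : U (a - b) = 0 := by
      rw [← hVVU, map_sub, hab, sub_self, map_zero]
    exact sub_eq_zero.mp (hU0 _ h1)
  have hVsurj : Function.Surjective V :=
    (LinearMap.injective_iff_surjective_of_finrank_eq_finrank rfl).mp hVinj
  set Ve : q ≃ₗ[ℂ] q := LinearEquiv.ofBijective V ⟨hVinj, hVsurj⟩ with hVe_def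
  have hVe : ∀ x : q, Ve x = V x := fun _ => rfl
  have hVVe : ∀ x : q, V (Ve.symm x) = x := by
    intro x
    rw [← hVe]
    exact Ve.apply_symm_apply x
  refine ⟨Ve.symm.trans P, ?_, ?_⟩
  · intro x y
    simp only [LinearEquiv.trans_apply]
    rw [← hUdef, ← hVVU, hVVe, hVsym, hVVe]
  · intro x
    simp only [LinearEquiv.symm_trans_apply, LinearEquiv.trans_apply, LinearEquiv.symm_symm]
    congr 1
    have h1 : C (Ve (P.symm x)) = Ve (C (P.symm x)) := by
      rw [hVe, hVe]
      exact (hVC _).symm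
    rw [h1, Ve.symm_apply_apply]

/-- Isomorphism vs. isometric isomorphism criterion for double extensions
of a quadratic space `(q₀, B₀)` and a symplectic space `(q₁, B₁)` by skew-symmetric maps
`C₀ + C₁` and `C₀' + C₁'` with `C₁ ≠ 0`. -/
theorem stmt1 {q0 q1 : Type*}
    [AddCommGroup q0] [Module ℂ q0] [FiniteDimensional ℂ q0]
    [AddCommGroup q1] [Module ℂ q1] [FiniteDimensional ℂ q1]
    (B0 : LinearMap.BilinForm ℂ q0) (hB0 : B0.Nondegenerate)
    (hB0symm : ∀ x y : q0, B0 x y = B0 y x)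
    (B1 : LinearMap.BilinForm ℂ q1) (hB1 : B1.Nondegenerate)
    (hB1alt : ∀ u v : q1, B1 u v = - B1 v u)
    (C0 C0' : q0 →ₗ[ℂ] q0) (C1 C1' : q1 →ₗ[ℂ] q1)
    (hC0 : ∀ x y : q0, B0 (C0 x) y = - B0 x (C0 y))
    (hC0' : ∀ x y : q0, B0 (C0' x) y = - B0 x (C0' y))
    (hC1 : ∀ u v : q1, B1 (C1 u) v = - B1 u (C1 v))
    (hC1' : ∀ u v : q1, B1 (C1' u) v = - B1 u (C1' v))
    (hC1ne : C1 ≠ 0) :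
    (∃ (P : q0 ≃ₗ[ℂ] q0) (Q : q1 ≃ₗ[ℂ] q1) (lam : ℂ), lam ≠ 0 ∧
        (∀ x : q0, C0' x = lam • P (C0 (P.symm x))) ∧
        (∀ x y : q0, B0 (P (C0 x)) (P y) = B0 (C0 x) y) ∧
        (∀ u : q1, C1' u = lam • Q (C1 (Q.symm u))) ∧
        (∀ u v : q1, B1 (Q (C1 u)) (Q v) = B1 (C1 u) v)) ↔
    (∃ (mu : ℂ) (P' : q0 ≃ₗ[ℂ] q0) (Q' : q1 ≃ₗ[ℂ] q1), mu ≠ 0 ∧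
        (∀ x y : q0, B0 (P' x) (P' y) = B0 x y) ∧
        (∀ u v : q1, B1 (Q' u) (Q' v) = B1 u v) ∧
        (∀ x : q0, C0' x = mu • P' (C0 (P'.symm x))) ∧
        (∀ u : q1, C1' u = mu • Q' (C1 (Q'.symm u)))) := by
  constructor
  · rintro ⟨P, Q, lam, hlam, h1, h2, h3, h4⟩
    obtain ⟨P', hP'iso, hP'conj⟩ :=
      key_isometry B0 hB0 1 (by ring) (fun x y => by rw [one_mul, hB0symm]) C0 hC0 P h2
    obtain ⟨Q', hQ'iso, hQ'conj⟩ :=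
      key_isometry B1 hB1 (-1) (by ring) (fun u v => by rw [hB1alt u v]; ring) C1 hC1 Q h4
    exact ⟨lam, P', Q', hlam, hP'iso, hQ'iso,
      fun x => by rw [h1, hP'conj], fun u => by rw [h3, hQ'conj]⟩
  · rintro ⟨mu, P', Q', hmu, hPiso, hQiso, h1, h2⟩
    exact ⟨P', Q', mu, hmu, h1, fun x y => hPiso _ _, h2, fun u v => hQiso _ _⟩
end

section
/- Let V be a finite-dimensional complex vector space with a nondegenerate bilinear form B that is either symmetric or alternating, and let C and C' be bijective endomorphisms of V, both skew-symmetric with respect to B. Then C and C' are conjugate by an isometry of (V, B) (i.e. there is an isometry P with C' = P ∘ C ∘ P⁻¹) if and only if C and C' are similar, i.e. conjugate by some invertible linear map of V. (This is the content of Proposition 1.4.4: invertible adjoint orbits of o(m) under O(m), and of sp(2n) under Sp(2n), are parametrized exactly by the Jordan-form data (Λ, m, d).) -/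
open Polynomial

lemma sqrt_local (l : ℂ) (hl : l ≠ 0) (k : ℕ) :
    ∃ p : ℂ[X], (X - C l) ^ k ∣ p ^ 2 - X := by
  induction k with
  | zero => exact ⟨0, by simp⟩
  | succ k ih =>
    rcases Nat.eq_zero_or_pos k with hk | hk
    · subst hk
      obtain ⟨c, hc⟩ := IsAlgClosed.exists_pow_nat_eq l (n := 2) (by norm_num)
      refine ⟨C c, ?_⟩
      rw [pow_one, ← C_pow, hc]
      exact ⟨-1, by ring⟩
    · obtain ⟨p, hp⟩ := ih
      have hdvd1 : (X - C l) ∣ p ^ 2 - X := dvd_trans (dvd_pow_self _ hk.ne') hp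
      have hevalsq : eval l p ^ 2 = l := by
        have h2 : eval l (p ^ 2 - X) = 0 :=
          eval_eq_zero_of_dvd_of_eval_eq_zero hdvd1 (by simp)
        simpa [sub_eq_zero] using h2
      have hpl : eval l p ≠ 0 := fun h => hl (by rw [← hevalsq, h]; ring)
      have hirr : Irreducible (X - C l) := irreducible_X_sub_C l
      have hcop : IsCoprime ((X - C l) ^ (k+1)) (2 * p) := by
        refine IsCoprime.pow_left ?_
        rw [hirr.coprime_iff_not_dvd]
        intro hdvd
        have h3 : eval l (2 * p) = 0 :=
          eval_eq_zero_of_dvd_of_eval_eq_zero hdvd (by simp)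
        simp at h3
        exact hpl h3
      obtain ⟨v, u, huv⟩ := hcop
      refine ⟨p - (p ^ 2 - X) * u, ?_⟩
      have key : (p - (p ^ 2 - X) * u) ^ 2 - X
          = (p ^ 2 - X) * (1 - u * (2 * p)) + (p ^ 2 - X) ^ 2 * u ^ 2 := by ring
      rw [key]
      refine dvd_add ?_ ?_
      · have h1 : 1 - u * (2 * p) = v * (X - C l) ^ (k+1) := by linear_combination -huv
        rw [h1]
        exact ⟨(p ^ 2 - X) * v, by ring⟩
      · have : (X - C l) ^ (2 * k) ∣ (p ^ 2 - X) ^ 2 := by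
          rw [two_mul, pow_add, pow_two (p ^ 2 - X)]; exact mul_dvd_mul hp hp
        exact dvd_trans (pow_dvd_pow _ (by omega)) (this.mul_right _)

lemma sqrt_mod (n : ℕ) : ∀ (μ : ℂ[X]), μ.natDegree ≤ n → μ.Monic → μ.eval 0 ≠ 0 →
    ∃ p : ℂ[X], μ ∣ p ^ 2 - X := by
  induction n with
  | zero =>
    intro μ hdeg hm _
    have : μ = 1 := hm.natDegree_eq_zero.mp (Nat.le_zero.mp hdeg)
    exact ⟨0, this ▸ one_dvd _⟩
  | succ n ih =>
    intro μ hdeg hm h0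
    rcases Nat.eq_zero_or_pos μ.natDegree with hd0 | hdpos
    · exact ⟨0, (hm.natDegree_eq_zero.mp hd0) ▸ one_dvd _⟩
    · have hμ0 : μ ≠ 0 := hm.ne_zero
      obtain ⟨l, hl⟩ : ∃ l, μ.IsRoot l :=
        Complex.exists_root (natDegree_pos_iff_degree_pos.mp hdpos)
      have hlne : l ≠ 0 := by
        rintro rfl; exact h0 hl
      set k := μ.rootMultiplicity l with hk
      have hkpos : 0 < k := (μ.rootMultiplicity_pos hμ0).mpr hl
      set ν := μ /ₘ (X - C l) ^ k with hν
      have hfac : (X - C l) ^ k * ν = μ := μ.pow_mul_divByMonic_rootMultiplicity_eq l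
      have hνl : ν.eval l ≠ 0 := eval_divByMonic_pow_rootMultiplicity_ne_zero l hμ0
      have hνmonic : ν.Monic := by
        have := hm
        rw [← hfac] at this
        exact ((monic_X_sub_C l).pow k).of_mul_monic_left this
      have hν0 : ν.eval 0 ≠ 0 := by
        intro h
        apply h0
        rw [← hfac]
        simp [h]
      have hνdeg : ν.natDegree ≤ n := by
        have : μ.natDegree = k + ν.natDegree := by
          rw [← hfac, natDegree_mul (pow_ne_zero _ (X_sub_C_ne_zero l)) hνmonic.ne_zero]
          simp [natDegree_X_sub_C]
        omega
      obtain ⟨p₂, hp₂⟩ := ih ν hνdeg hνmonic hν0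
      obtain ⟨p₁, hp₁⟩ := sqrt_local l hlne k
      have hcop : IsCoprime ((X - C l) ^ k) ν := by
        refine IsCoprime.pow_left ?_
        rw [(irreducible_X_sub_C l).coprime_iff_not_dvd]
        intro hdvd
        exact hνl (eval_eq_zero_of_dvd_of_eval_eq_zero hdvd (by simp))
      obtain ⟨u, v, huv⟩ := id hcop
      set a := (X - C l) ^ k with ha
      set p := p₁ * (v * ν) + p₂ * (u * a) with hpdef
      refine ⟨p, ?_⟩
      rw [← hfac]
      have e1 : p - p₁ = a * (u * (p₂ - p₁)) := by
        rw [hpdef]; linear_combination p₁ * huv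
      have e2 : p - p₂ = ν * (v * (p₁ - p₂)) := by
        rw [hpdef]; linear_combination p₂ * huv
      refine hcop.mul_dvd ?_ ?_
      · have : p ^ 2 - X = (p₁ ^ 2 - X) + (p - p₁) * (p + p₁) := by ring
        rw [this]
        exact dvd_add hp₁ (e1 ▸ (Dvd.intro _ rfl).mul_right _)
      · have : p ^ 2 - X = (p₂ ^ 2 - X) + (p - p₂) * (p + p₂) := by ring
        rw [this]
        exact dvd_add hp₂ (e2 ▸ (Dvd.intro _ rfl).mul_right _)

lemma exists_sqrt_poly {V : Type*} [AddCommGroup V] [Module ℂ V] [FiniteDimensional ℂ V]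
    (M : V →ₗ[ℂ] V) (hM : Function.Injective M) :
    ∃ p : ℂ[X], aeval M p * aeval M p = M := by
  have hint : IsIntegral ℂ M := M.isIntegral
  set μ := minpoly ℂ M with hμ
  have hmonic : μ.Monic := minpoly.monic hint
  have h0 : μ.eval 0 ≠ 0 := by
    intro h
    rw [← coeff_zero_eq_eval_zero] at h
    obtain ⟨q, hq⟩ := X_dvd_iff.mpr h
    have haq : aeval M q = 0 := by
      have h1 : aeval M μ = 0 := minpoly.aeval ℂ M
      rw [hq, map_mul, aeval_X] at h1
      have : ∀ x, M (aeval M q x) = 0 := fun x => congrFun (congrArg DFunLike.coe h1) x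
      ext x
      exact hM (by simpa using this x)
    have hq0 : q ≠ 0 := by
      rintro rfl
      exact hmonic.ne_zero (by simpa using hq)
    have hdvd : μ ∣ q := minpoly.dvd ℂ M haq
    have := Polynomial.natDegree_le_of_dvd hdvd hq0
    have h2 : μ.natDegree = q.natDegree + 1 := by
      rw [hq, natDegree_mul X_ne_zero hq0, natDegree_X]
      omega
    omega
  obtain ⟨p, c, hc⟩ := sqrt_mod μ.natDegree μ le_rfl hmonic h0
  refine ⟨p, ?_⟩
  have : aeval M (p ^ 2 - X) = 0 := by
    rw [hc, map_mul, minpoly.aeval, zero_mul]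
  have h3 : aeval M (p ^ 2) = aeval M (X : ℂ[X]) := by
    rw [← sub_eq_zero, ← map_sub]; exact this
  rw [← pow_two, ← map_pow]
  rw [h3, aeval_X]

section Main

variable {V : Type*} [AddCommGroup V] [Module ℂ V] [FiniteDimensional ℂ V]

lemma pow_sym (B : LinearMap.BilinForm ℂ V) (M : V →ₗ[ℂ] V)
    (hMsym : ∀ x y, B (M x) y = B x (M y)) :
    ∀ (n : ℕ) (x y : V), B ((M ^ n) x) y = B x ((M ^ n) y) := by
  intro n
  induction n with
  | zero => simp
  | succ n ih =>
    intro x y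
    have hsw : ∀ z : V, M ((M ^ n) z) = (M ^ n) (M z) := by
      intro z
      rw [← Module.End.mul_apply, ← Module.End.mul_apply, ← pow_succ', ← pow_succ]
    rw [pow_succ]
    show B ((M ^ n) (M x)) y = B x ((M ^ n) (M y))
    calc B ((M ^ n) (M x)) y = B (M x) ((M ^ n) y) := ih _ _
    _ = B x (M ((M ^ n) y)) := hMsym _ _
    _ = B x ((M ^ n) (M y)) := by rw [hsw]

lemma aeval_sym (B : LinearMap.BilinForm ℂ V) (M : V →ₗ[ℂ] V)
    (hMsym : ∀ x y, B (M x) y = B x (M y)) (p : Polynomial ℂ) :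
    ∀ x y, B ((aeval M p) x) y = B x ((aeval M p) y) := by
  intro x y
  rw [aeval_eq_sum_range]
  simp only [LinearMap.sum_apply, LinearMap.smul_apply, map_sum, LinearMap.map_smul,
    LinearMap.smul_apply, map_smul]
  exact Finset.sum_congr rfl fun i _ => by rw [pow_sym B M hMsym i x y]

lemma aeval_comm (M N : V →ₗ[ℂ] V) (h : ∀ x, M (N x) = N (M x)) (p : Polynomial ℂ) :
    ∀ x, (aeval M p) (N x) = N ((aeval M p) x) := by
  have hpow : ∀ (n : ℕ) (x : V), (M ^ n) (N x) = N ((M ^ n) x) := by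
    intro n
    induction n with
    | zero => simp
    | succ n ih =>
      intro x
      rw [pow_succ]
      show (M ^ n) (M (N x)) = N ((M ^ n) (M x))
      rw [h, ih]
  intro x
  rw [aeval_eq_sum_range]
  simp only [LinearMap.sum_apply, LinearMap.smul_apply, map_sum, map_smul]
  exact Finset.sum_congr rfl fun i _ => by rw [hpow i x]

end Main



/-- For a nondegenerate symmetric or alternating form `B` on a
finite-dimensional complex space and invertible skew-symmetric `C, C'`,
conjugacy by an isometry is equivalent to similarity. -/
theorem stmt2 {V : Type*} [AddCommGroup V] [Module ℂ V] [FiniteDimensional ℂ V]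
    (B : LinearMap.BilinForm ℂ V) (hB : B.Nondegenerate)
    (hBsa : (∀ x y : V, B x y = B y x) ∨ (∀ x y : V, B x y = - B y x))
    (C C' : V →ₗ[ℂ] V)
    (hCbij : Function.Bijective C) (hC'bij : Function.Bijective C')
    (hC : ∀ x y : V, B (C x) y = - B x (C y))
    (hC' : ∀ x y : V, B (C' x) y = - B x (C' y)) :
    (∃ P : V ≃ₗ[ℂ] V, (∀ x y : V, B (P x) (P y) = B x y) ∧
        ∀ x : V, C' x = P (C (P.symm x))) ↔
    (∃ P : V ≃ₗ[ℂ] V, ∀ x : V, C' x = P (C (P.symm x))) := by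
  constructor
  · rintro ⟨P, _, hconj⟩; exact ⟨P, hconj⟩
  rintro ⟨P, hconj⟩
  have hPC : ∀ x, P (C x) = C' (P x) := by
    intro x
    rw [hconj (P x), P.symm_apply_apply]
  -- the "Gram" operator M with B (M x) y = B (P x) (P y)
  set M : V →ₗ[ℂ] V :=
    ((B.toDual hB).symm : Module.Dual ℂ V →ₗ[ℂ] V) ∘ₗ
      (B.compl₁₂ (P : V →ₗ[ℂ] V) (P : V →ₗ[ℂ] V)) with hMdef
  have hM : ∀ x y, B (M x) y = B (P x) (P y) := by
    intro x y
    show B ((B.toDual hB).symm ((B.compl₁₂ (P : V →ₗ[ℂ] V) (P : V →ₗ[ℂ] V)) x)) y = _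
    rw [LinearMap.BilinForm.apply_toDual_symm_apply]
    simp [LinearMap.compl₁₂_apply]
  have hMsym : ∀ x y, B (M x) y = B x (M y) := by
    intro x y
    rcases hBsa with hs | ha
    · calc B (M x) y = B (P x) (P y) := hM x y
        _ = B (P y) (P x) := hs _ _
        _ = B (M y) x := (hM y x).symm
        _ = B x (M y) := (hs (M y) x)
    · calc B (M x) y = B (P x) (P y) := hM x y
        _ = - B (P y) (P x) := ha _ _
        _ = - B (M y) x := by rw [hM y x]
        _ = B x (M y) := (ha x (M y)).symm
  have hMC : ∀ x, M (C x) = C (M x) := by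
    intro x
    have key : ∀ y, B (M (C x) - C (M x)) y = 0 := by
      intro y
      have h1 : B (M (C x)) y = B (P (C x)) (P y) := hM _ _
      have h2 : B (P (C x)) (P y) = - B (P x) (P (C y)) := by
        rw [hPC x, hC' (P x) (P y), hPC y]
      have h3 : B (P x) (P (C y)) = B (M x) (C y) := (hM _ _).symm
      have h4 : B (C (M x)) y = - B (M x) (C y) := hC _ _
      simp only [map_sub, LinearMap.sub_apply]
      rw [h1, h2, h3, h4]
      ring
    have := hB.1 _ key
    rwa [sub_eq_zero] at this
  have hMinj : Function.Injective M := by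
    rw [← LinearMap.ker_eq_bot]
    rw [LinearMap.ker_eq_bot']
    intro x hx
    have hPx : P x = 0 := by
      apply hB.1
      intro z
      have := hM x (P.symm z)
      rw [hx, P.apply_symm_apply] at this
      simpa using this.symm
    simpa using congrArg P.symm hPx
  obtain ⟨p, hp⟩ := exists_sqrt_poly M hMinj
  set S : V →ₗ[ℂ] V := aeval M p with hSdef
  have hSsq : ∀ x, S (S x) = M x := fun x => by
    rw [← Module.End.mul_apply, hp]
  have hSsym : ∀ x y, B (S x) y = B x (S y) := aeval_sym B M hMsym p
  have hSC : ∀ x, S (C x) = C (S x) := aeval_comm M C hMC p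
  have hSinj : Function.Injective S := by
    have : Function.Injective (S ∘ S) := by
      intro a b hab
      exact hMinj (by simpa [hSsq] using hab)
    exact Function.Injective.of_comp this
  have hSbij : Function.Bijective S :=
    ⟨hSinj, (LinearMap.injective_iff_surjective).mp hSinj⟩
  set Se : V ≃ₗ[ℂ] V := LinearEquiv.ofBijective S hSbij with hSe
  have hSeApp : ∀ x, Se x = S x := fun _ => rfl
  set Q : V ≃ₗ[ℂ] V := Se.symm.trans P with hQ
  have hQapp : ∀ x, Q x = P (Se.symm x) := fun _ => rfl
  have hQsymm : ∀ x, Q.symm x = S (P.symm x) := by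
    intro x
    rw [hQ]
    simp [LinearEquiv.trans_symm, LinearEquiv.trans_apply, hSeApp]
  refine ⟨Q, ?_, ?_⟩
  · intro x y
    have hx : S (Se.symm x) = x := by rw [← hSeApp, Se.apply_symm_apply]
    have hy : S (Se.symm y) = y := by rw [← hSeApp, Se.apply_symm_apply]
    rw [hQapp, hQapp, ← hM]
    calc B (M (Se.symm x)) (Se.symm y)
        = B (S (S (Se.symm x))) (Se.symm y) := by rw [hSsq]
      _ = B (S (Se.symm x)) (S (Se.symm y)) := hSsym _ _
      _ = B x y := by rw [hx, hy]
  · intro x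
    rw [hQsymm, hQapp, ← hSC]
    have : Se.symm (S (C (P.symm x))) = C (P.symm x) := by
      rw [← hSeApp, Se.symm_apply_apply]
    rw [this, hconj]
end

section
/- Let V be a finite-dimensional complex vector space with a nondegenerate bilinear form B that is either symmetric or alternating, and let C and C' be nilpotent endomorphisms of V, both skew-symmetric with respect to B. Then C and C' are conjugate by an isometry of (V, B) (i.e. there is an isometry P with C' = P ∘ C ∘ P⁻¹) if and only if C and C' are similar, i.e. conjugate by some invertible linear map of V. (This expresses that nilpotent O(m)-adjoint orbits of o(m), and nilpotent Sp(2n)-adjoint orbits of sp(2n), are determined by the Jordan partition, as in Proposition 1.2.10.) -/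
open Polynomial

lemma newton_sqrt_aux {R : Type*} [CommRing R] [Algebra ℂ R] (n : R) :
    ∀ k : ℕ, ∃ s e : R, s * s + e = 1 + n ∧ n ∣ e ∧ n ^ k ∣ e ∧ n ∣ (s - 1) := by
  intro k
  induction k with
  | zero => exact ⟨1, n, by ring, dvd_refl n, (pow_zero n) ▸ one_dvd _, by simp⟩
  | succ k ih =>
    obtain ⟨s, e, hse, hne, hnke, hns⟩ := ih
    set h : R := algebraMap ℂ R (2⁻¹ : ℂ) with hh
    have h2 : h * 2 = 1 := by
      have : (2 : R) = algebraMap ℂ R 2 := by rw [map_ofNat]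
      rw [hh, this, ← map_mul]
      norm_num
    have key : (1 + n) - (s + e * h) * (s + e * h) = e * (1 - s) - e * e * (h * h) := by
      linear_combination (-1 : R) * hse - s * e * h2
    refine ⟨s + e * h, (1 + n) - (s + e * h) * (s + e * h), by ring, ?_, ?_, ?_⟩
    · rw [key]
      exact dvd_sub (hne.mul_right _) ((hne.mul_right _).mul_right _)
    · rw [key, pow_succ]
      have h1 : n ∣ 1 - s := by rw [← neg_sub s 1]; exact dvd_neg.mpr hns
      exact dvd_sub (mul_dvd_mul hnke h1) ((mul_dvd_mul hnke hne).mul_right _)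
    · have : s + e * h - 1 = (s - 1) + e * h := by ring
      rw [this]
      exact dvd_add hns (hne.mul_right _)

lemma sqrt_one_add_nilpotent {R : Type*} [CommRing R] [Algebra ℂ R] {n : R}
    (hn : IsNilpotent n) : ∃ s : R, s * s = 1 + n := by
  obtain ⟨m, hm⟩ := hn
  obtain ⟨s, e, hse, -, hnke, -⟩ := newton_sqrt_aux n m
  obtain ⟨c, rfl⟩ := hnke
  rw [hm, zero_mul, add_zero] at hse
  exact ⟨s, hse⟩

lemma field_sq {K : Type*} [Field K] [Algebra ℂ K] [FiniteDimensional ℂ K] (x : K) :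
    ∃ t : K, t * t = x := by
  have : Algebra.IsIntegral ℂ K := Algebra.IsIntegral.of_finite ℂ K
  obtain ⟨c, rfl⟩ := (IsAlgClosed.algebraMap_bijective_of_isIntegral (k := ℂ) (K := K)).2 x
  obtain ⟨z, hz⟩ := IsAlgClosed.exists_pow_nat_eq c (n := 2) zero_lt_two
  exact ⟨algebraMap ℂ K z, by rw [← map_mul, ← sq, hz]⟩

lemma red_sq {R : Type*} [CommRing R] [Algebra ℂ R] [FiniteDimensional ℂ R] [IsReduced R]
    (x : R) : ∃ t : R, t * t = x := by
  have : IsArtinianRing R := isArtinian_of_tower ℂ inferInstance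
  let e := IsArtinianRing.equivPi R
  have key : ∀ I : MaximalSpectrum R, ∃ t : R ⧸ I.asIdeal, t * t = e x I := by
    intro I
    have hI : I.asIdeal.IsMaximal := I.isMaximal
    letI := Ideal.Quotient.field I.asIdeal
    exact field_sq _
  choose t ht using key
  refine ⟨e.symm t, ?_⟩
  apply e.injective
  rw [map_mul, AlgEquiv.apply_symm_apply]
  funext I
  exact ht I

lemma unit_sq {R : Type*} [CommRing R] [Algebra ℂ R] [FiniteDimensional ℂ R] {u : R}
    (hu : IsUnit u) : ∃ t : R, t * t = u := by
  set N := nilradical R with hN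
  have : IsReduced (R ⧸ N) :=
    (Ideal.isRadical_iff_quotient_reduced N).mp (Ideal.radical_isRadical (0 : Ideal R))
  obtain ⟨t, ht⟩ : ∃ t : R, t * t - u ∈ N := by
    obtain ⟨t0, ht0⟩ := red_sq (Ideal.Quotient.mk N u)
    obtain ⟨t, rfl⟩ := Ideal.Quotient.mk_surjective t0
    exact ⟨t, by rwa [← map_mul, ← sub_eq_zero, ← map_sub, Ideal.Quotient.eq_zero_iff_mem] at ht0⟩
  have hnil : IsNilpotent (t * t - u) := mem_nilradical.mp ht
  have htu : IsUnit (t * t) := by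
    have : t * t = u + (t * t - u) := by ring
    rw [this]
    exact hnil.isUnit_add_left_of_commute hu (Commute.all _ _)
  have htunit : IsUnit t := isUnit_of_mul_isUnit_left htu
  obtain ⟨tu, htu'⟩ := htunit
  set m : R := (u - t * t) * (↑tu⁻¹ * ↑tu⁻¹) with hm
  have hmnil : IsNilpotent m := by
    have : IsNilpotent (u - t * t) := by
      have := hnil.neg
      rwa [neg_sub] at this
    exact (Commute.all (u - t*t) _).isNilpotent_mul_right this
  have hu_eq : u = (t * t) * (1 + m) := by
    have hti : t * ↑tu⁻¹ = 1 := by rw [← htu', Units.mul_inv]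
    calc u = t * t + (u - t * t) * ((t * ↑tu⁻¹) * (t * ↑tu⁻¹)) := by rw [hti]; ring
    _ = (t * t) * (1 + m) := by rw [hm]; ring
  obtain ⟨s, hs⟩ := sqrt_one_add_nilpotent hmnil
  exact ⟨t * s, by rw [hu_eq, ← hs]; ring⟩

set_option synthInstance.maxHeartbeats 1000000 in
set_option maxHeartbeats 2000000 in
lemma exists_sqrt_endo {V : Type*} [AddCommGroup V] [Module ℂ V] [FiniteDimensional ℂ V]
    (S : V →ₗ[ℂ] V) (hS : Function.Injective S) :
    ∃ p : ℂ[X], (aeval S p) * (aeval S p) = S := by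
  letI : CommRing (Algebra.adjoin ℂ ({S} : Set (V →ₗ[ℂ] V))) :=
    Algebra.adjoinCommRingOfComm ℂ (by
      rintro a ha b hb
      rcases Set.mem_singleton_iff.mp ha with rfl
      rcases Set.mem_singleton_iff.mp hb with rfl
      rfl)
  set u : Algebra.adjoin ℂ ({S} : Set (V →ₗ[ℂ] V)) :=
    ⟨S, Algebra.self_mem_adjoin_singleton ℂ S⟩ with hu
  have hinj : Function.Injective (LinearMap.mulLeft ℂ u) := by
    rw [← LinearMap.ker_eq_bot, LinearMap.ker_eq_bot']
    intro a ha
    have ha' : u * a = 0 := ha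
    have hval : S * (a : V →ₗ[ℂ] V) = 0 := by
      have := congrArg Subtype.val ha'
      simpa using this
    ext x
    have : S ((a : V →ₗ[ℂ] V) x) = 0 := by
      have := congrArg (fun f : V →ₗ[ℂ] V => f x) hval
      simpa [Module.End.mul_apply] using this
    have h0 : S ((a : V →ₗ[ℂ] V) x) = S 0 := by simpa using this
    simpa using hS h0
  have hsurj : Function.Surjective (LinearMap.mulLeft ℂ u) :=
    (LinearMap.injective_iff_surjective).mp hinj
  obtain ⟨v, hv⟩ := hsurj 1
  have huu : IsUnit u := IsUnit.of_mul_eq_one v hv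
  obtain ⟨t, ht⟩ := unit_sq huu
  have htmem := t.2
  have htmem' : (t : V →ₗ[ℂ] V) ∈ (Polynomial.aeval S).range :=
    (SetLike.ext_iff.mp (Algebra.adjoin_singleton_eq_range_aeval ℂ S) _).mp htmem
  obtain ⟨p, hp⟩ := htmem'
  refine ⟨p, ?_⟩
  have hcoe := congrArg Subtype.val ht
  rw [MulMemClass.coe_mul] at hcoe
  have hp' : aeval S p = (t : V →ₗ[ℂ] V) := hp
  rw [hp']
  exact hcoe

lemma aeval_selfadjoint {V : Type*} [AddCommGroup V] [Module ℂ V]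
    (B' : LinearMap.BilinForm ℂ V) (S : V →ₗ[ℂ] V)
    (hS : ∀ x y, B' (S x) y = B' x (S y)) (p : ℂ[X]) :
    ∀ x y, B' ((aeval S p) x) y = B' x ((aeval S p) y) := by
  have hpow : ∀ (n : ℕ) (x y : V), B' ((S ^ n) x) y = B' x ((S ^ n) y) := by
    intro n
    induction n with
    | zero => intro x y; simp
    | succ n ih =>
      intro x y
      have h1 : (S ^ (n + 1)) x = (S ^ n) (S x) := by rw [pow_succ]; rfl
      have h2 : (S ^ (n + 1)) y = S ((S ^ n) y) := by rw [pow_succ']; rfl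
      rw [h1, ih, hS, ← h2]
  induction p using Polynomial.induction_on' with
  | add p q hp hq =>
    intro x y
    simp only [map_add, LinearMap.add_apply, map_add, LinearMap.add_apply, hp, hq]
  | monomial n a =>
    intro x y
    have key : ∀ z : V, (aeval S (monomial n a)) z = a • ((S ^ n) z) := by
      intro z
      simp [aeval_monomial, Module.End.mul_apply, Module.algebraMap_end_apply]
    rw [key, key, map_smul, LinearMap.smul_apply, map_smul, hpow]

lemma aeval_commute_of {V : Type*} [AddCommGroup V] [Module ℂ V]
    (S A : V →ₗ[ℂ] V) (h : S * A = A * S) (p : ℂ[X]) :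
    (aeval S p) * A = A * (aeval S p) := by
  have hmem : aeval S p ∈ Algebra.adjoin ℂ ({S} : Set (V →ₗ[ℂ] V)) := by
    rw [Algebra.adjoin_singleton_eq_range_aeval]
    exact ⟨p, rfl⟩
  have hle : Algebra.adjoin ℂ ({S} : Set (V →ₗ[ℂ] V)) ≤
      Subalgebra.centralizer ℂ ({A} : Set (V →ₗ[ℂ] V)) := by
    apply Algebra.adjoin_le
    intro s hs
    rcases Set.mem_singleton_iff.mp hs with rfl
    rw [SetLike.mem_coe, Subalgebra.mem_centralizer_iff]
    intro g hg
    rcases Set.mem_singleton_iff.mp hg with rfl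
    exact h.symm
  have := Subalgebra.mem_centralizer_iff ℂ |>.mp (hle hmem) A (Set.mem_singleton A)
  exact this.symm

/-- For a nondegenerate symmetric or alternating form `B` on a
finite-dimensional complex space and nilpotent skew-symmetric `C, C'`,
conjugacy by an isometry is equivalent to similarity. -/
theorem stmt3 {V : Type*} [AddCommGroup V] [Module ℂ V] [FiniteDimensional ℂ V]
    (B : LinearMap.BilinForm ℂ V) (hB : B.Nondegenerate)
    (hBsa : (∀ x y : V, B x y = B y x) ∨ (∀ x y : V, B x y = - B y x))
    (C C' : V →ₗ[ℂ] V)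
    (hCnil : IsNilpotent C) (hC'nil : IsNilpotent C')
    (hC : ∀ x y : V, B (C x) y = - B x (C y))
    (hC' : ∀ x y : V, B (C' x) y = - B x (C' y)) :
    (∃ P : V ≃ₗ[ℂ] V, (∀ x y : V, B (P x) (P y) = B x y) ∧
        ∀ x : V, C' x = P (C (P.symm x))) ↔
    (∃ P : V ≃ₗ[ℂ] V, ∀ x : V, C' x = P (C (P.symm x))) := by
  constructor
  · rintro ⟨P, h1, h2⟩
    exact ⟨P, h2⟩
  · rintro ⟨g, hg⟩
    -- The transported form B'(x, y) = B(g⁻¹ x, g⁻¹ y)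
    set B' : LinearMap.BilinForm ℂ V :=
      B.compl₁₂ (g.symm : V →ₗ[ℂ] V) (g.symm : V →ₗ[ℂ] V) with hB'def
    have hB'apply : ∀ x y : V, B' x y = B (g.symm x) (g.symm y) := fun x y => rfl
    have hB'nd : B'.Nondegenerate := by
      refine ⟨?_, fun x hx => ?_⟩
      swap
      · have h1 : ∀ z : V, B z (g.symm x) = 0 := by
          intro z
          have := hx (g z)
          rwa [hB'apply, g.symm_apply_apply] at this
        exact (LinearEquiv.map_eq_zero_iff g.symm).mp (hB.2 _ h1)
      intro x hx
      have h1 : ∀ z : V, B (g.symm x) z = 0 := by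
        intro z
        have := hx (g z)
        rwa [hB'apply, g.symm_apply_apply] at this
      have h2 := hB.1 _ h1
      exact (LinearEquiv.map_eq_zero_iff g.symm).mp h2
    -- cancellation lemmas
    have hcancel : ∀ a b : V, (∀ y, B' a y = B' b y) → a = b := by
      intro a b h
      have : ∀ y, B' (a - b) y = 0 := by
        intro y
        rw [map_sub, LinearMap.sub_apply, h y, sub_self]
      have := hB'nd.1 _ this
      exact sub_eq_zero.mp this
    -- g⁻¹ ∘ C' = C ∘ g⁻¹
    have hgC : ∀ x : V, g.symm (C' x) = C (g.symm x) := by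
      intro x
      rw [hg x, g.symm_apply_apply]
    -- C' is skew-symmetric with respect to B'
    have hC'B' : ∀ x y : V, B' (C' x) y = - B' x (C' y) := by
      intro x y
      rw [hB'apply, hB'apply, hgC, hC, hgC]
    -- the operator S with B'(S x, y) = B(x, y)
    set S : V →ₗ[ℂ] V := ((B'.toDual hB'nd).symm : Module.Dual ℂ V →ₗ[ℂ] V) ∘ₗ B with hSdef'
    have hSdef : ∀ x y : V, B' (S x) y = B x y := by
      intro x y
      have : S x = (B'.toDual hB'nd).symm (B x) := rfl
      rw [this]
      exact LinearMap.BilinForm.apply_toDual_symm_apply (B x) y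
    -- S is B'-self-adjoint
    have hSsa : ∀ x y : V, B' (S x) y = B' x (S y) := by
      intro x y
      rw [hSdef]
      rcases hBsa with hsym | hskew
      · rw [hB'apply, hsym (g.symm x) (g.symm (S y)), ← hB'apply, hSdef, hsym]
      · rw [hB'apply, hskew (g.symm x) (g.symm (S y)), ← hB'apply, hSdef, hskew x y]
    -- S commutes with C'
    have hSC' : S * C' = C' * S := by
      ext x
      rw [Module.End.mul_apply, Module.End.mul_apply]
      apply hcancel
      intro y
      rw [hSdef, hC', hC'B', hSdef]
    -- cancellation for B
    have hcancelB : ∀ a b : V, (∀ y, B a y = B b y) → a = b := by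
      intro a b h
      have : ∀ y, B (a - b) y = 0 := by
        intro y
        rw [map_sub, LinearMap.sub_apply, h y, sub_self]
      exact sub_eq_zero.mp (hB.1 _ this)
    -- S is injective
    have hSinj : Function.Injective S := by
      intro a b hab
      apply hcancelB a b
      intro y
      rw [← hSdef a y, ← hSdef b y, hab]
    -- the square root k of S
    obtain ⟨p, hkk⟩ := exists_sqrt_endo S hSinj
    set k : V →ₗ[ℂ] V := aeval S p with hkdef
    have hksa : ∀ x y : V, B' (k x) y = B' x (k y) := aeval_selfadjoint B' S hSsa p
    have hkC' : k * C' = C' * k := aeval_commute_of S C' hSC' p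
    have hkapp : ∀ x : V, k (k x) = S x := by
      intro x
      have := congrArg (fun f : V →ₗ[ℂ] V => f x) hkk
      simpa [Module.End.mul_apply] using this
    have hkinj : Function.Injective k := by
      intro a b hab
      exact hSinj (by rw [← hkapp a, ← hkapp b, hab])
    have hksurj : Function.Surjective k := (LinearMap.injective_iff_surjective).mp hkinj
    set kE : V ≃ₗ[ℂ] V := LinearEquiv.ofBijective k ⟨hkinj, hksurj⟩ with hkE
    have hkEapp : ∀ x : V, kE x = k x := fun x => rfl
    set P : V ≃ₗ[ℂ] V := g.trans kE.symm with hP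
    have hPapp : ∀ x : V, k (P x) = g x := by
      intro x
      have h1 : P x = kE.symm (g x) := rfl
      rw [h1, ← hkEapp, kE.apply_symm_apply]
    have hPsymm : ∀ z : V, P.symm z = g.symm (k z) := by
      intro z
      rw [hP, LinearEquiv.symm_trans_apply, LinearEquiv.symm_symm, hkEapp]
    refine ⟨P, ?_, ?_⟩
    · -- isometry
      intro x y
      have e1 : B' (k (P x)) (k (P y)) = B (P x) (P y) := by
        rw [hksa, hkapp, ← hSsa, hSdef]
      have e2 : B' (k (P x)) (k (P y)) = B x y := by
        rw [hPapp, hPapp, hB'apply, g.symm_apply_apply, g.symm_apply_apply]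
      rw [← e1, e2]
    · -- conjugation
      intro x
      have hC'k : C' (k x) = k (C' x) := by
        have := congrArg (fun f : V →ₗ[ℂ] V => f x) hkC'
        simpa [Module.End.mul_apply] using this.symm
      rw [hPsymm x]
      have h1 : P (C (g.symm (k x))) = kE.symm (g (C (g.symm (k x)))) := rfl
      rw [h1, ← hg (k x), hC'k, ← hkEapp, kE.symm_apply_apply]
end

section
/- Let (V, B) be a quadratic vector space over ℂ and let C be a nilpotent endomorphism of V that is skew-symmetric with respect to B. Then for every even integer k ≥ 2, the number dim ker(C^{k-1}) + dim ker(C^{k+1}) is even; equivalently, every even part of the Jordan partition of C occurs with even multiplicity, so the Jordan partition of C belongs to the set P₁(dim V) of partitions in which even parts occur with even multiplicity. -/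
open Module Submodule LinearMap

/-- A nondegenerate alternating bilinear form forces even dimension. -/
lemma even_finrank_of_alt_nondeg : ∀ (n : ℕ) {V : Type*} [AddCommGroup V] [Module ℂ V]
    [FiniteDimensional ℂ V] (F : LinearMap.BilinForm ℂ V), F.IsAlt → F.Nondegenerate →
    Module.finrank ℂ V = n → Even n := by
  intro n
  induction n using Nat.strong_induction_on with
  | _ n IH =>
    intro V _ _ _ F hAlt hF hn
    rcases Nat.eq_zero_or_pos n with h0 | hpos
    · simp [h0]
    · -- pick x ≠ 0 and y with F x y ≠ 0
      have : 0 < Module.finrank ℂ V := hn ▸ hpos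
      obtain ⟨x, hx⟩ : ∃ x : V, x ≠ 0 := by
        have : Nontrivial V := Module.nontrivial_of_finrank_pos this
        exact exists_ne 0
      obtain ⟨y, hy⟩ : ∃ y : V, F x y ≠ 0 := by
        by_contra h
        push_neg at h
        exact hx (hF.1 x h)
      set W : Submodule ℂ V := Submodule.span ℂ {x, y} with hW
      have hRefl : F.IsRefl := hAlt.isRefl
      have hFyx : F y x = - F x y := (LinearMap.IsAlt.neg hAlt x y).symm
      -- linear independence of x, y
      have hli : LinearIndependent ℂ ![x, y] := by
        rw [LinearIndependent.pair_iff]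
        intro s t hst
        have h1 : F x (s • x + t • y) = 0 := by rw [hst]; simp
        rw [map_add, map_smul, map_smul, hAlt x, smul_zero, zero_add, smul_eq_mul] at h1
        have ht : t = 0 := by
          rcases mul_eq_zero.mp h1 with h | h
          · exact h
          · exact absurd h hy
        subst ht
        rw [zero_smul, add_zero] at hst
        rcases smul_eq_zero.mp hst with h | h
        · exact ⟨h, rfl⟩
        · exact absurd h hx
      have hWrank : Module.finrank ℂ W = 2 := by
        have hr : Set.range ![x, y] = {x, y} := by
          ext v
          simp only [Set.mem_range, Fin.exists_fin_two, Matrix.cons_val_zero,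
            Matrix.cons_val_one, Matrix.head_cons, Set.mem_insert_iff, Set.mem_singleton_iff]
          tauto
        rw [hW, ← hr, finrank_span_eq_card hli]
        simp
      -- restriction of F to W is nondegenerate
      have hxW : x ∈ W := Submodule.subset_span (by simp)
      have hyW : y ∈ W := Submodule.subset_span (by simp)
      have hrest : (F.restrict W).Nondegenerate := by
        refine (LinearMap.IsRefl.nondegenerate_iff_separatingLeft (B := F.restrict W) (fun a b => hRefl a b)).mpr ?_
        rintro ⟨w, hw⟩ hw0
        obtain ⟨a, b, hab⟩ := Submodule.mem_span_pair.mp hw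
        have h1 : F w x = 0 := hw0 ⟨x, hxW⟩
        have h2 : F w y = 0 := hw0 ⟨y, hyW⟩
        rw [← hab] at h1 h2
        simp only [map_add, map_smul, LinearMap.add_apply, LinearMap.smul_apply,
          smul_eq_mul] at h1 h2
        rw [hAlt x, mul_zero, zero_add, hFyx] at h1
        rw [hAlt y, mul_zero, add_zero] at h2
        have hb : b = 0 := by
          rcases mul_eq_zero.mp h1 with h | h
          · exact h
          · rw [neg_eq_zero] at h; exact absurd h hy
        have ha : a = 0 := by
          rcases mul_eq_zero.mp h2 with h | h
          · exact h
          · exact absurd h hy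
        ext
        simp [← hab, ha, hb]
      -- split V = W ⊕ W^⊥
      have hcompl : IsCompl W (F.orthogonal W) :=
        LinearMap.BilinForm.isCompl_orthogonal_of_restrict_nondegenerate hRefl hrest
      have horth : (F.restrict (F.orthogonal W)).Nondegenerate := by
        apply F.nondegenerate_restrict_of_disjoint_orthogonal hRefl
        rw [LinearMap.BilinForm.orthogonal_orthogonal hF hRefl]
        exact hcompl.disjoint.symm
      have hAltO : (F.restrict (F.orthogonal W)).IsAlt := fun z => hAlt z
      have hdim : Module.finrank ℂ W + Module.finrank ℂ (F.orthogonal W) = n := by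
        rw [← hn, ← Submodule.finrank_add_eq_of_isCompl hcompl]
      have hlt : Module.finrank ℂ (F.orthogonal W) < n := by omega
      have hevensub : Even (Module.finrank ℂ (F.orthogonal W)) :=
        IH _ hlt (F.restrict (F.orthogonal W)) hAltO horth rfl
      obtain ⟨m, hm⟩ := hevensub
      exact ⟨m + 1, by omega⟩

/-- A skew-symmetric endomorphism (w.r.t. a nondegenerate symmetric form) has even rank;
equivalently `finrank V + finrank (ker D)` is even. -/
lemma even_finrank_add_ker {V : Type*} [AddCommGroup V] [Module ℂ V] [FiniteDimensional ℂ V]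
    (B : LinearMap.BilinForm ℂ V) (hB : B.Nondegenerate)
    (hBsymm : ∀ x y : V, B x y = B y x)
    (D : V →ₗ[ℂ] V) (hD : ∀ x y : V, B (D x) y = - B x (D y)) :
    Even (Module.finrank ℂ V + Module.finrank ℂ (LinearMap.ker D)) := by
  -- the alternating form F x y = B (D x) y
  set F : LinearMap.BilinForm ℂ V := B ∘ₗ D with hF
  have hFapp : ∀ x y : V, F x y = B (D x) y := fun x y => rfl
  have hAlt : F.IsAlt := by
    intro x
    have h := hD x x
    rw [hBsymm x (D x)] at h
    have h2 : (2 : ℂ) * B (D x) x = 0 := by linear_combination h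
    rw [hFapp]
    rcases mul_eq_zero.mp h2 with h3 | h3
    · exact absurd h3 two_ne_zero
    · exact h3
  have hAlt' : F.IsAlt := hAlt
  have hRefl : F.IsRefl := hAlt.isRefl
  -- complement of the kernel
  obtain ⟨U, hU⟩ := Submodule.exists_isCompl (LinearMap.ker D)
  have hUnondeg : (F.restrict U).Nondegenerate := by
    refine (LinearMap.IsRefl.nondegenerate_iff_separatingLeft (B := F.restrict U) (fun a b => hRefl a b)).mpr ?_
    rintro ⟨u, hu⟩ hu0
    have hFu : ∀ v : V, F u v = 0 := by
      intro v
      obtain ⟨k, hk, u', hu', hv⟩ : ∃ k ∈ LinearMap.ker D, ∃ u' ∈ U, k + u' = v := by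
        have := hU.sup_eq_top
        have hv : v ∈ (LinearMap.ker D ⊔ U : Submodule ℂ V) := by rw [this]; trivial
        obtain ⟨k, hk, u', hu', h⟩ := Submodule.mem_sup.mp hv
        exact ⟨k, hk, u', hu', h⟩
      have h1 : F u k = 0 := by
        apply hRefl
        rw [hFapp, LinearMap.mem_ker.mp hk]
        simp
      have h2 : F u u' = 0 := hu0 ⟨u', hu'⟩
      rw [← hv, map_add, h1, h2, add_zero]
    have hDu : D u = 0 := by
      apply hB.1 (D u)
      intro v
      exact hFu v
    have : u ∈ LinearMap.ker D ⊓ U := ⟨LinearMap.mem_ker.mpr hDu, hu⟩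
    rw [hU.inf_eq_bot] at this
    ext
    simpa using this
  have hUAlt : (F.restrict U).IsAlt := fun z => hAlt z
  have hUeven : Even (Module.finrank ℂ U) :=
    even_finrank_of_alt_nondeg _ (F.restrict U) hUAlt hUnondeg rfl
  have hdim : Module.finrank ℂ (LinearMap.ker D) + Module.finrank ℂ U = Module.finrank ℂ V :=
    Submodule.finrank_add_eq_of_isCompl hU
  obtain ⟨m, hm⟩ := hUeven
  exact ⟨Module.finrank ℂ (LinearMap.ker D) + m, by omega⟩

/-- For a nilpotent skew-symmetric endomorphism of a quadratic vector
space over `ℂ`, for every even `k ≥ 2` the number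
`dim ker (C^(k-1)) + dim ker (C^(k+1))` is even, i.e. even parts of the Jordan
partition of `C` occur with even multiplicity. -/
theorem stmt4 {V : Type*} [AddCommGroup V] [Module ℂ V] [FiniteDimensional ℂ V]
    (B : LinearMap.BilinForm ℂ V) (hB : B.Nondegenerate)
    (hBsymm : ∀ x y : V, B x y = B y x)
    (C : V →ₗ[ℂ] V) (hCnil : IsNilpotent C)
    (hC : ∀ x y : V, B (C x) y = - B x (C y)) :
    ∀ k : ℕ, 2 ≤ k → Even k →
      Even (Module.finrank ℂ (LinearMap.ker (C ^ (k - 1))) +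
        Module.finrank ℂ (LinearMap.ker (C ^ (k + 1)))) := by
  -- powers of C satisfy a signed skew-symmetry
  have hpow : ∀ m : ℕ, ∀ x y : V, B ((C ^ m) x) y = (-1 : ℂ) ^ m * B x ((C ^ m) y) := by
    intro m
    induction m with
    | zero => intro x y; simp
    | succ m ih =>
      intro x y
      have h1 : (C ^ (m + 1)) x = (C ^ m) (C x) := by
        rw [pow_succ]; rfl
      have h2 : (C ^ (m + 1)) y = C ((C ^ m) y) := by
        rw [pow_succ']; rfl
      rw [h1, ih (C x) y, hC x ((C ^ m) y), h2]
      ring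
  have hskew : ∀ m : ℕ, Odd m → ∀ x y : V, B ((C ^ m) x) y = - B x ((C ^ m) y) := by
    intro m hm x y
    rw [hpow m x y, hm.neg_one_pow]
    ring
  intro k hk2 hkeven
  have hodd1 : Odd (k - 1) := by
    obtain ⟨j, hj⟩ := hkeven
    exact ⟨j - 1, by omega⟩
  have hodd2 : Odd (k + 1) := Even.add_one hkeven
  have h1 := even_finrank_add_ker B hB hBsymm (C ^ (k - 1)) (hskew _ hodd1)
  have h2 := even_finrank_add_ker B hB hBsymm (C ^ (k + 1)) (hskew _ hodd2)
  obtain ⟨a, ha⟩ := h1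
  obtain ⟨b, hb⟩ := h2
  exact ⟨a + b - Module.finrank ℂ V, by
    have hle1 : Module.finrank ℂ (LinearMap.ker (C ^ (k - 1))) ≤ Module.finrank ℂ V :=
      Submodule.finrank_le _
    omega⟩
end

section
/- Let n ≥ 1 and let d₁ ≥ d₂ ≥ … ≥ d_r ≥ 1 be a partition of 2n in which every odd part occurs with even multiplicity. Then on every symplectic vector space (V, B) of dimension 2n over ℂ there exists a nilpotent endomorphism C of V, skew-symmetric with respect to B, whose Jordan type is the given partition, i.e. dim ker(C^k) = Σᵢ min(dᵢ, k) for every k ≥ 0. (This is the surjectivity part of the Gerstenhaber correspondence of Proposition 1.2.10 for sp(2n), realized by the explicit maps C^J_{2p} and C^J_{p+p}.) -/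
open Module Finset

namespace Stmt6Aux



/-- pairing involution on naturals -/
def pairNat (k : ℕ) : ℕ := if k % 2 = 0 then k + 1 else k - 1

lemma pairNat_pairNat (k : ℕ) : pairNat (pairNat k) = k := by
  unfold pairNat; split_ifs <;> omega

lemma pairNat_ne (k : ℕ) : pairNat k ≠ k := by
  unfold pairNat; split_ifs <;> omega

lemma pairNat_lt {k c : ℕ} (hk : k < c) (hc : Even c) : pairNat k < c := by
  have hc2 : c % 2 = 0 := Nat.even_iff.mp hc
  unfold pairNat; split_ifs <;> omega

variable {r : ℕ}

/-- A downward closed subset of `Fin r` is an initial segment. -/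
lemma mem_iff_lt_card_of_downclosed (T : Finset (Fin r))
    (hT : ∀ ⦃a b : Fin r⦄, a ≤ b → b ∈ T → a ∈ T) (j : Fin r) :
    j ∈ T ↔ (j : ℕ) < T.card := by
  constructor
  · intro hj
    have hsub : Finset.Iic j ⊆ T := fun a ha => hT (Finset.mem_Iic.mp ha) hj
    have := Finset.card_le_card hsub
    rw [Fin.card_Iic] at this; omega
  · intro hj
    by_contra hjT
    have hsub : T ⊆ Finset.Iio j := by
      intro a ha
      rw [Finset.mem_Iio]
      by_contra hle
      exact hjT (hT (le_of_not_gt hle) ha)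
    have := Finset.card_le_card hsub
    rw [Fin.card_Iio] at this; omega

/-- Existence of the pairing involution on indices. -/
lemma exists_tau (d : Fin r → ℕ) (hanti : Antitone d)
    (hodd : ∀ m : ℕ, Odd m →
      Even (Finset.univ.filter (fun i : Fin r => d i = m)).card) :
    ∃ τ : Fin r → Fin r, Function.Involutive τ ∧ (∀ i, d (τ i) = d i) ∧
      (∀ i, Odd (d i) → τ i ≠ i) ∧ (∀ i, ¬ Odd (d i) → τ i = i) := by
  classical
  set a : Fin r → ℕ := fun i => (Finset.univ.filter (fun j => d i < d j)).card with ha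
  set b : Fin r → ℕ := fun i => (Finset.univ.filter (fun j => d i ≤ d j)).card with hb
  have hlt : ∀ i j : Fin r, d i < d j ↔ (j : ℕ) < a i := by
    intro i j
    have := mem_iff_lt_card_of_downclosed (Finset.univ.filter (fun j => d i < d j))
      (fun p q hpq hq => by
        simp only [Finset.mem_filter, Finset.mem_univ, true_and] at *
        exact lt_of_lt_of_le hq (hanti hpq)) j
    simpa [ha] using this
  have hle : ∀ i j : Fin r, d i ≤ d j ↔ (j : ℕ) < b i := by
    intro i j
    have := mem_iff_lt_card_of_downclosed (Finset.univ.filter (fun j => d i ≤ d j))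
      (fun p q hpq hq => by
        simp only [Finset.mem_filter, Finset.mem_univ, true_and] at *
        exact le_trans hq (hanti hpq)) j
    simpa [hb] using this
  have hab : ∀ i j : Fin r, d j = d i ↔ (a i ≤ (j:ℕ) ∧ (j:ℕ) < b i) := by
    intro i j
    constructor
    · intro h
      refine ⟨?_, (hle i j).mp (le_of_eq h.symm)⟩
      by_contra hc
      push_neg at hc
      exact absurd ((hlt i j).mpr hc) (by omega)
    · rintro ⟨h1, h2⟩
      have := (hle i j).mpr h2
      have h3 : ¬ d i < d j := fun hc => by
        have := (hlt i j).mp hc; omega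
      omega
  have hfib : ∀ i : Fin r,
      (Finset.univ.filter (fun j => d j = d i)).card = b i - a i := by
    intro i
    have hsplit : (Finset.univ.filter (fun j => d i ≤ d j))
        = (Finset.univ.filter (fun j => d i < d j)) ∪
          (Finset.univ.filter (fun j => d j = d i)) := by
      ext j
      simp only [Finset.mem_filter, Finset.mem_univ, true_and, Finset.mem_union]
      omega
    have hdisj : Disjoint (Finset.univ.filter (fun j => d i < d j))
        (Finset.univ.filter (fun j => d j = d i)) := by
      rw [Finset.disjoint_filter]
      intro j _ hj
      omega
    have hcu := Finset.card_union_of_disjoint hdisj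
    rw [← hsplit] at hcu
    have hle2 : a i ≤ b i := by
      simp only [ha, hb]
      apply Finset.card_le_card
      intro j; simp only [Finset.mem_filter, Finset.mem_univ, true_and]; omega
    simp only [ha, hb] at hcu hle2 ⊢
    omega
  have heven : ∀ i : Fin r, Odd (d i) → Even (b i - a i) := by
    intro i hi
    have h3 := hodd (d i) hi
    rwa [hfib i] at h3
  have hbound : ∀ i : Fin r, Odd (d i) → a i + pairNat ((i:ℕ) - a i) < r := by
    intro i h
    have hi1 : a i ≤ (i:ℕ) ∧ (i:ℕ) < b i := (hab i i).mp rfl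
    have hpl := pairNat_lt (c := b i - a i) (k := (i:ℕ) - a i) (by omega) (heven i h)
    have hbr : b i ≤ r := by
      simp only [hb]
      have := Finset.card_le_card (Finset.filter_subset (fun j => d i ≤ d j) Finset.univ)
      simpa using this
    omega
  set τ : Fin r → Fin r := fun i => if h : Odd (d i) then
      ⟨a i + pairNat ((i:ℕ) - a i), hbound i h⟩ else i with hτ
  have hτval : ∀ i : Fin r, Odd (d i) → (τ i : ℕ) = a i + pairNat ((i:ℕ) - a i) := by
    intro i h
    simp only [hτ, dif_pos h]
  have hτe : ∀ i : Fin r, ¬ Odd (d i) → τ i = i := by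
    intro i h
    simp only [hτ, dif_neg h]
  have hdτ : ∀ i, d (τ i) = d i := by
    intro i
    by_cases h : Odd (d i)
    · have hi1 : a i ≤ (i:ℕ) ∧ (i:ℕ) < b i := (hab i i).mp rfl
      have hpl := pairNat_lt (c := b i - a i) (k := (i:ℕ) - a i) (by omega) (heven i h)
      refine (hab i (τ i)).mpr ?_
      rw [hτval i h]
      omega
    · rw [hτe i h]
  refine ⟨τ, ?_, hdτ, ?_, hτe⟩
  · intro i
    by_cases h : Odd (d i)
    · have hi1 : a i ≤ (i:ℕ) ∧ (i:ℕ) < b i := (hab i i).mp rfl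
      have hjodd : Odd (d (τ i)) := (hdτ i) ▸ h
      have hja : a (τ i) = a i := by
        simp only [ha]
        congr 1
        apply Finset.filter_congr
        intro x _
        rw [hdτ i]
      apply Fin.ext
      rw [hτval (τ i) hjodd, hja, hτval i h, Nat.add_sub_cancel_left, pairNat_pairNat]
      omega
    · rw [hτe i h, hτe i h]
  · intro i h hc
    have hi1 : a i ≤ (i:ℕ) ∧ (i:ℕ) < b i := (hab i i).mp rfl
    have h2 : (τ i : ℕ) = (i : ℕ) := congrArg Fin.val hc
    rw [hτval i h] at h2
    have := pairNat_ne ((i:ℕ) - a i)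
    omega




variable {r : ℕ} (d : Fin r → ℕ)

abbrev Idx (d : Fin r → ℕ) := Σ i : Fin r, Fin (d i)
abbrev Mdl (d : Fin r → ℕ) := Idx d → ℂ

/-- padded coordinate access -/
def pad (x : Mdl d) (i : Fin r) (t : ℕ) : ℂ :=
  if h : t < d i then x ⟨i, ⟨t, h⟩⟩ else 0

lemma pad_eq (x : Mdl d) (i : Fin r) (t : ℕ) (h : t < d i) :
    pad d x i t = x ⟨i, ⟨t, h⟩⟩ := dif_pos h

lemma pad_eq_zero (x : Mdl d) (i : Fin r) (t : ℕ) (h : ¬ t < d i) :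
    pad d x i t = 0 := dif_neg h

lemma pad_add (x y : Mdl d) (i : Fin r) (t : ℕ) :
    pad d (x + y) i t = pad d x i t + pad d y i t := by
  unfold pad; split <;> simp

lemma pad_smul (c : ℂ) (x : Mdl d) (i : Fin r) (t : ℕ) :
    pad d (c • x) i t = c * pad d x i t := by
  unfold pad; split <;> simp

/-- the shift (block Jordan) endomorphism -/
def shift : Mdl d →ₗ[ℂ] Mdl d where
  toFun x a := pad d x a.1 ((a.2 : ℕ) + 1)
  map_add' x y := funext fun a => pad_add d x y a.1 _
  map_smul' c x := funext fun a => pad_smul d c x a.1 _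

lemma shift_apply (x : Mdl d) (a : Idx d) :
    shift d x a = pad d x a.1 ((a.2 : ℕ) + 1) := rfl

lemma pad_shift (x : Mdl d) (i : Fin r) (t : ℕ) :
    pad d (shift d x) i t = pad d x i (t + 1) := by
  by_cases h : t < d i
  · rw [pad_eq d _ i t h]; rfl
  · rw [pad_eq_zero d _ i t h, pad_eq_zero d x i (t+1) (by omega)]

lemma shift_pow (k : ℕ) (x : Mdl d) (a : Idx d) :
    ((shift d) ^ k) x a = pad d x a.1 ((a.2 : ℕ) + k) := by
  induction k generalizing x with
  | zero =>
    simp only [pow_zero, Module.End.one_apply, Nat.add_zero]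
    rw [pad_eq d x a.1 _ a.2.isLt]
  | succ k ih =>
    rw [pow_succ, Module.End.mul_apply, ih (shift d x), pad_shift]
    congr 1

lemma shift_pow_eq_zero (K : ℕ) (hK : ∀ i, d i ≤ K) : (shift d) ^ K = 0 := by
  apply LinearMap.ext; intro x; funext a
  rw [LinearMap.zero_apply, Pi.zero_apply]
  rw [shift_pow]
  exact pad_eq_zero d x a.1 _ (by have := hK a.1; omega)

variable (τ : Fin r → Fin r) (σ : Fin r → ℂ)

/-- the symplectic form coupling chain `i` with chain `τ i` -/
noncomputable def form : LinearMap.BilinForm ℂ (Mdl d) :=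
  LinearMap.mk₂ ℂ
    (fun x y => ∑ a : Idx d,
      σ a.1 * (-1) ^ (a.2 : ℕ) * x a * pad d y (τ a.1) (d a.1 - 1 - (a.2 : ℕ)))
    (fun x x' y => by
      rw [← Finset.sum_add_distrib]
      apply Finset.sum_congr rfl; intro a _
      simp only [Pi.add_apply]; ring)
    (fun c x y => by
      rw [Finset.smul_sum]
      apply Finset.sum_congr rfl; intro a _
      simp only [Pi.smul_apply, smul_eq_mul]; ring)
    (fun x y y' => by
      rw [← Finset.sum_add_distrib]
      apply Finset.sum_congr rfl; intro a _
      rw [pad_add]; ring)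
    (fun c x y => by
      rw [Finset.smul_sum]
      apply Finset.sum_congr rfl; intro a _
      rw [pad_smul]; simp only [smul_eq_mul]; ring)

lemma form_apply (x y : Mdl d) :
    form d τ σ x y = ∑ a : Idx d,
      σ a.1 * (-1) ^ (a.2 : ℕ) * x a * pad d y (τ a.1) (d a.1 - 1 - (a.2 : ℕ)) := rfl

lemma form_apply' (x y : Mdl d) :
    form d τ σ x y = ∑ i : Fin r, ∑ t ∈ Finset.range (d i),
      σ i * (-1) ^ t * pad d x i t * pad d y (τ i) (d i - 1 - t) := by
  rw [form_apply, ← Finset.univ_sigma_univ, Finset.sum_sigma]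
  apply Finset.sum_congr rfl
  intro i _
  rw [← Fin.sum_univ_eq_sum_range
    (fun t => σ i * (-1) ^ t * pad d x i t * pad d y (τ i) (d i - 1 - t)) (d i)]
  apply Finset.sum_congr rfl
  intro t _
  rw [pad_eq d x i t t.isLt]

lemma sign_helper (dd t : ℕ) (ht : t < dd) (σi σj : ℂ) (hσ : σj = (-1) ^ dd * σi) :
    σi * (-1) ^ t = -(σj * (-1) ^ (dd - 1 - t)) := by
  subst hσ
  have key : (-1 : ℂ) ^ t * ((-1) ^ dd * (-1) ^ (dd - 1 - t)) = -1 := by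
    rw [← pow_add, ← pow_add]
    have h : t + (dd + (dd - 1 - t)) = 2 * dd - 1 := by omega
    rw [h]
    exact Odd.neg_one_pow ⟨dd - 1, by omega⟩
  have hsq : (-1 : ℂ) ^ t * (-1) ^ t = 1 := by
    rw [← pow_add]
    exact Even.neg_one_pow ⟨t, rfl⟩
  linear_combination (σi * (-1 : ℂ) ^ t) * key -
    (σi * ((-1 : ℂ) ^ dd * (-1 : ℂ) ^ (dd - 1 - t))) * hsq

lemma form_alt (hτ : Function.Involutive τ) (hd : ∀ i, d (τ i) = d i)
    (hσ : ∀ i, σ (τ i) = (-1) ^ (d i) * σ i) (x y : Mdl d) :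
    form d τ σ x y = - form d τ σ y x := by
  rw [form_apply', form_apply', ← Finset.sum_neg_distrib]
  apply Fintype.sum_bijective τ hτ.bijective
  intro i
  rw [← Finset.sum_neg_distrib]
  rw [hd i, hτ i]
  rw [← Finset.sum_range_reflect
    (fun t => -(σ (τ i) * (-1) ^ t * pad d y (τ i) t * pad d x i (d i - 1 - t))) (d i)]
  apply Finset.sum_congr rfl
  intro t ht
  rw [Finset.mem_range] at ht
  rw [show d i - 1 - (d i - 1 - t) = t from by omega]
  have hs := sign_helper (d i) t ht (σ i) (σ (τ i)) (hσ i)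
  linear_combination (pad d x i t * pad d y (τ i) (d i - 1 - t)) * hs

lemma form_shift_skew (hd : ∀ i, d (τ i) = d i) (hpos : ∀ i, 1 ≤ d i) (x y : Mdl d) :
    form d τ σ (shift d x) y = - form d τ σ x (shift d y) := by
  rw [form_apply', form_apply', ← Finset.sum_neg_distrib]
  apply Finset.sum_congr rfl
  intro i _
  rw [← Finset.sum_neg_distrib]
  have e1 : ∀ t ∈ Finset.range (d i),
      σ i * (-1 : ℂ) ^ t * pad d (shift d x) i t * pad d y (τ i) (d i - 1 - t)
      = σ i * (-1) ^ t * pad d x i (t + 1) * pad d y (τ i) (d i - 1 - t) := by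
    intro t _; rw [pad_shift]
  have e2 : ∀ t ∈ Finset.range (d i),
      -(σ i * (-1 : ℂ) ^ t * pad d x i t * pad d (shift d y) (τ i) (d i - 1 - t))
      = -(σ i * (-1) ^ t * pad d x i t * pad d y (τ i) (d i - t)) := by
    intro t ht; rw [Finset.mem_range] at ht
    rw [pad_shift, show d i - 1 - t + 1 = d i - t from by omega]
  rw [Finset.sum_congr rfl e1, Finset.sum_congr rfl e2]
  obtain ⟨m, hm⟩ : ∃ m, d i = m + 1 := ⟨d i - 1, by have := hpos i; omega⟩
  rw [hm, Finset.sum_range_succ, Finset.sum_range_succ']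
  rw [show pad d x i (m + 1) = 0 from pad_eq_zero d x i _ (by omega)]
  rw [show pad d y (τ i) (m + 1 - 0) = 0 from pad_eq_zero d y (τ i) _ (by rw [hd i, hm]; omega)]
  simp only [mul_zero, zero_mul, add_zero, neg_zero]
  apply Finset.sum_congr rfl
  intro t ht
  rw [Finset.mem_range] at ht
  rw [show m + 1 - 1 - t = m - t from by omega, show m + 1 - (t + 1) = m - t from by omega,
    pow_succ]
  ring

lemma pad_single (b : Idx d) (j : Fin r) (s : ℕ) :
    pad d (Pi.single b (1 : ℂ)) j s =
      if h : s < d j then (if (⟨j, ⟨s, h⟩⟩ : Idx d) = b then 1 else 0) else 0 := by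
  unfold pad; split <;> simp [Pi.single_apply]

lemma form_nondegenerate (hτ : Function.Involutive τ) (hd : ∀ i, d (τ i) = d i)
    (hpos : ∀ i, 1 ≤ d i) (hσ1 : ∀ i, σ i = 1 ∨ σ i = -1) :
    (form d τ σ).Nondegenerate := by
  apply LinearMap.BilinForm.Nondegenerate.ofSeparatingLeft
  intro x hx
  funext a
  rcases a with ⟨i, t⟩
  have hbnd : (d i - 1 - (t : ℕ)) < d (τ i) := by
    rw [hd]; have := t.isLt; have := hpos i; omega
  have h0 := hx (Pi.single ⟨τ i, ⟨d i - 1 - (t : ℕ), hbnd⟩⟩ 1)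
  rw [form_apply] at h0
  rw [Finset.sum_eq_single (⟨i, t⟩ : Idx d)] at h0
  · rw [pad_single] at h0
    rw [dif_pos hbnd] at h0
    rw [if_pos rfl] at h0
    rw [mul_one] at h0
    have hne : σ i * (-1 : ℂ) ^ (t : ℕ) ≠ 0 := by
      apply mul_ne_zero
      · rcases hσ1 i with h1 | h1 <;> rw [h1] <;> norm_num
      · exact pow_ne_zero _ (by norm_num)
    rw [Pi.zero_apply]
    exact (mul_eq_zero.mp h0).resolve_left hne
  · rintro ⟨j, s⟩ _ hba
    rw [pad_single]
    by_cases h : d j - 1 - (s : ℕ) < d (τ j)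
    · rw [dif_pos h]
      rw [if_neg]
      · rw [mul_zero]
      · intro hcontra
        apply hba
        obtain ⟨h1, h2⟩ := Sigma.mk.inj_iff.mp hcontra
        have hji : j = i := hτ.injective h1
        subst hji
        have hval : d j - 1 - (s : ℕ) = d j - 1 - (t : ℕ) := by
          have := (Fin.heq_ext_iff (by rw [h1])).mp h2
          exact this
        have hs := s.isLt
        have htt := t.isLt
        have : (s : ℕ) = (t : ℕ) := by omega
        congr
        exact Fin.ext this
    · rw [dif_neg h, mul_zero]
  · intro hmem
    exact absurd (Finset.mem_univ _) hmem

lemma mem_ker_shift_pow (k : ℕ) (x : Mdl d) :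
    x ∈ LinearMap.ker ((shift d) ^ k) ↔
      ∀ (i : Fin r) (s : Fin (d i)), k ≤ (s : ℕ) → x ⟨i, s⟩ = 0 := by
  rw [LinearMap.mem_ker]
  constructor
  · intro h i s hs
    have h2 := congrFun h ⟨i, ⟨(s : ℕ) - k, by have := s.isLt; omega⟩⟩
    rw [shift_pow] at h2
    simp only at h2
    rw [show (s : ℕ) - k + k = (s : ℕ) from by omega] at h2
    rw [pad_eq d x i _ s.isLt] at h2
    rw [Pi.zero_apply] at h2
    exact h2
  · intro h
    funext a
    rw [shift_pow, Pi.zero_apply]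
    by_cases hr : (a.2 : ℕ) + k < d a.1
    · rw [pad_eq d x a.1 _ hr]
      exact h a.1 ⟨(a.2 : ℕ) + k, hr⟩ (by simp)
    · exact pad_eq_zero d x a.1 _ hr

lemma finrank_ker_shift_pow (k : ℕ) :
    finrank ℂ (LinearMap.ker ((shift d) ^ k)) = ∑ i : Fin r, min (d i) k := by
  classical
  set T := {a : Idx d // (a.2 : ℕ) < k} with hT
  let E : LinearMap.ker ((shift d) ^ k) →ₗ[ℂ] (T → ℂ) :=
    { toFun := fun x t => (x : Mdl d) t.1
      map_add' := fun x y => rfl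
      map_smul' := fun c x => rfl }
  have hbij : Function.Bijective E := by
    constructor
    · intro x y hxy
      apply Subtype.ext
      funext a
      by_cases h : (a.2 : ℕ) < k
      · exact congrFun hxy ⟨a, h⟩
      · rw [(mem_ker_shift_pow d k _).mp x.2 a.1 a.2 (by omega),
          (mem_ker_shift_pow d k _).mp y.2 a.1 a.2 (by omega)]
    · intro g
      refine ⟨⟨fun a => if h : (a.2 : ℕ) < k then g ⟨a, h⟩ else 0, ?_⟩, ?_⟩
      · rw [mem_ker_shift_pow]
        intro i s hs
        rw [dif_neg (Nat.not_lt.mpr hs)]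
      · funext t
        show (if h : (t.1.2 : ℕ) < k then g ⟨t.1, h⟩ else 0) = g t
        rw [dif_pos t.2]
  rw [(LinearEquiv.ofBijective E hbij).finrank_eq,
    Module.finrank_fintype_fun_eq_card]
  have e : T ≃ Σ i : Fin r, Fin (min (d i) k) :=
    { toFun := fun t => ⟨t.1.1, ⟨(t.1.2 : ℕ), lt_min t.1.2.isLt t.2⟩⟩
      invFun := fun b => ⟨⟨b.1, ⟨(b.2 : ℕ), lt_of_lt_of_le b.2.isLt (min_le_left _ _)⟩⟩,
        lt_of_lt_of_le b.2.isLt (min_le_right _ _)⟩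
      left_inv := fun t => rfl
      right_inv := fun b => rfl }
  rw [Fintype.card_congr e, Fintype.card_sigma]
  simp




/-- standard symplectic Gram matrix entries -/
def stdG (n : ℕ) : (Fin n ⊕ Fin n) → (Fin n ⊕ Fin n) → ℂ
  | Sum.inl i, Sum.inr j => if i = j then 1 else 0
  | Sum.inr i, Sum.inl j => if i = j then -1 else 0
  | Sum.inl _, Sum.inl _ => 0
  | Sum.inr _, Sum.inr _ => 0

universe u

theorem darboux : ∀ (n : ℕ) (V : Type u) [AddCommGroup V] [Module ℂ V]
    [FiniteDimensional ℂ V] (B : LinearMap.BilinForm ℂ V), B.Nondegenerate →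
    (∀ x y : V, B x y = - B y x) → finrank ℂ V = 2 * n →
    ∃ b : Basis (Fin n ⊕ Fin n) ℂ V, ∀ p q, B (b p) (b q) = stdG n p q := by
  intro n
  induction n with
  | zero =>
    intro V _ _ _ B hB hskew hdim
    haveI : Subsingleton V := (Module.finrank_zero_iff (R := ℂ)).mp (by omega)
    refine ⟨Basis.empty V, fun p q => ?_⟩
    rcases p with i | i <;> exact i.elim0
  | succ n ih =>
    intro V _ _ _ B hB hskew hdim
    haveI : Nontrivial V := Module.nontrivial_of_finrank_pos (R := ℂ) (by omega)
    obtain ⟨x, hx0⟩ := exists_ne (0 : V)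
    have hBvv : ∀ v : V, B v v = 0 := fun v => by
      have h := hskew v v; linear_combination (1/2 : ℂ) * h
    obtain ⟨y, hxy⟩ : ∃ y, B x y = 1 := by
      have h1 : ¬ ∀ y, B x y = 0 := fun h => hx0 (hB.1 x h)
      push_neg at h1
      obtain ⟨y₀, hy₀⟩ := h1
      exact ⟨(B x y₀)⁻¹ • y₀, by rw [map_smul, smul_eq_mul, inv_mul_cancel₀ hy₀]⟩
    have hyx : B y x = -1 := by rw [hskew y x, hxy]
    set f : V →ₗ[ℂ] ℂ × ℂ := LinearMap.prod (B x) (B y) with hf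
    set W := LinearMap.ker f with hW
    have hmemW : ∀ w : V, w ∈ W ↔ (B x w = 0 ∧ B y w = 0) := by
      intro w
      rw [hW, LinearMap.mem_ker, hf, LinearMap.prod_apply, Prod.ext_iff]
      rfl
    have hfsurj : Function.Surjective f := by
      rintro ⟨a, b⟩
      refine ⟨a • y - b • x, ?_⟩
      rw [hf, LinearMap.prod_apply]
      have e1 : B x (a • y - b • x) = a := by
        rw [map_sub, map_smul, map_smul, hxy, hBvv, smul_eq_mul, smul_eq_mul]; ring
      have e2 : B y (a • y - b • x) = b := by
        rw [map_sub, map_smul, map_smul, hyx, hBvv, smul_eq_mul, smul_eq_mul]; ring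
      rw [Function.prod]
      rw [e1, e2]
    have hrank : finrank ℂ W = 2 * n := by
      rw [hW]
      have h1 := LinearMap.finrank_range_add_finrank_ker f
      rw [LinearMap.range_eq_top.mpr hfsurj, finrank_top] at h1
      have h2 : finrank ℂ (ℂ × ℂ) = 2 := by
        rw [Module.finrank_prod, Module.finrank_self]
      rw [hdim, h2] at h1
      omega
    have hrest_nd : (B.restrict W).Nondegenerate := by
      apply LinearMap.BilinForm.Nondegenerate.ofSeparatingLeft
      intro w hw
      have hwW := (hmemW (w : V)).mp w.2
      have hwx : B (w : V) x = 0 := by rw [hskew, hwW.1, neg_zero]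
      have hwy : B (w : V) y = 0 := by rw [hskew, hwW.2, neg_zero]
      have hkey : ∀ v : V, B (w : V) v = 0 := by
        intro v
        have hv' : v - (B x v) • y + (B y v) • x ∈ W := by
          rw [hmemW]
          constructor
          · rw [map_add, map_sub, map_smul, map_smul, hxy, hBvv, smul_eq_mul, smul_eq_mul]
            ring
          · rw [map_add, map_sub, map_smul, map_smul, hyx, hBvv, smul_eq_mul, smul_eq_mul]
            ring
        have h2 : B (w : V) (v - (B x v) • y + (B y v) • x) = 0 := hw ⟨_, hv'⟩
        rw [map_add, map_sub, map_smul, map_smul, hwx, hwy, smul_eq_mul, smul_eq_mul] at h2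
        linear_combination h2
      exact Subtype.ext (hB.1 (w : V) hkey)
    have hrest_skew : ∀ w w' : W, (B.restrict W) w w' = - (B.restrict W) w' w :=
      fun w w' => hskew _ _
    obtain ⟨bW, hbW⟩ := ih W (B.restrict W) hrest_nd hrest_skew hrank
    have hbW' : ∀ p q, B (bW p : V) (bW q : V) = stdG n p q := fun p q => hbW p q
    set v : Fin (n+1) ⊕ Fin (n+1) → V := Sum.elim
      (Fin.cases x (fun i => (bW (Sum.inl i) : V)))
      (Fin.cases y (fun i => (bW (Sum.inr i) : V))) with hv
    have hWv : ∀ p, B x (bW p : V) = 0 ∧ B y (bW p : V) = 0 := fun p => (hmemW _).mp (bW p).2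
    have hWv' : ∀ p, B (bW p : V) x = 0 ∧ B (bW p : V) y = 0 := fun p =>
      ⟨by rw [hskew, (hWv p).1, neg_zero], by rw [hskew, (hWv p).2, neg_zero]⟩
    have hgram : ∀ p q, B (v p) (v q) = stdG (n+1) p q := by
      intro p q
      rcases p with p | p <;> rcases q with q | q <;>
        induction p using Fin.cases <;> induction q using Fin.cases <;>
        simp [hv, stdG, hBvv, hxy, hyx, hWv, hWv', hbW', Fin.succ_ne_zero, Fin.succ_inj] <;>
        exact (Fin.succ_ne_zero _).symm
    have hli : LinearIndependent ℂ v := by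
      rw [Fintype.linearIndependent_iff]
      intro g hg
      have key : ∀ q, ∑ p, g p * B (v p) (v q) = 0 := by
        intro q
        have h := congrArg (fun z => B z (v q)) hg
        simpa [map_sum, LinearMap.sum_apply, smul_eq_mul] using h
      intro p
      rcases p with j | j
      · have h1 := key (Sum.inr j)
        simp only [hgram] at h1
        rw [Fintype.sum_sum_type] at h1
        simpa [stdG, mul_ite, Finset.sum_ite_eq'] using h1
      · have h1 := key (Sum.inl j)
        simp only [hgram] at h1
        rw [Fintype.sum_sum_type] at h1
        have h2 : -(g (Sum.inr j)) = 0 := by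
          simpa [stdG, mul_ite, Finset.sum_ite_eq'] using h1
        simpa using h2
    have hcard : Fintype.card (Fin (n+1) ⊕ Fin (n+1)) = finrank ℂ V := by
      rw [Fintype.card_sum, Fintype.card_fin, hdim]; omega
    refine ⟨basisOfLinearIndependentOfCardEqFinrank hli hcard, fun p q => ?_⟩
    rw [coe_basisOfLinearIndependentOfCardEqFinrank]
    exact hgram p q


end Stmt6Aux

open Stmt6Aux in
/-- Every partition of `2n` in which odd parts occur with even
multiplicity is the Jordan type of a nilpotent skew-symmetric endomorphism of any
symplectic vector space of dimension `2n` over `ℂ`. -/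
theorem stmt6 (n r : ℕ) (hn : 1 ≤ n) (hr : 1 ≤ r) (d : Fin r → ℕ)
    (hanti : Antitone d) (hpos : ∀ i : Fin r, 1 ≤ d i)
    (hsum : ∑ i : Fin r, d i = 2 * n)
    (hodd : ∀ m : ℕ, Odd m →
      Even (Finset.univ.filter (fun i : Fin r => d i = m)).card)
    {V : Type*} [AddCommGroup V] [Module ℂ V] [FiniteDimensional ℂ V]
    (B : LinearMap.BilinForm ℂ V) (hB : B.Nondegenerate)
    (hBalt : ∀ x y : V, B x y = - B y x)
    (hdim : Module.finrank ℂ V = 2 * n) :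
    ∃ C : V →ₗ[ℂ] V, IsNilpotent C ∧
      (∀ x y : V, B (C x) y = - B x (C y)) ∧
      (∀ k : ℕ, Module.finrank ℂ (LinearMap.ker (C ^ k)) = ∑ i : Fin r, min (d i) k) := by
  classical
  obtain ⟨τ, hτ, hdτ, hτodd, hτeven⟩ := exists_tau d hanti hodd
  set σ : Fin r → ℂ := fun i => if i ≤ τ i then 1 else -1 with hσdef
  have hσ1 : ∀ i, σ i = 1 ∨ σ i = -1 := by
    intro i
    by_cases h : i ≤ τ i
    · left; simp [hσdef, h]
    · right; simp [hσdef, h]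
  have hσ : ∀ i, σ (τ i) = (-1) ^ (d i) * σ i := by
    intro i
    by_cases h : Odd (d i)
    · have hne := hτodd i h
      have hpow : ((-1 : ℂ)) ^ (d i) = -1 := Odd.neg_one_pow h
      rcases lt_trichotomy i (τ i) with hlt | heq | hgt
      · rw [hσdef]
        simp only []
        rw [if_pos (le_of_lt hlt), if_neg (by rw [hτ i]; exact not_le.mpr hlt), hpow]
        ring
      · exact absurd heq.symm hne
      · rw [hσdef]
        simp only []
        rw [if_neg (not_le.mpr hgt), if_pos (by rw [hτ i]; exact le_of_lt hgt), hpow]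
        ring
    · have hfix := hτeven i h
      rw [hfix, Even.neg_one_pow (Nat.not_odd_iff_even.mp h), one_mul]
  -- the model space
  have hrankM : finrank ℂ (Mdl d) = 2 * n := by
    rw [Module.finrank_fintype_fun_eq_card, Fintype.card_sigma]
    simpa using hsum
  have hMnd : (form d τ σ).Nondegenerate := form_nondegenerate d τ σ hτ hdτ hpos hσ1
  have hMalt : ∀ x y : Mdl d, form d τ σ x y = - form d τ σ y x :=
    form_alt d τ σ hτ hdτ hσ
  obtain ⟨bV, hbV⟩ := darboux n V B hB hBalt hdim
  obtain ⟨bM, hbM⟩ := darboux n (Mdl d) (form d τ σ) hMnd hMalt hrankM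
  set φ : V ≃ₗ[ℂ] Mdl d := bV.equiv bM (Equiv.refl _) with hφdef
  have hiso : ∀ x y : V, B x y = form d τ σ (φ x) (φ y) := by
    have h1 : B = (form d τ σ).compl₁₂ (φ : V →ₗ[ℂ] Mdl d) (φ : V →ₗ[ℂ] Mdl d) := by
      apply LinearMap.ext_basis bV bV
      intro p q
      rw [LinearMap.compl₁₂_apply]
      have hφb : ∀ p, φ (bV p) = bM p := fun p => by
        rw [hφdef, Basis.equiv_apply]; rfl
      simp only [LinearEquiv.coe_coe]
      rw [hφb, hφb, hbV, hbM]
    intro x y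
    rw [h1, LinearMap.compl₁₂_apply]
    simp only [LinearEquiv.coe_coe]
  set C : V →ₗ[ℂ] V := (φ.symm : Mdl d →ₗ[ℂ] V) ∘ₗ (shift d) ∘ₗ (φ : V →ₗ[ℂ] Mdl d)
    with hCdef
  have hφC : ∀ x : V, φ (C x) = shift d (φ x) := by
    intro x
    rw [hCdef]
    simp [LinearEquiv.apply_symm_apply]
  have hconj : ∀ k : ℕ, (C ^ k : V →ₗ[ℂ] V)
      = (φ.symm : Mdl d →ₗ[ℂ] V) ∘ₗ ((shift d) ^ k) ∘ₗ (φ : V →ₗ[ℂ] Mdl d) := by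
    intro k
    induction k with
    | zero =>
      apply LinearMap.ext
      intro v
      simp
    | succ k ih =>
      apply LinearMap.ext
      intro v
      rw [pow_succ, Module.End.mul_apply, ih]
      simp only [LinearMap.comp_apply, LinearEquiv.coe_coe, pow_succ, Module.End.mul_apply]
      rw [hφC]
  refine ⟨C, ⟨2 * n, ?_⟩, ?_, ?_⟩
  · rw [hconj]
    have h0 : (shift d) ^ (2 * n) = 0 := by
      apply shift_pow_eq_zero
      intro i
      have h1 : d i ≤ ∑ j : Fin r, d j :=
        Finset.single_le_sum (fun j _ => Nat.zero_le _) (Finset.mem_univ i)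
      omega
    rw [h0]
    apply LinearMap.ext
    intro v
    simp
  · intro x y
    rw [hiso (C x) y, hiso x (C y), hφC, hφC]
    exact form_shift_skew d τ σ hdτ hpos (φ x) (φ y)
  · intro k
    have hker : LinearMap.ker (C ^ k)
        = Submodule.comap (φ : V →ₗ[ℂ] Mdl d) (LinearMap.ker ((shift d) ^ k)) := by
      rw [hconj]
      ext v
      simp only [LinearMap.mem_ker, Submodule.mem_comap, LinearMap.comp_apply,
        LinearEquiv.coe_coe]
      constructor
      · intro h
        have := congrArg φ h
        rw [LinearEquiv.apply_symm_apply, map_zero] at this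
        exact this
      · intro h
        rw [h, map_zero]
    rw [hker, (φ.ofSubmodule' (LinearMap.ker ((shift d) ^ k))).finrank_eq]
    exact finrank_ker_shift_pow d k
end

section
/- Let m ≥ 1 and let d₁ ≥ d₂ ≥ … ≥ d_r ≥ 1 be a partition of m in which every even part occurs with even multiplicity. Then on every quadratic vector space (V, B) of dimension m over ℂ there exists a nilpotent endomorphism C of V, skew-symmetric with respect to B, whose Jordan type is the given partition, i.e. dim ker(C^k) = Σᵢ min(dᵢ, k) for every k ≥ 0. (This is the surjectivity part of the Gerstenhaber correspondence of Proposition 1.2.10 for o(m), realized by the explicit maps C^J_{2p} and C^J_{2p+1}.) -/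
set_option maxHeartbeats 1000000

namespace Stmt7Aux

section Model
variable {r : ℕ} (d : Fin r → ℕ)


lemma x_congr (x : (Σ i : Fin r, Fin (d i)) → ℂ) (i : Fin r) {a b : Fin (d i)}
    (h : a.val = b.val) : x ⟨i, a⟩ = x ⟨i, b⟩ := by rw [Fin.ext h]

/-- shift map as a function -/
def shiftFun (x : (Σ i : Fin r, Fin (d i)) → ℂ) : (Σ i : Fin r, Fin (d i)) → ℂ :=
  fun q => if h : 1 ≤ q.2.val then x ⟨q.1, ⟨q.2.val - 1, by omega⟩⟩ else 0

def shiftL : ((Σ i : Fin r, Fin (d i)) → ℂ) →ₗ[ℂ] ((Σ i : Fin r, Fin (d i)) → ℂ) where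
  toFun := shiftFun d
  map_add' x y := by
    funext q; simp only [shiftFun, Pi.add_apply]; split
    · rfl
    · rw [add_zero]
  map_smul' c x := by
    funext q; simp only [shiftFun, Pi.smul_apply, RingHom.id_apply]; split
    · rfl
    · rw [smul_zero]

lemma shift_pow (k : ℕ) (x : (Σ i : Fin r, Fin (d i)) → ℂ) (q : Σ i : Fin r, Fin (d i)) :
    ((shiftL d ^ k) x) q = if h : k ≤ q.2.val then x ⟨q.1, ⟨q.2.val - k, by omega⟩⟩ else 0 := by
  induction k generalizing x q with
  | zero => simp
  | succ k ih =>
    rw [pow_succ, Module.End.mul_apply, ih]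
    by_cases h1 : k ≤ q.2.val
    · rw [dif_pos h1]
      show (if h : 1 ≤ q.2.val - k then x ⟨q.1, ⟨q.2.val - k - 1, _⟩⟩ else 0) = _
      by_cases h2 : k + 1 ≤ q.2.val
      · rw [dif_pos (by omega), dif_pos h2]
        exact x_congr d x q.1 (show q.2.val - k - 1 = q.2.val - (k+1) by omega)
      · rw [dif_neg (by omega), dif_neg h2]
    · rw [dif_neg h1, dif_neg (by omega)]

lemma mem_ker_shift (k : ℕ) (x : (Σ i : Fin r, Fin (d i)) → ℂ) :
    x ∈ LinearMap.ker (shiftL d ^ k) ↔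
      ∀ q : Σ i : Fin r, Fin (d i), q.2.val + k < d q.1 → x q = 0 := by
  rw [LinearMap.mem_ker]
  constructor
  · intro h q hq
    have h2 := congrFun h ⟨q.1, ⟨q.2.val + k, hq⟩⟩
    rw [shift_pow, dif_pos (show k ≤ q.2.val + k by omega)] at h2
    simp only [Pi.zero_apply] at h2
    rw [← h2]
    exact x_congr d x q.1 (show q.2.val = q.2.val + k - k by omega)
  · intro h
    funext q
    rw [shift_pow]
    simp only [Pi.zero_apply]
    split
    · exact h ⟨q.1, ⟨q.2.val - k, by omega⟩⟩ (show q.2.val - k + k < d q.1 by omega)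
    · rfl

def finMinEquiv (n k : ℕ) : {a : Fin n // n ≤ a.val + k} ≃ Fin (min n k) where
  toFun a := ⟨a.1.val - (n - k), by have := a.1.isLt; have := a.2; omega⟩
  invFun b := ⟨⟨b.val + (n - k), by have := b.isLt; omega⟩,
    show n ≤ b.val + (n - k) + k by have := b.isLt; omega⟩
  left_inv a := Subtype.ext (Fin.ext
    (show a.1.val - (n - k) + (n - k) = a.1.val by have := a.1.isLt; have := a.2; omega))
  right_inv b := Fin.ext (show b.val + (n - k) - (n - k) = b.val by omega)

lemma finrank_ker_shift (k : ℕ) :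
    Module.finrank ℂ (LinearMap.ker (shiftL d ^ k)) = ∑ i : Fin r, min (d i) k := by
  classical
  let S := {q : Σ i : Fin r, Fin (d i) // d q.1 ≤ q.2.val + k}
  let ρ : LinearMap.ker (shiftL d ^ k) →ₗ[ℂ] (S → ℂ) :=
    { toFun := fun x s => x.1 s.1
      map_add' := fun x y => rfl
      map_smul' := fun c x => rfl }
  have hbij : Function.Bijective ρ := by
    constructor
    · intro x y hxy
      ext q
      by_cases h : d q.1 ≤ q.2.val + k
      · exact congrFun hxy ⟨q, h⟩
      · rw [(mem_ker_shift d k x.1).1 x.2 q (by omega),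
          (mem_ker_shift d k y.1).1 y.2 q (by omega)]
    · intro y
      refine ⟨⟨fun q => if h : d q.1 ≤ q.2.val + k then y ⟨q, h⟩ else 0, ?_⟩, ?_⟩
      · rw [mem_ker_shift]
        intro q hq
        rw [dif_neg (by omega)]
      · funext s
        show dite _ _ _ = _
        rw [dif_pos s.2]
  rw [LinearEquiv.finrank_eq (LinearEquiv.ofBijective ρ hbij), Module.finrank_pi]
  have e : S ≃ Σ i : Fin r, {a : Fin (d i) // d i ≤ a.val + k} :=
    { toFun := fun s => ⟨s.1.1, s.1.2, s.2⟩
      invFun := fun t => ⟨⟨t.1, t.2.1⟩, t.2.2⟩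
      left_inv := fun s => rfl
      right_inv := fun t => rfl }
  rw [Fintype.card_congr e, Fintype.card_sigma]
  congr 1
  funext i
  rw [Fintype.card_congr (finMinEquiv (d i) k), Fintype.card_fin]

end Model

section Cnt
variable {r : ℕ} {d : Fin r → ℕ}


def cnt (d : Fin r → ℕ) (p : ℕ) : ℕ := (Finset.univ.filter fun j : Fin r => p ≤ d j).card

lemma lt_cnt_iff (hanti : Antitone d) (p : ℕ) (j : Fin r) : (j : ℕ) < cnt d p ↔ p ≤ d j := by
  unfold cnt
  constructor
  · intro h
    by_contra hc
    have hsub : (Finset.univ.filter fun j : Fin r => p ≤ d j) ⊆ Finset.Iio j := by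
      intro j' hj'
      rw [Finset.mem_filter] at hj'
      rw [Finset.mem_Iio]
      by_contra hge
      exact hc (le_trans hj'.2 (hanti (not_lt.1 hge)))
    have h2 := Finset.card_le_card hsub
    rw [Fin.card_Iio] at h2
    omega
  · intro h
    have hsub : Finset.Iic j ⊆ (Finset.univ.filter fun j : Fin r => p ≤ d j) := by
      intro j' hj'
      rw [Finset.mem_Iic] at hj'
      rw [Finset.mem_filter]
      exact ⟨Finset.mem_univ _, le_trans h (hanti hj')⟩
    have h2 := Finset.card_le_card hsub
    rw [Fin.card_Iic] at h2
    omega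

lemma cnt_subset (p : ℕ) : (Finset.univ.filter fun j : Fin r => p + 1 ≤ d j) ⊆
    (Finset.univ.filter fun j : Fin r => p ≤ d j) := by
  intro j hj
  rw [Finset.mem_filter] at *
  exact ⟨hj.1, by omega⟩

lemma cnt_succ_le (p : ℕ) : cnt d (p + 1) ≤ cnt d p :=
  Finset.card_le_card (cnt_subset p)

lemma cnt_le_r (p : ℕ) : cnt d p ≤ r := by
  have := Finset.card_filter_le Finset.univ (fun j : Fin r => p ≤ d j)
  simpa [cnt] using this

lemma filter_eq_card (p : ℕ) :
    (Finset.univ.filter fun j : Fin r => d j = p).card = cnt d p - cnt d (p + 1) := by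
  classical
  have h1 : (Finset.univ.filter fun j : Fin r => d j = p) =
      (Finset.univ.filter fun j : Fin r => p ≤ d j) \
        (Finset.univ.filter fun j : Fin r => p + 1 ≤ d j) := by
    ext j
    simp only [Finset.mem_filter, Finset.mem_sdiff, Finset.mem_univ, true_and]
    omega
  rw [h1, Finset.card_sdiff_of_subset (cnt_subset p)]
  rfl

def sig (d : Fin r → ℕ) (i : Fin r) : Fin r :=
  if Even (d i) then
    (if (i.val - cnt d (d i + 1)) % 2 = 0 then
       (if h : i.val + 1 < r then ⟨i.val + 1, h⟩ else i)
     else ⟨i.val - 1, by have := i.isLt; omega⟩)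
  else i

def sgn (d : Fin r → ℕ) (i : Fin r) : ℂ :=
  if (i.val - cnt d (d i + 1)) % 2 = 1 then -1 else 1

section
variable (hanti : Antitone d)
  (hpar : ∀ p : ℕ, Even p → (cnt d p - cnt d (p + 1)) % 2 = 0)
include hanti hpar

-- basic facts about even classes
lemma sig_facts (i : Fin r) (hi : Even (d i)) :
    cnt d (d i + 1) ≤ i.val ∧ i.val < cnt d (d i) ∧ cnt d (d i) ≤ r ∧
      (cnt d (d i) - cnt d (d i + 1)) % 2 = 0 := by
  have h1 := lt_cnt_iff hanti (d i + 1) i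
  have h2 := lt_cnt_iff hanti (d i) i
  have h3 := cnt_le_r (d := d) (d i)
  have h4 := hpar (d i) hi
  omega

lemma sig_even_lo (i : Fin r) (hi : Even (d i))
    (h0 : (i.val - cnt d (d i + 1)) % 2 = 0) :
    ∃ h : i.val + 1 < r, sig d i = ⟨i.val + 1, h⟩ ∧ d (sig d i) = d i := by
  obtain ⟨ha, hb, hcr, hp⟩ := sig_facts hanti hpar i hi
  have hlt : i.val + 1 < cnt d (d i) := by omega
  have hltr : i.val + 1 < r := by omega
  have hs : sig d i = ⟨i.val + 1, hltr⟩ := by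
    rw [sig, if_pos hi, if_pos h0, dif_pos hltr]
  refine ⟨hltr, hs, ?_⟩
  rw [hs]
  have hge := (lt_cnt_iff hanti (d i) ⟨i.val + 1, hltr⟩).1 hlt
  have hle := hanti (show i ≤ ⟨i.val + 1, hltr⟩ from by
    rw [Fin.le_def]; show i.val ≤ i.val + 1; omega)
  omega

lemma sig_even_hi (i : Fin r) (hi : Even (d i))
    (h0 : ¬ (i.val - cnt d (d i + 1)) % 2 = 0) :
    sig d i = ⟨i.val - 1, by have := i.isLt; omega⟩ ∧ d (sig d i) = d i ∧ 1 ≤ i.val ∧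
      cnt d (d i + 1) ≤ i.val - 1 := by
  obtain ⟨ha, hb, hcr, hp⟩ := sig_facts hanti hpar i hi
  have hvpos : 1 ≤ i.val := by omega
  have hs : sig d i = ⟨i.val - 1, by have := i.isLt; omega⟩ := by
    rw [sig, if_pos hi, if_neg h0]
  refine ⟨hs, ?_, hvpos, by omega⟩
  rw [hs]
  have hge := (lt_cnt_iff hanti (d i) ⟨i.val - 1, by have := i.isLt; omega⟩).1 (by
    show i.val - 1 < cnt d (d i); omega)
  have hlt2 := lt_cnt_iff hanti (d i + 1) ⟨i.val - 1, by have := i.isLt; omega⟩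
  rw [show ((⟨i.val - 1, by have := i.isLt; omega⟩ : Fin r) : ℕ) = i.val - 1 from rfl] at hlt2
  have h5 := lt_cnt_iff hanti (d i + 1) i
  have h6 : d i < d i + 1 := by omega
  -- from ha : cnt d (d i + 1) ≤ i.val - 1 we get d i + 1 > d ⟨i-1⟩ is not needed;
  -- we know cnt d (d i + 1) ≤ i.val - 1 → ¬ (d i + 1 ≤ d ⟨i-1⟩) need other dir:
  omega

omit hanti hpar in
lemma sig_odd (i : Fin r) (hi : ¬ Even (d i)) : sig d i = i := by
  rw [sig, if_neg hi]

lemma d_sig (i : Fin r) : d (sig d i) = d i := by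
  by_cases hi : Even (d i)
  · by_cases h0 : (i.val - cnt d (d i + 1)) % 2 = 0
    · exact (sig_even_lo hanti hpar i hi h0).2.2
    · exact (sig_even_hi hanti hpar i hi h0).2.1
  · rw [sig_odd i hi]

lemma sig_sig (i : Fin r) : sig d (sig d i) = i := by
  by_cases hi : Even (d i)
  · have hd := d_sig hanti hpar i
    by_cases h0 : (i.val - cnt d (d i + 1)) % 2 = 0
    · obtain ⟨h, hs, hdi⟩ := sig_even_lo hanti hpar i hi h0
      obtain ⟨ha, _, _, _⟩ := sig_facts hanti hpar i hi
      have hi' : Even (d (sig d i)) := hd ▸ hi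
      have h0' : ¬ ((sig d i).val - cnt d (d (sig d i) + 1)) % 2 = 0 := by
        rw [hd, hs]
        show ¬ (i.val + 1 - cnt d (d i + 1)) % 2 = 0
        omega
      obtain ⟨hs2, _, _, _⟩ := sig_even_hi hanti hpar (sig d i) hi' h0'
      rw [hs2]
      have hval : (sig d i).val = i.val + 1 := by rw [hs]
      exact Fin.ext (show (sig d i).val - 1 = i.val by omega)
    · obtain ⟨hs, hdi, hv, ha'⟩ := sig_even_hi hanti hpar i hi h0
      have hi' : Even (d (sig d i)) := hd ▸ hi
      have h0' : ((sig d i).val - cnt d (d (sig d i) + 1)) % 2 = 0 := by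
        rw [hd, hs]
        show (i.val - 1 - cnt d (d i + 1)) % 2 = 0
        obtain ⟨ha, _, _, _⟩ := sig_facts hanti hpar i hi
        omega
      obtain ⟨h, hs2, _⟩ := sig_even_lo hanti hpar (sig d i) hi' h0'
      rw [hs2]
      have hval : (sig d i).val = i.val - 1 := by rw [hs]
      exact Fin.ext (show (sig d i).val + 1 = i.val by omega)
  · rw [sig_odd i hi, sig_odd i hi]

lemma sgn_sig (hpos : ∀ i : Fin r, 1 ≤ d i) (i : Fin r) :
    sgn d (sig d i) = sgn d i * (-1) ^ (d i - 1) := by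
  by_cases hi : Even (d i)
  · have hd := d_sig hanti hpar i
    have hodd : Odd (d i - 1) := by
      rw [Nat.odd_iff]
      have h1 := hpos i
      have h2 := Nat.even_iff.1 hi
      omega
    rw [hodd.neg_one_pow, mul_neg_one]
    have key : ∀ j : Fin r, sgn d j = if (j.val - cnt d (d j + 1)) % 2 = 1 then -1 else 1 :=
      fun j => rfl
    rw [key (sig d i), key i, hd]
    by_cases h0 : (i.val - cnt d (d i + 1)) % 2 = 0
    · obtain ⟨h, hs, _⟩ := sig_even_lo hanti hpar i hi h0
      obtain ⟨ha, _, _, _⟩ := sig_facts hanti hpar i hi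
      have hval : (sig d i).val = i.val + 1 := by rw [hs]
      rw [hval, if_pos (show (i.val + 1 - cnt d (d i + 1)) % 2 = 1 by omega),
        if_neg (show ¬ (i.val - cnt d (d i + 1)) % 2 = 1 by omega)]
      try norm_num
    · obtain ⟨hs, _, hvpos, ha'⟩ := sig_even_hi hanti hpar i hi h0
      have hval : (sig d i).val = i.val - 1 := by rw [hs]
      rw [hval, if_neg (show ¬ (i.val - 1 - cnt d (d i + 1)) % 2 = 1 by omega),
        if_pos (show (i.val - cnt d (d i + 1)) % 2 = 1 by omega)]
      try norm_num
  · rw [sig_odd i hi]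
    have heven : Even (d i - 1) := by
      rw [Nat.even_iff]
      have h2 := Nat.not_even_iff.1 hi
      omega
    rw [heven.neg_one_pow, mul_one]
end

end Cnt

section Form
variable {r : ℕ} {d : Fin r → ℕ}
variable (hanti : Antitone d)
  (hpar : ∀ p : ℕ, Even p → (cnt d p - cnt d (p + 1)) % 2 = 0)

def dnI (d : Fin r → ℕ) (q : Σ i : Fin r, Fin (d i)) : Σ i : Fin r, Fin (d i) :=
  ⟨q.1, ⟨q.2.val - 1, by have := q.2.isLt; omega⟩⟩

def upI (d : Fin r → ℕ) (q : Σ i : Fin r, Fin (d i)) : Σ i : Fin r, Fin (d i) :=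
  ⟨q.1, if h : q.2.val + 1 < d q.1 then ⟨q.2.val + 1, h⟩ else q.2⟩

lemma sigma_ext {i j : Fin r} (h : i = j) {a : Fin (d i)} {b : Fin (d j)}
    (hv : a.val = b.val) : (⟨i, a⟩ : Σ i, Fin (d i)) = ⟨j, b⟩ := by
  subst h; exact congrArg _ (Fin.ext hv)

lemma shiftL_apply (x : (Σ i : Fin r, Fin (d i)) → ℂ) (q : Σ i : Fin r, Fin (d i)) :
    shiftL d x q = if 1 ≤ q.2.val then x (dnI d q) else 0 := by
  show (if h : 1 ≤ q.2.val then x ⟨q.1, ⟨q.2.val - 1, _⟩⟩ else 0) = _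
  by_cases h : 1 ≤ q.2.val
  · rw [dif_pos h, if_pos h]; rfl
  · rw [dif_neg h, if_neg h]

def pairI (hanti : Antitone d)
    (hpar : ∀ p : ℕ, Even p → (cnt d p - cnt d (p + 1)) % 2 = 0)
    (q : Σ i : Fin r, Fin (d i)) : Σ i : Fin r, Fin (d i) :=
  ⟨sig d q.1, ⟨d q.1 - 1 - q.2.val, by
    have h1 := d_sig hanti hpar q.1
    have h2 := q.2.isLt
    omega⟩⟩

lemma pairI_fst (q : Σ i : Fin r, Fin (d i)) :
    (pairI hanti hpar q).1 = sig d q.1 := rfl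

lemma pairI_snd (q : Σ i : Fin r, Fin (d i)) :
    (pairI hanti hpar q).2.val = d q.1 - 1 - q.2.val := rfl

lemma pairI_pairI (q : Σ i : Fin r, Fin (d i)) :
    pairI hanti hpar (pairI hanti hpar q) = q := by
  have h1 := d_sig hanti hpar q.1
  have h2 := q.2.isLt
  exact sigma_ext (sig_sig hanti hpar q.1)
    (show d (sig d q.1) - 1 - (d q.1 - 1 - q.2.val) = q.2.val by omega)

lemma pairI_inj : Function.Injective (pairI hanti hpar) :=
  Function.Involutive.injective (pairI_pairI hanti hpar)

def coef (d : Fin r → ℕ) (q : Σ i : Fin r, Fin (d i)) : ℂ :=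
  sgn d q.1 * (-1) ^ (q.2.val)

lemma coef_ne_zero (q : Σ i : Fin r, Fin (d i)) : coef d q ≠ 0 := by
  unfold coef sgn
  split <;> simp

lemma coef_pairI (hpos : ∀ i : Fin r, 1 ≤ d i) (q : Σ i : Fin r, Fin (d i)) :
    coef d (pairI hanti hpar q) = coef d q := by
  unfold coef
  rw [pairI_snd hanti hpar, pairI_fst, sgn_sig hanti hpar hpos q.1]
  have h2 := q.2.isLt
  have hexp : (d q.1 - 1) + (d q.1 - 1 - q.2.val) = q.2.val + 2 * (d q.1 - 1 - q.2.val) := by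
    omega
  rw [mul_assoc, ← pow_add, hexp, pow_add, pow_mul, neg_one_sq, one_pow, mul_one]

noncomputable def formW (hanti : Antitone d)
    (hpar : ∀ p : ℕ, Even p → (cnt d p - cnt d (p + 1)) % 2 = 0) :
    LinearMap.BilinForm ℂ ((Σ i : Fin r, Fin (d i)) → ℂ) :=
  LinearMap.mk₂ ℂ
    (fun x y => ∑ q : Σ i : Fin r, Fin (d i),
      coef d q * x q * y (pairI hanti hpar q))
    (fun x x' y => by
      rw [← Finset.sum_add_distrib]
      exact Finset.sum_congr rfl fun q _ => by simp [Pi.add_apply]; ring)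
    (fun c x y => by
      rw [Finset.smul_sum]
      exact Finset.sum_congr rfl fun q _ => by simp [Pi.smul_apply, smul_eq_mul]; ring)
    (fun x y y' => by
      rw [← Finset.sum_add_distrib]
      exact Finset.sum_congr rfl fun q _ => by simp [Pi.add_apply]; ring)
    (fun c x y => by
      rw [Finset.smul_sum]
      exact Finset.sum_congr rfl fun q _ => by simp [Pi.smul_apply, smul_eq_mul]; ring)

lemma formW_apply (x y : (Σ i : Fin r, Fin (d i)) → ℂ) :
    formW hanti hpar x y
      = ∑ q : Σ i : Fin r, Fin (d i), coef d q * x q * y (pairI hanti hpar q) := rfl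

lemma formW_single_right (x : (Σ i : Fin r, Fin (d i)) → ℂ)
    (p : Σ i : Fin r, Fin (d i)) :
    formW hanti hpar x (Pi.single (pairI hanti hpar p) 1) = coef d p * x p := by
  rw [formW_apply]
  rw [Finset.sum_eq_single p]
  · rw [Pi.single_eq_same, mul_one]
  · intro q _ hq
    rw [Pi.single_eq_of_ne (fun hc => hq (pairI_inj hanti hpar hc)), mul_zero]
  · intro h
    exact absurd (Finset.mem_univ p) h

lemma formW_nondegenerate : (formW hanti hpar).Nondegenerate := by
  refine ⟨?_, ?_⟩
  swap
  · intro y hy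
    funext p
    have h := hy (Pi.single (pairI hanti hpar p) 1)
    rw [formW_apply, Finset.sum_eq_single (pairI hanti hpar p)] at h
    · rw [Pi.single_eq_same, mul_one, pairI_pairI hanti hpar] at h
      rw [Pi.zero_apply]
      exact (mul_eq_zero.1 h).resolve_left (coef_ne_zero _)
    · intro q _ hq
      rw [Pi.single_eq_of_ne hq, mul_zero, zero_mul]
    · intro h
      exact absurd (Finset.mem_univ _) h
  intro x hx
  funext p
  have h := hx (Pi.single (pairI hanti hpar p) 1)
  rw [formW_single_right] at h
  rw [Pi.zero_apply]
  exact (mul_eq_zero.1 h).resolve_left (coef_ne_zero p)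

lemma formW_symm (hpos : ∀ i : Fin r, 1 ≤ d i)
    (x y : (Σ i : Fin r, Fin (d i)) → ℂ) :
    formW hanti hpar x y = formW hanti hpar y x := by
  rw [formW_apply, formW_apply]
  refine Fintype.sum_equiv (Function.Involutive.toPerm _ (pairI_pairI hanti hpar)) _ _
    fun q => ?_
  show coef d q * x q * y (pairI hanti hpar q)
    = coef d (pairI hanti hpar q) * y (pairI hanti hpar q)
        * x (pairI hanti hpar (pairI hanti hpar q))
  rw [coef_pairI hanti hpar hpos, pairI_pairI hanti hpar]
  ring

lemma formW_skew (hpos : ∀ i : Fin r, 1 ≤ d i)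
    (x y : (Σ i : Fin r, Fin (d i)) → ℂ) :
    formW hanti hpar (shiftL d x) y = - formW hanti hpar x (shiftL d y) := by
  classical
  rw [formW_apply, formW_apply, ← Finset.sum_neg_distrib]
  have hL : ∀ q : Σ i : Fin r, Fin (d i),
      coef d q * (shiftL d x) q * y (pairI hanti hpar q)
        = if 1 ≤ q.2.val then coef d q * x (dnI d q) * y (pairI hanti hpar q) else 0 := by
    intro q
    rw [shiftL_apply]
    split
    · rfl
    · rw [mul_zero, zero_mul]
  have hR : ∀ q : Σ i : Fin r, Fin (d i),
      -(coef d q * x q * (shiftL d y) (pairI hanti hpar q))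
        = if q.2.val + 1 < d q.1 then
            -(coef d q * x q * y (dnI d (pairI hanti hpar q))) else 0 := by
    intro q
    rw [shiftL_apply]
    have hc : (1 ≤ (pairI hanti hpar q).2.val) ↔ (q.2.val + 1 < d q.1) := by
      rw [pairI_snd]
      have := q.2.isLt
      omega
    by_cases h : q.2.val + 1 < d q.1
    · rw [if_pos (hc.2 h), if_pos h]
    · rw [if_neg (fun hh => h (hc.1 hh)), if_neg h, mul_zero, neg_zero]
  rw [Finset.sum_congr rfl fun q _ => hL q, Finset.sum_congr rfl fun q _ => hR q]
  rw [← Finset.sum_filter, ← Finset.sum_filter]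
  refine Finset.sum_nbij' (i := dnI d) (j := upI d) ?_ ?_ ?_ ?_ ?_
  · intro q hq
    rw [Finset.mem_filter] at *
    refine ⟨Finset.mem_univ _, ?_⟩
    show (q.2.val - 1) + 1 < d q.1
    have := q.2.isLt
    omega
  · intro q hq
    rw [Finset.mem_filter] at *
    obtain ⟨-, h⟩ := hq
    refine ⟨Finset.mem_univ _, ?_⟩
    show 1 ≤ ((⟨q.1, if hh : q.2.val + 1 < d q.1 then ⟨q.2.val + 1, hh⟩ else q.2⟩ :
      Σ i : Fin r, Fin (d i)).2.val)
    rw [dif_pos h]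
    show 1 ≤ q.2.val + 1
    omega
  · intro q hq
    rw [Finset.mem_filter] at hq
    obtain ⟨-, h⟩ := hq
    unfold upI dnI
    have h2 : q.2.val - 1 + 1 < d q.1 := by have := q.2.isLt; omega
    refine sigma_ext rfl ?_
    show (if hh : q.2.val - 1 + 1 < d q.1 then
        (⟨q.2.val - 1 + 1, hh⟩ : Fin (d q.1)) else ⟨q.2.val - 1, _⟩).val = q.2.val
    rw [dif_pos h2]
    show q.2.val - 1 + 1 = q.2.val
    omega
  · intro q hq
    rw [Finset.mem_filter] at hq
    obtain ⟨-, h⟩ := hq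
    unfold upI dnI
    refine sigma_ext rfl ?_
    show (if hh : q.2.val + 1 < d q.1 then
        (⟨q.2.val + 1, hh⟩ : Fin (d q.1)) else q.2).val - 1 = q.2.val
    rw [dif_pos h]
    show q.2.val + 1 - 1 = q.2.val
    omega
  · intro q hq
    rw [Finset.mem_filter] at hq
    obtain ⟨-, h⟩ := hq
    -- goal: coef d q * x (dnI d q) * y (pairI hanti hpar q)
    --   = -(coef d (dnI d q) * x (dnI d q) * y (dnI d (pairI hanti hpar (dnI d q))))
    have hcoef : coef d q = - coef d (dnI d q) := by
      show sgn d q.1 * (-1) ^ q.2.val = -(sgn d q.1 * (-1) ^ (q.2.val - 1))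
      have hpow : ((-1 : ℂ)) ^ q.2.val = ((-1 : ℂ)) ^ (q.2.val - 1) * (-1) := by
        conv_lhs => rw [show q.2.val = (q.2.val - 1) + 1 by omega]
        rw [pow_succ]
      rw [hpow]
      ring
    have h2 := q.2.isLt
    have hidx : dnI d (pairI hanti hpar (dnI d q)) = pairI hanti hpar q := by
      refine sigma_ext rfl ?_
      show (pairI hanti hpar (dnI d q)).2.val - 1 = (pairI hanti hpar q).2.val
      rw [pairI_snd hanti hpar, pairI_snd hanti hpar]
      show d q.1 - 1 - (q.2.val - 1) - 1 = d q.1 - 1 - q.2.val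
      omega
    rw [hidx, hcoef]
    ring
end Form

section ONB
open Module

lemma exists_onb {V : Type*} [AddCommGroup V] [Module ℂ V] [FiniteDimensional ℂ V]
    (B : LinearMap.BilinForm ℂ V) (hB : B.Nondegenerate)
    (hsymm : ∀ x y : V, B x y = B y x) :
    ∃ v : Basis (Fin (Module.finrank ℂ V)) ℂ V,
      ∀ i j, B (v i) (v j) = if i = j then 1 else 0 := by
  haveI : Invertible (2 : ℂ) := invertibleOfNonzero (by norm_num)
  have hsym : B.IsSymm := ⟨fun x y => hsymm x y⟩
  obtain ⟨v, hv⟩ := LinearMap.BilinForm.exists_orthogonal_basis (LinearMap.BilinForm.isSymm_iff.1 hsym)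
  have hdiag : ∀ i, B (v i) (v i) ≠ 0 := by
    intro i hzero
    have hzeromap : B (v i) = 0 := by
      apply Basis.ext v
      intro j
      rw [LinearMap.zero_apply]
      by_cases hij : i = j
      · rw [← hij]; exact hzero
      · exact hv hij
    exact Basis.ne_zero v i (hB.1 (v i) (fun y => by rw [hzeromap]; rfl))
  have hz : ∀ i, ∃ z : ℂ, z ^ 2 = (B (v i) (v i))⁻¹ := fun i =>
    IsAlgClosed.exists_pow_nat_eq _ (by norm_num)
  choose z hz2 using hz
  have hzne : ∀ i, IsUnit (z i) := by
    intro i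
    rw [isUnit_iff_ne_zero]
    intro hc
    have := hz2 i
    rw [hc] at this
    exact inv_ne_zero (hdiag i) (by rw [← this]; ring)
  refine ⟨v.isUnitSMul hzne, fun i j => ?_⟩
  simp only [Basis.isUnitSMul_apply, map_smul, LinearMap.smul_apply, smul_eq_mul]
  by_cases hij : i = j
  · subst hij
    rw [if_pos rfl]
    have hre : z i * (z i * B (v i) (v i)) = z i ^ 2 * B (v i) (v i) := by ring
    rw [hre, hz2 i, inv_mul_cancel₀ (hdiag i)]
  · rw [if_neg hij, hv hij, mul_zero, mul_zero]
end ONB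

end Stmt7Aux


open Stmt7Aux


/-- Every partition of `m` in which even parts occur with even
multiplicity is the Jordan type of a nilpotent skew-symmetric endomorphism of any
quadratic vector space of dimension `m` over `ℂ`. -/
theorem stmt7 (m r : ℕ) (hm : 1 ≤ m) (hr : 1 ≤ r) (d : Fin r → ℕ)
    (hanti : Antitone d) (hpos : ∀ i : Fin r, 1 ≤ d i)
    (hsum : ∑ i : Fin r, d i = m)
    (heven : ∀ p : ℕ, Even p →
      Even (Finset.univ.filter (fun i : Fin r => d i = p)).card)
    {V : Type*} [AddCommGroup V] [Module ℂ V] [FiniteDimensional ℂ V]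
    (B : LinearMap.BilinForm ℂ V) (hB : B.Nondegenerate)
    (hBsymm : ∀ x y : V, B x y = B y x)
    (hdim : Module.finrank ℂ V = m) :
    ∃ C : V →ₗ[ℂ] V, IsNilpotent C ∧
      (∀ x y : V, B (C x) y = - B x (C y)) ∧
      (∀ k : ℕ, Module.finrank ℂ (LinearMap.ker (C ^ k)) = ∑ i : Fin r, min (d i) k) := by
  classical
  have hpar : ∀ p : ℕ, Even p → (cnt d p - cnt d (p + 1)) % 2 = 0 := by
    intro p hp
    rw [← filter_eq_card]
    exact Nat.even_iff.1 (heven p hp)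
  set BW := formW hanti hpar with hBW
  have hWrank : Module.finrank ℂ ((Σ i : Fin r, Fin (d i)) → ℂ) = m := by
    rw [Module.finrank_pi, Fintype.card_sigma]
    simpa using hsum
  obtain ⟨v, hvONB⟩ := exists_onb B hB hBsymm
  obtain ⟨w, hwONB⟩ := exists_onb BW (formW_nondegenerate hanti hpar)
    (formW_symm hanti hpar hpos)
  have e0 : Fin (Module.finrank ℂ V)
      ≃ Fin (Module.finrank ℂ ((Σ i : Fin r, Fin (d i)) → ℂ)) :=
    finCongr (by rw [hdim, hWrank])
  set φ := v.equiv w e0 with hφ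
  have hiso : ∀ x y : V, B x y = BW (φ x) (φ y) := by
    have heq : B = BW.compl₁₂ φ.toLinearMap φ.toLinearMap := by
      apply LinearMap.ext_basis v v
      intro i j
      rw [LinearMap.compl₁₂_apply]
      show B (v i) (v j) = BW (φ (v i)) (φ (v j))
      rw [hφ, Module.Basis.equiv_apply, Module.Basis.equiv_apply, hvONB, hwONB]
      by_cases hij : i = j
      · rw [if_pos hij, if_pos (by rw [hij])]
      · rw [if_neg hij, if_neg (fun hc => hij (e0.injective hc))]
    intro x y
    rw [heq]
    rfl
  set S := shiftL d with hS
  set C : V →ₗ[ℂ] V := φ.symm.toLinearMap ∘ₗ S ∘ₗ φ.toLinearMap with hC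
  have hCapp : ∀ x : V, C x = φ.symm (S (φ x)) := fun x => rfl
  have hCk : ∀ (k : ℕ) (x : V), (C ^ k) x = φ.symm ((S ^ k) (φ x)) := by
    intro k
    induction k with
    | zero => intro x; simp
    | succ k ih =>
      intro x
      rw [pow_succ, Module.End.mul_apply, ih (C x)]
      have hφC : φ (C x) = S (φ x) := by rw [hCapp, LinearEquiv.apply_symm_apply]
      rw [hφC, ← Module.End.mul_apply, ← pow_succ]
  have hdle : ∀ i : Fin r, d i ≤ m := by
    intro i
    rw [← hsum]
    exact Finset.single_le_sum (fun j _ => Nat.zero_le (d j)) (Finset.mem_univ i)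
  have hSm : (S ^ m) = 0 := by
    apply LinearMap.ext
    intro x
    funext q
    rw [LinearMap.zero_apply, Pi.zero_apply, hS, shift_pow]
    split
    · exfalso
      have h1 := q.2.isLt
      have h2 := hdle q.1
      omega
    · rfl
  refine ⟨C, ⟨m, ?_⟩, ?_, ?_⟩
  · ext x
    rw [LinearMap.zero_apply, hCk, hSm, LinearMap.zero_apply, map_zero]
  · intro x y
    rw [hiso (C x) y, hiso x (C y), hCapp, LinearEquiv.apply_symm_apply, hCapp,
      LinearEquiv.apply_symm_apply]
    exact formW_skew hanti hpar hpos (φ x) (φ y)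
  · intro k
    have hker : LinearMap.ker (C ^ k)
        = Submodule.map (φ.symm : ((Σ i : Fin r, Fin (d i)) → ℂ) →ₗ[ℂ] V)
            (LinearMap.ker (S ^ k)) := by
      ext x
      simp only [LinearMap.mem_ker, Submodule.mem_map]
      constructor
      · intro h
        refine ⟨φ x, ?_, ?_⟩
        · rw [hCk] at h
          have := congrArg φ h
          rwa [LinearEquiv.apply_symm_apply, map_zero] at this
        · exact φ.symm_apply_apply x
      · rintro ⟨y, hy, rfl⟩
        rw [hCk]
        simp only [LinearEquiv.coe_coe, LinearEquiv.apply_symm_apply]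
        rw [hy, map_zero]
    rw [hker]
    exact (LinearEquiv.finrank_map_eq (R := ℂ) φ.symm (LinearMap.ker (S ^ k))).trans
      (finrank_ker_shift d k)
end

section
/- Let V be a finite-dimensional complex vector space with a nondegenerate bilinear form B that is either symmetric or alternating, and suppose V = V₊ ⊕ V₋ where V₊ and V₋ are totally isotropic subspaces. Let N and N' be endomorphisms of V, both skew-symmetric with respect to B, both mapping V₊ into V₊ and V₋ into V₋. Suppose there exists an invertible linear map U₊ : V₊ → V₊ such that N'(x) = (U₊ ∘ N ∘ U₊⁻¹)(x) for all x ∈ V₊. Then there exists an isometry U of (V, B) with U(V₊) = V₊ and U(V₋) = V₋ such that N' = U ∘ N ∘ U⁻¹. -/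
/-- For `V = V₊ ⊕ V₋` with both summands totally isotropic and `N, N'`
skew-symmetric maps preserving both summands, if `N'|_{V₊} = U₊ N U₊⁻¹` for some
invertible `U₊ : V₊ → V₊`, then `N' = U N U⁻¹` for some isometry `U` of `(V, B)`
preserving `V₊` and `V₋`. -/
theorem stmt12 {V : Type*} [AddCommGroup V] [Module ℂ V] [FiniteDimensional ℂ V]
    (B : LinearMap.BilinForm ℂ V) (hB : B.Nondegenerate)
    (hBsa : (∀ x y : V, B x y = B y x) ∨ (∀ x y : V, B x y = - B y x))
    (Vp Vm : Submodule ℂ V) (hcompl : IsCompl Vp Vm)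
    (hVp : ∀ x ∈ Vp, ∀ y ∈ Vp, B x y = 0)
    (hVm : ∀ x ∈ Vm, ∀ y ∈ Vm, B x y = 0)
    (N N' : V →ₗ[ℂ] V)
    (hN : ∀ x y : V, B (N x) y = - B x (N y))
    (hN' : ∀ x y : V, B (N' x) y = - B x (N' y))
    (hNVp : ∀ x ∈ Vp, N x ∈ Vp) (hNVm : ∀ x ∈ Vm, N x ∈ Vm)
    (hN'Vp : ∀ x ∈ Vp, N' x ∈ Vp) (hN'Vm : ∀ x ∈ Vm, N' x ∈ Vm)
    (Up : ↥Vp ≃ₗ[ℂ] ↥Vp)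
    (hUp : ∀ (x : ↥Vp) (h : N ↑(Up.symm x) ∈ Vp),
      N' ↑x = ↑(Up ⟨N ↑(Up.symm x), h⟩)) :
    ∃ U : V ≃ₗ[ℂ] V, (∀ x y : V, B (U x) (U y) = B x y) ∧
      Submodule.map U.toLinearMap Vp = Vp ∧
      Submodule.map U.toLinearMap Vm = Vm ∧
      ∀ x : V, N' x = U (N (U.symm x)) := by
  classical
  -- right nondegeneracy
  have hBnd' : ∀ v : V, (∀ x : V, B x v = 0) → v = 0 := by
    intro v hv
    refine hB.1 v fun y => ?_
    rcases hBsa with h | h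
    · rw [h]; exact hv y
    · rw [h, hv y, neg_zero]
  let pe := Submodule.prodEquivOfIsCompl Vp Vm hcompl
  have hdec : ∀ x : V, ∃ p : Vp, ∃ m : Vm, x = ↑p + ↑m := by
    intro x
    have hx : x ∈ Vp ⊔ Vm := by rw [hcompl.sup_eq_top]; trivial
    obtain ⟨y, hy, z, hz, h⟩ := Submodule.mem_sup.1 hx
    exact ⟨⟨y, hy⟩, ⟨z, hz⟩, h.symm⟩
  -- injectivity of pairings
  have hinjm : ∀ v ∈ Vm, (∀ a : Vp, B ↑a v = 0) → v = 0 := by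
    intro v hv h
    refine hBnd' v fun x => ?_
    obtain ⟨p, m, rfl⟩ := hdec x
    rw [map_add, LinearMap.add_apply, h p, hVm _ m.2 _ hv, add_zero]
  have hinjp : ∀ v ∈ Vp, (∀ a : Vm, B ↑a v = 0) → v = 0 := by
    intro v hv h
    refine hBnd' v fun x => ?_
    obtain ⟨p, m, rfl⟩ := hdec x
    rw [map_add, LinearMap.add_apply, h m, hVp _ p.2 _ hv, add_zero]
  -- pairing maps
  let φ : ↥Vm →ₗ[ℂ] Module.Dual ℂ ↥Vp :=
    Vp.subtype.dualMap ∘ₗ B.flip ∘ₗ Vm.subtype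
  have hφ : ∀ (b : Vm) (a : Vp), φ b a = B ↑a ↑b := fun b a => rfl
  let ψ : ↥Vp →ₗ[ℂ] Module.Dual ℂ ↥Vm :=
    Vm.subtype.dualMap ∘ₗ B.flip ∘ₗ Vp.subtype
  have hφinj : Function.Injective φ := by
    rw [← LinearMap.ker_eq_bot, Submodule.eq_bot_iff]
    intro b hb
    have : (b : V) = 0 := by
      refine hinjm _ b.2 fun a => ?_
      have := congrArg (fun f => f a) (LinearMap.mem_ker.1 hb)
      simpa [hφ] using this
    exact Subtype.ext this
  have hψinj : Function.Injective ψ := by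
    rw [← LinearMap.ker_eq_bot, Submodule.eq_bot_iff]
    intro b hb
    have : (b : V) = 0 := by
      refine hinjp _ b.2 fun a => ?_
      have := congrArg (fun f => f a) (LinearMap.mem_ker.1 hb)
      simpa [ψ] using this
    exact Subtype.ext this
  have hfr : Module.finrank ℂ ↥Vm = Module.finrank ℂ ↥Vp := by
    have h1 : Module.finrank ℂ ↥Vm ≤ Module.finrank ℂ ↥Vp := by
      have := LinearMap.finrank_le_finrank_of_injective hφinj
      simpa [Subspace.dual_finrank_eq] using this
    have h2 : Module.finrank ℂ ↥Vp ≤ Module.finrank ℂ ↥Vm := by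
      have := LinearMap.finrank_le_finrank_of_injective hψinj
      simpa [Subspace.dual_finrank_eq] using this
    omega
  have hφsurj : Function.Surjective φ :=
    (LinearMap.injective_iff_surjective_of_finrank_eq_finrank
      (by rw [hfr, Subspace.dual_finrank_eq])).1 hφinj
  let e : ↥Vm ≃ₗ[ℂ] Module.Dual ℂ ↥Vp := LinearEquiv.ofBijective φ ⟨hφinj, hφsurj⟩
  let Um : ↥Vm ≃ₗ[ℂ] ↥Vm := e.trans (Up.symm.dualMap.trans e.symm)
  have hkey : ∀ (a : Vp) (b : Vm), B ↑a ↑(Um b) = B ↑(Up.symm a) ↑b := by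
    intro a b
    have h1 : φ (Um b) = Up.symm.dualMap (e b) := by
      have : e (Um b) = Up.symm.dualMap (e b) := by simp [Um]
      exact this
    have := congrArg (fun f => f a) h1
    have he : ∀ c, e c = φ c := fun c => rfl
    simpa [hφ, he] using this
  -- the global map
  let U : V ≃ₗ[ℂ] V := pe.symm.trans ((Up.prodCongr Um).trans pe)
  have hUp' : ∀ p : Vp, U ↑p = ↑(Up p) := by
    intro p
    have h0 : pe.symm ↑p = (p, 0) := Submodule.prodEquivOfIsCompl_symm_apply_left Vp Vm hcompl p
    show pe ((Up.prodCongr Um) (pe.symm ↑p)) = ↑(Up p)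
    rw [h0]
    have h1 : (Up.prodCongr Um) (p, 0) = (Up p, 0) := by
      have h2 : (Up.prodCongr Um) (p, 0) = (Up p, Um 0) := rfl
      rw [h2, map_zero]
    rw [h1]
    show ↑(Up p) + ((0 : Vm) : V) = ↑(Up p)
    simp
  have hUm' : ∀ m : Vm, U ↑m = ↑(Um m) := by
    intro m
    have h0 : pe.symm ↑m = (0, m) := Submodule.prodEquivOfIsCompl_symm_apply_right Vp Vm hcompl m
    show pe ((Up.prodCongr Um) (pe.symm ↑m)) = ↑(Um m)
    rw [h0]
    have h1 : (Up.prodCongr Um) (0, m) = (0, Um m) := by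
      have h2 : (Up.prodCongr Um) (0, m) = (Up 0, Um m) := rfl
      rw [h2, map_zero]
    rw [h1]
    show ((0 : Vp) : V) + ↑(Um m) = ↑(Um m)
    simp
  have hUsp : ∀ p : Vp, U.symm ↑p = ↑(Up.symm p) := by
    intro p
    rw [LinearEquiv.symm_apply_eq, hUp' (Up.symm p), LinearEquiv.apply_symm_apply]
  have hUsm : ∀ m : Vm, U.symm ↑m = ↑(Um.symm m) := by
    intro m
    rw [LinearEquiv.symm_apply_eq, hUm' (Um.symm m), LinearEquiv.apply_symm_apply]
  -- the cross pairing the other way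
  have hkey2 : ∀ (a : Vp) (b : Vm), B ↑(Um b) ↑a = B ↑b ↑(Up.symm a) := by
    intro a b
    rcases hBsa with h | h
    · rw [h, hkey, h ((Up.symm a : V))]
    · rw [h, hkey, h ((Up.symm a : V))]; ring
  refine ⟨U, ?_, ?_, ?_, ?_⟩
  · -- isometry
    intro x y
    obtain ⟨px, mx, rfl⟩ := hdec x
    obtain ⟨py, my, rfl⟩ := hdec y
    have hx : U (↑px + ↑mx) = ↑(Up px) + ↑(Um mx) := by rw [map_add, hUp', hUm']
    have hy : U (↑py + ↑my) = ↑(Up py) + ↑(Um my) := by rw [map_add, hUp', hUm']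
    rw [hx, hy]
    simp only [map_add, LinearMap.add_apply]
    rw [hVp _ (Up px).2 _ (Up py).2, hVp _ px.2 _ py.2,
        hVm _ (Um mx).2 _ (Um my).2, hVm _ mx.2 _ my.2]
    have e1 : B ↑(Up px) ↑(Um my) = B ↑px ↑my := by
      rw [hkey (Up px) my, LinearEquiv.symm_apply_apply]
    have e2 : B ↑(Um mx) ↑(Up py) = B ↑mx ↑py := by
      rw [hkey2 (Up py) mx, LinearEquiv.symm_apply_apply]
    rw [e1, e2]
  · -- maps Vp
    apply le_antisymm
    · rintro _ ⟨x, hx, rfl⟩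
      show U x ∈ Vp
      have h2 : U x = ↑(Up ⟨x, hx⟩) := hUp' ⟨x, hx⟩
      rw [h2]; exact (Up ⟨x, hx⟩).2
    · intro x hx
      refine ⟨↑(Up.symm ⟨x, hx⟩), (Up.symm ⟨x, hx⟩).2, ?_⟩
      show U ↑(Up.symm ⟨x, hx⟩) = x
      rw [hUp', LinearEquiv.apply_symm_apply]
  · -- maps Vm
    apply le_antisymm
    · rintro _ ⟨x, hx, rfl⟩
      show U x ∈ Vm
      have h2 : U x = ↑(Um ⟨x, hx⟩) := hUm' ⟨x, hx⟩
      rw [h2]; exact (Um ⟨x, hx⟩).2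
    · intro x hx
      refine ⟨↑(Um.symm ⟨x, hx⟩), (Um.symm ⟨x, hx⟩).2, ?_⟩
      show U ↑(Um.symm ⟨x, hx⟩) = x
      rw [hUm', LinearEquiv.apply_symm_apply]
  · -- conjugation
    intro x
    obtain ⟨p, m, rfl⟩ := hdec x
    have hp2 : N' ↑p = U (N ↑(Up.symm p)) := by
      have h1 : N ↑(Up.symm p) ∈ Vp := hNVp _ (Up.symm p).2
      have h2 : U (N ↑(Up.symm p)) = ↑(Up ⟨N ↑(Up.symm p), h1⟩) := hUp' ⟨N ↑(Up.symm p), h1⟩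
      rw [h2]; exact hUp p h1
    have hm2 : N' ↑m = U (N ↑(Um.symm m)) := by
      have h1 : N ↑(Um.symm m) ∈ Vm := hNVm _ (Um.symm m).2
      have h2 : U (N ↑(Um.symm m)) = ↑(Um ⟨N ↑(Um.symm m), h1⟩) := hUm' ⟨N ↑(Um.symm m), h1⟩
      rw [h2]
      -- both sides in Vm; use hinjm
      have hsub : N' ↑m - ↑(Um ⟨N ↑(Um.symm m), h1⟩) = 0 := by
        refine hinjm _ (Vm.sub_mem (hN'Vm _ m.2) (Um _).2) fun a => ?_
        rw [map_sub]
        have hrhs : B ↑a ↑(Um ⟨N ↑(Um.symm m), h1⟩) = B (↑a : V) (N' ↑m) := by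
          rw [hkey a ⟨N ↑(Um.symm m), h1⟩]
          show B ↑(Up.symm a) (N ↑(Um.symm m)) = B (↑a : V) (N' ↑m)
          have h2 : B (N ↑(Up.symm a)) ↑(Um.symm m) = - B ↑(Up.symm a) (N ↑(Um.symm m)) :=
            hN _ _
          have h3 : N ↑(Up.symm a) ∈ Vp := hNVp _ (Up.symm a).2
          have h4 : B (N ↑(Up.symm a)) ↑(Um.symm m) = B ↑(Up ⟨N ↑(Up.symm a), h3⟩) ↑m := by
            have := hkey (Up ⟨N ↑(Up.symm a), h3⟩) (Um.symm m)
            rw [LinearEquiv.apply_symm_apply, LinearEquiv.symm_apply_apply] at this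
            exact this.symm
          have h5 : (↑(Up ⟨N ↑(Up.symm a), h3⟩) : V) = N' ↑a := (hUp a h3).symm
          have h6 : B (N' ↑a) ↑m = - B (↑a : V) (N' ↑m) := hN' _ _
          calc B ↑(Up.symm a) (N ↑(Um.symm m))
              = - B (N ↑(Up.symm a)) ↑(Um.symm m) := by rw [h2, neg_neg]
            _ = - B ↑(Up ⟨N ↑(Up.symm a), h3⟩) ↑m := by rw [h4]
            _ = - B (N' ↑a) ↑m := by rw [h5]
            _ = B (↑a : V) (N' ↑m) := by rw [h6, neg_neg]
        rw [hrhs, sub_self]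
      exact sub_eq_zero.1 hsub
    have hs : U.symm (↑p + ↑m) = ↑(Up.symm p) + ↑(Um.symm m) := by
      rw [map_add, hUsp, hUsm]
    rw [map_add, hs, map_add, map_add, ← hp2, ← hm2]
end

section
/- Let (V, B) be a symplectic vector space over ℂ and let C, C' be nilpotent endomorphisms of V, both skew-symmetric with respect to B. Then there exist a nonzero scalar λ ∈ ℂ and an isometry P of (V, B) with C = λ • (P ∘ C' ∘ P⁻¹) if and only if there exists an isometry Q of (V, B) with C = Q ∘ C' ∘ Q⁻¹. -/
open Polynomial Module

universe u

private lemma sqrt_mod_pow (c : ℂ) (hc : c ≠ 0) (m : ℕ) :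
    ∃ q : ℂ[X], q.coeff 0 ≠ 0 ∧ (X : ℂ[X]) ^ m ∣ q ^ 2 - (Polynomial.C c + X) := by
  obtain ⟨r, hr⟩ : ∃ r : ℂ, r ^ 2 = c := IsAlgClosed.exists_pow_nat_eq c two_pos
  have hr0 : r ≠ 0 := fun h => hc (by simp [h] at hr; simp [← hr])
  induction m with
  | zero => exact ⟨Polynomial.C r, by simpa using hr0, by simp⟩
  | succ m ih =>
    rcases Nat.eq_zero_or_pos m with rfl | hm
    · refine ⟨Polynomial.C r, by simpa using hr0, ?_⟩
      have : (Polynomial.C r) ^ 2 - (Polynomial.C c + X) = -X := by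
        rw [← Polynomial.C_pow, hr]; ring
      rw [this, pow_one]
      exact Dvd.intro (-1) (by ring)
    · obtain ⟨q, h0, w, hw⟩ := ih
      obtain ⟨n, rfl⟩ : ∃ n, m = n + 1 := ⟨m - 1, by omega⟩
      set u : ℂ[X] := Polynomial.C (2⁻¹ * (q.coeff 0)⁻¹) with hu
      have hXdvd : X ∣ 2 * (q * u) - 1 := by
        rw [Polynomial.X_dvd_iff]
        have : ((2 : ℂ[X]) * (q * u) - 1).coeff 0 = 2 * (q.coeff 0 * (2⁻¹ * (q.coeff 0)⁻¹)) - 1 := by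
          simp [hu, Polynomial.mul_coeff_zero]
        rw [this]
        field_simp
        simp
      obtain ⟨z, hz⟩ := hXdvd
      set q' : ℂ[X] := q - X ^ (n + 1) * w * u with hq'
      refine ⟨q', ?_, ?_⟩
      · have hc0 : (X ^ (n + 1) * w * u).coeff 0 = 0 := by
          rw [← Polynomial.X_dvd_iff]
          exact ⟨X ^ n * w * u, by ring⟩
        have : q'.coeff 0 = q.coeff 0 := by
          rw [hq', Polynomial.coeff_sub, hc0, sub_zero]
        rw [this]; exact h0
      · have key : q' ^ 2 - (Polynomial.C c + X)
            = X ^ (n + 1 + 1) * (-(w * z)) + X ^ (n + 1) * X ^ (n + 1) * (w ^ 2 * u ^ 2) := by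
          have h2 : q ^ 2 - (Polynomial.C c + X) = X ^ (n + 1) * w := hw
          rw [hq']
          linear_combination h2 - (X ^ (n + 1) * w) * hz
        rw [key]
        refine dvd_add ⟨-(w * z), rfl⟩ ?_
        have : (X : ℂ[X]) ^ (n + 1 + 1) ∣ X ^ (n + 1) * X ^ (n + 1) := by
          rw [← pow_add]; exact pow_dvd_pow _ (by omega)
        exact this.mul_right _

private lemma crt2 {R : Type*} [CommRing R] {f g : R} (h : IsCoprime f g) (a b : R) :
    ∃ q : R, f ∣ q - a ∧ g ∣ q - b := by
  obtain ⟨u, v, huv⟩ := h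
  refine ⟨b * (u * f) + a * (v * g), ⟨(b - a) * u, ?_⟩, ⟨(a - b) * v, ?_⟩⟩
  · linear_combination a * huv
  · linear_combination b * huv

private lemma crt_finset {R : Type*} [CommRing R] {ι : Type*} [DecidableEq ι]
    (s : Finset ι) (f : ι → R) (r : ι → R)
    (hco : ∀ a ∈ s, ∀ b ∈ s, a ≠ b → IsCoprime (f a) (f b)) :
    ∃ q : R, ∀ a ∈ s, f a ∣ q - r a := by
  induction s using Finset.induction_on with
  | empty => exact ⟨0, by simp⟩
  | @insert a t ha ih =>
    obtain ⟨q', hq'⟩ := ih fun x hx y hy hxy =>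
      hco x (Finset.mem_insert_of_mem hx) y (Finset.mem_insert_of_mem hy) hxy
    have hcop : IsCoprime (f a) (∏ b ∈ t, f b) := by
      refine IsCoprime.prod_right fun b hb => ?_
      exact hco a (Finset.mem_insert_self a t) b (Finset.mem_insert_of_mem hb)
        (fun h => ha (h ▸ hb))
    obtain ⟨q, hqa, hqt⟩ := crt2 hcop (r a) q'
    refine ⟨q, fun b hb => ?_⟩
    rcases Finset.mem_insert.mp hb with rfl | hb
    · exact hqa
    · have h1 : f b ∣ q - q' := (Finset.dvd_prod_of_mem f hb).trans hqt
      have h2 : f b ∣ q' - r b := hq' b hb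
      have := dvd_add h1 h2
      simpa using this

private lemma exists_sqrt {V : Type*} [AddCommGroup V] [Module ℂ V] [FiniteDimensional ℂ V]
    (A : Module.End ℂ V) (hA : Function.Injective A) :
    ∃ p : ℂ[X], (aeval A p) * (aeval A p) = A := by
  classical
  have hint : IsIntegral ℂ A := Algebra.IsIntegral.isIntegral A
  set μ := minpoly ℂ A with hμ
  have hmon : μ.Monic := minpoly.monic hint
  -- roots are nonzero
  have hroots0 : ∀ α : ℂ, μ.IsRoot α → α ≠ 0 := by
    intro α hα h0
    have hev : Module.End.HasEigenvalue A α := Module.End.hasEigenvalue_iff_isRoot.mpr hα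
    obtain ⟨x, hx⟩ := hev.exists_hasEigenvector
    have hx0 : x ≠ 0 := hx.right
    have : A x = 0 := by rw [hx.apply_eq_smul, h0, zero_smul]
    exact hx0 (hA (by simpa using this))
  set s := μ.roots.toFinset with hs
  set f : ℂ → ℂ[X] := fun α => ((X : ℂ[X]) - Polynomial.C α) ^ (μ.roots.count α) with hf
  -- local square roots of X mod f α
  have hloc : ∀ α : ℂ, ∃ qα : ℂ[X], α ∈ s → f α ∣ qα ^ 2 - X := by
    intro α
    by_cases hαs : α ∈ s
    · have hα0 : α ≠ 0 := by
        refine hroots0 α ?_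
        have := Multiset.mem_toFinset.mp hαs
        exact isRoot_of_mem_roots this
      obtain ⟨q0, -, hdvd⟩ := sqrt_mod_pow α hα0 (μ.roots.count α)
      refine ⟨q0.comp ((X : ℂ[X]) - Polynomial.C α), fun _ => ?_⟩
      obtain ⟨w, hw⟩ := hdvd
      refine ⟨w.comp ((X : ℂ[X]) - Polynomial.C α), ?_⟩
      have := congrArg (fun p : ℂ[X] => p.comp ((X : ℂ[X]) - Polynomial.C α)) hw
      simpa [hf, Polynomial.count_roots, sub_comp, add_comp, pow_comp, mul_comp, X_comp, C_comp] using this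
    · exact ⟨0, fun h => absurd h hαs⟩
  choose rfun hrfun using hloc
  -- pairwise coprimality
  have hco : ∀ a ∈ s, ∀ b ∈ s, a ≠ b → IsCoprime (f a) (f b) := by
    intro a _ b _ hab
    exact (isCoprime_X_sub_C_of_isUnit_sub (sub_ne_zero_of_ne hab).isUnit).pow
  obtain ⟨q, hq⟩ := crt_finset s f rfun hco
  -- each local modulus divides q^2 - X
  have hdvd : ∀ α ∈ s, f α ∣ q ^ 2 - X := by
    intro α hα
    have h1 : f α ∣ (q - rfun α) * (q + rfun α) := (hq α hα).mul_right _
    have h2 : f α ∣ rfun α ^ 2 - X := hrfun α hα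
    have := dvd_add h1 h2
    have heq : (q - rfun α) * (q + rfun α) + (rfun α ^ 2 - X) = q ^ 2 - X := by ring
    rwa [heq] at this
  -- μ is the product of the f α
  have hsplit : μ = ∏ α ∈ s, f α := by
    have h1 : μ = (μ.roots.map fun a => (X : ℂ[X]) - Polynomial.C a).prod :=
      (IsAlgClosed.splits μ).eq_prod_roots_of_monic hmon
    rw [h1, Finset.prod_multiset_map_count]
  have hμdvd : μ ∣ q ^ 2 - X := by
    rw [hsplit]
    exact Finset.prod_dvd_of_coprime
      (fun a ha b hb hab => hco a ha b hb hab) hdvd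
  obtain ⟨w, hw⟩ := hμdvd
  refine ⟨q, ?_⟩
  have hμ0 : aeval A μ = 0 := minpoly.aeval ℂ A
  have : aeval A (q ^ 2 - X) = 0 := by
    rw [hw, map_mul, hμ0, zero_mul]
  have h2 : aeval A (q ^ 2) = aeval A (X : ℂ[X]) := by
    rwa [map_sub, sub_eq_zero] at this
  simpa [pow_two] using h2

private lemma exists_scaling (lam : ℂ) (hlam : lam ≠ 0) :
    ∀ (n : ℕ) (V : Type u) [AddCommGroup V] [Module ℂ V] [FiniteDimensional ℂ V]
      (C : Module.End ℂ V), Module.finrank ℂ V ≤ n → IsNilpotent C →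
      ∃ S : V ≃ₗ[ℂ] V, ∀ x, S (C x) = lam • C (S x) := by
  intro n
  induction n with
  | zero =>
    intro V _ _ _ C hrank _
    have hsub : Subsingleton V :=
      Module.finrank_zero_iff.mp (le_antisymm hrank (Nat.zero_le _))
    exact ⟨LinearEquiv.refl ℂ V, fun x => Subsingleton.elim _ _⟩
  | succ n ih =>
    intro V _ _ _ C hrank hnil
    classical
    rcases subsingleton_or_nontrivial V with hV | hV
    · exact ⟨LinearEquiv.refl ℂ V, fun x => Subsingleton.elim _ _⟩
    obtain ⟨N, hN⟩ := hnil
    have hex : ∃ m, C ^ m = 0 := ⟨N, hN⟩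
    set k := Nat.find hex with hkdef
    have hk : C ^ k = 0 := Nat.find_spec hex
    have hk1 : 1 ≤ k := by
      by_contra h
      have h0 : k = 0 := by omega
      obtain ⟨x, hx⟩ := exists_ne (0 : V)
      have : (C ^ 0 : Module.End ℂ V) = 0 := h0 ▸ hk
      exact hx (by simpa using congrArg (fun f : Module.End ℂ V => f x) this)
    have hkm : C ^ (k - 1) ≠ 0 := Nat.find_min hex (by omega)
    obtain ⟨v, hv⟩ : ∃ v : V, (C ^ (k - 1)) v ≠ 0 := by
      by_contra h
      push_neg at h
      exact hkm (LinearMap.ext fun x => by simpa using h x)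
    obtain ⟨φ, hφ⟩ : ∃ φ : Module.Dual ℂ V, φ ((C ^ (k - 1)) v) ≠ 0 := by
      by_contra h
      push_neg at h
      exact hv ((Module.forall_dual_apply_eq_zero_iff ℂ _).mp h)
    have hpow0 : ∀ t, k ≤ t → (C ^ t : Module.End ℂ V) = 0 := by
      intro t ht
      have h1 : C ^ t = C ^ (t - k) * C ^ k := by rw [← pow_add]; congr 1; omega
      rw [h1, hk, mul_zero]
    set b : Fin k → V := fun i => (C ^ (i : ℕ)) v with hb
    -- key vanishing computation
    have key : ∀ (c : Fin k → ℂ) (x : V), (∑ i, c i • b i = x) →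
        (∀ s : ℕ, s < k → φ ((C ^ s) x) = 0) → ∀ i, c i = 0 := by
      intro c x hx h0
      have main : ∀ m : ℕ, ∀ i : Fin k, (i : ℕ) = m → c i = 0 := by
        intro m
        induction m using Nat.strong_induction_on with
        | _ m ihm =>
          intro i hi
          have hsmall : ∀ j : Fin k, (j : ℕ) < m → c j = 0 := fun j hj => ihm _ hj j rfl
          have hmk : m < k := hi ▸ i.isLt
          have happ := h0 (k - 1 - m) (by omega)
          rw [← hx] at happ
          have hexp : φ ((C ^ (k - 1 - m)) (∑ j, c j • b j))
              = ∑ j : Fin k, c j * φ ((C ^ (k - 1 - m + (j : ℕ))) v) := by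
            rw [map_sum, map_sum]
            refine Finset.sum_congr rfl fun j _ => ?_
            rw [map_smul, map_smul, smul_eq_mul, hb]
            congr 2
            rw [pow_add]
            rfl
          rw [hexp] at happ
          have hsingle : ∑ j : Fin k, c j * φ ((C ^ (k - 1 - m + (j : ℕ))) v)
              = c i * φ ((C ^ (k - 1)) v) := by
            rw [Finset.sum_eq_single i]
            · have he : k - 1 - m + (i : ℕ) = k - 1 := by omega
              rw [he]
            · intro j _ hji
              rcases lt_or_gt_of_ne (fun h : (j : ℕ) = m => hji (Fin.ext (by omega))) with hj | hj
              · rw [hsmall j hj, zero_mul]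
              · have hge : k ≤ k - 1 - m + (j : ℕ) := by omega
                rw [hpow0 _ hge]
                simp
            · intro hni
              exact absurd (Finset.mem_univ i) hni
          rw [hsingle] at happ
          exact (mul_eq_zero.mp happ).resolve_right hφ
      intro i; exact main (i : ℕ) i rfl
    -- linear independence
    have hb_li : LinearIndependent ℂ b := by
      rw [Fintype.linearIndependent_iff]
      intro g hg
      exact key g 0 hg (fun s _ => by simp)
    set U : Submodule ℂ V := Submodule.span ℂ (Set.range b) with hUdef
    have hbmem : ∀ i : Fin k, b i ∈ U := fun i => Submodule.subset_span ⟨i, rfl⟩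
    have hCv : ∀ m : ℕ, (C ^ m) v ∈ U := by
      intro m
      by_cases hm : m < k
      · exact hbmem ⟨m, hm⟩
      · rw [hpow0 m (by omega)]; simp
    have hUC : ∀ x ∈ U, C x ∈ U := by
      intro x hx
      induction hx using Submodule.span_induction with
      | mem y hy =>
        obtain ⟨i, rfl⟩ := hy
        have : C (b i) = (C ^ ((i : ℕ) + 1)) v := by
          rw [hb, pow_succ']
          rfl
        rw [this]
        exact hCv _
      | zero => simp
      | add y z _ _ hy hz => rw [map_add]; exact U.add_mem hy hz
      | smul a y _ hy => rw [map_smul]; exact U.smul_mem a hy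
    -- the complement W
    set ψ : V →ₗ[ℂ] (Fin k → ℂ) :=
      LinearMap.pi (fun i : Fin k => φ ∘ₗ (C ^ (i : ℕ) : Module.End ℂ V)) with hψdef
    set W : Submodule ℂ V := LinearMap.ker ψ with hWdef
    have hWmem : ∀ x : V, x ∈ W ↔ ∀ i : Fin k, φ ((C ^ (i : ℕ)) x) = 0 := by
      intro x
      rw [hWdef, LinearMap.mem_ker, hψdef]
      constructor
      · intro h i
        have := congrFun (congrArg (fun f : Fin k → ℂ => f) h) i
        simpa [LinearMap.pi_apply] using this
      · intro h
        funext i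
        simpa [LinearMap.pi_apply] using h i
    have hWC : ∀ x ∈ W, C x ∈ W := by
      intro x hx
      rw [hWmem] at hx ⊢
      intro i
      have h1 : ((C ^ ((i : ℕ) + 1)) x : V) = (C ^ (i : ℕ)) (C x) := by
        rw [pow_succ]; rfl
      rw [← h1]
      by_cases hik : (i : ℕ) + 1 < k
      · exact hx ⟨(i : ℕ) + 1, hik⟩
      · rw [hpow0 _ (by omega)]; simp
    -- disjointness
    have hdisj : Disjoint U W := by
      rw [Submodule.disjoint_def]
      intro x hxU hxW
      rw [hUdef, Submodule.mem_span_range_iff_exists_fun] at hxU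
      obtain ⟨c, hc⟩ := hxU
      have hzero : ∀ s : ℕ, s < k → φ ((C ^ s) x) = 0 := by
        intro s hs
        exact (hWmem x).mp hxW ⟨s, hs⟩
      have := key c x hc hzero
      rw [← hc]
      simp [this]
    -- dimension count
    have frU : finrank ℂ U = k := by
      rw [hUdef, finrank_span_eq_card hb_li]
      simp
    have hker : finrank ℂ (LinearMap.range ψ) + finrank ℂ W = finrank ℂ V :=
      LinearMap.finrank_range_add_finrank_ker ψ
    have hrange : finrank ℂ (LinearMap.range ψ) ≤ k := by
      have h1 := Submodule.finrank_le (LinearMap.range ψ)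
      simpa [Module.finrank_fin_fun] using h1
    have hsupfr : finrank ℂ (U ⊔ W : Submodule ℂ V) = finrank ℂ V := by
      have h1 := Submodule.finrank_sup_add_finrank_inf_eq U W
      rw [hdisj.eq_bot] at h1
      simp only [finrank_bot, add_zero] at h1
      have h2 : finrank ℂ V ≤ finrank ℂ (U ⊔ W : Submodule ℂ V) := by omega
      exact le_antisymm (Submodule.finrank_le _) h2
    have hsup : U ⊔ W = ⊤ := Submodule.eq_top_of_finrank_eq hsupfr
    have hcompl : IsCompl U W := ⟨hdisj, codisjoint_iff.mpr hsup⟩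
    have hfrVW : finrank ℂ V = k + finrank ℂ W := by
      have h1 := Submodule.finrank_sup_add_finrank_inf_eq U W
      rw [hdisj.eq_bot] at h1
      simp only [finrank_bot, add_zero] at h1
      omega
    have hfrW : finrank ℂ W ≤ n := by omega
    -- restricted maps
    set CW : Module.End ℂ W := C.restrict hWC with hCWdef
    have hCWcomm : C.comp W.subtype = W.subtype.comp CW := by
      ext x
      simp [hCWdef, LinearMap.restrict_coe_apply]
    have hCWnil : IsNilpotent CW :=
      ⟨N, Module.End.submodule_pow_eq_zero_of_pow_eq_zero hCWcomm hN⟩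
    obtain ⟨SW, hSW⟩ := ih W CW hfrW hCWnil
    -- basis and scaling equivalence on U
    let bU : Basis (Fin k) ℂ U := Basis.span hb_li
    have hbU : ∀ i : Fin k, (bU i : V) = b i := fun i => Basis.coe_span_apply hb_li i
    set TU : U →ₗ[ℂ] U := bU.constr ℂ (fun i => lam ^ (i : ℕ) • bU i) with hTU
    set TU' : U →ₗ[ℂ] U := bU.constr ℂ (fun i => (lam⁻¹) ^ (i : ℕ) • bU i) with hTU'
    have hpowc : ∀ i : ℕ, (lam⁻¹) ^ i * lam ^ i = 1 := by
      intro i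
      rw [← mul_pow, inv_mul_cancel₀ hlam, one_pow]
    have hTT' : TU.comp TU' = LinearMap.id := by
      refine bU.ext fun i => ?_
      rw [LinearMap.comp_apply, hTU', Basis.constr_basis, map_smul, hTU, Basis.constr_basis,
        smul_smul, hpowc, one_smul, LinearMap.id_apply]
    have hT'T : TU'.comp TU = LinearMap.id := by
      refine bU.ext fun i => ?_
      rw [LinearMap.comp_apply, hTU, Basis.constr_basis, map_smul, hTU', Basis.constr_basis,
        smul_smul, mul_comm, hpowc, one_smul, LinearMap.id_apply]
    set SU : U ≃ₗ[ℂ] U := LinearEquiv.ofLinear TU TU' hTT' hT'T with hSU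
    have hSUb : ∀ i : Fin k, SU (bU i) = lam ^ (i : ℕ) • bU i := by
      intro i
      rw [hSU, LinearEquiv.ofLinear_apply, hTU, Basis.constr_basis]
    set CU : Module.End ℂ U := C.restrict hUC with hCUdef
    have hCUb : ∀ i : Fin k,
        CU (bU i) = if h : (i : ℕ) + 1 < k then bU ⟨(i : ℕ) + 1, h⟩ else 0 := by
      intro i
      have hcoe : (CU (bU i) : V) = (C ^ ((i : ℕ) + 1)) v := by
        rw [hCUdef, LinearMap.restrict_coe_apply, hbU, hb, pow_succ']
        rfl
      split_ifs with h
      · refine Subtype.ext ?_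
        rw [hcoe, hbU]
      · refine Subtype.ext ?_
        rw [hcoe, hpow0 ((i : ℕ) + 1) (by omega)]
        rfl
    have hcommU : ∀ u : U, SU (CU u) = lam • CU (SU u) := by
      have hmap : (SU : U →ₗ[ℂ] U).comp CU = lam • (CU.comp (SU : U →ₗ[ℂ] U)) := by
        refine bU.ext fun i => ?_
        rw [LinearMap.comp_apply, LinearMap.smul_apply, LinearMap.comp_apply]
        simp only [LinearEquiv.coe_coe]
        by_cases h : (i : ℕ) + 1 < k
        · have h1 : CU (bU i) = bU ⟨(i : ℕ) + 1, h⟩ := by rw [hCUb i, dif_pos h]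
          rw [h1, hSUb, hSUb, map_smul, h1]
          simp [smul_smul, pow_succ']
        · have h1 : CU (bU i) = 0 := by rw [hCUb i, dif_neg h]
          rw [h1, map_zero, hSUb, map_smul, h1, smul_zero, smul_zero]
      intro u
      have := LinearMap.congr_fun hmap u
      simpa using this
    -- glue
    set e := Submodule.prodEquivOfIsCompl U W hcompl with hedef
    set SV : V ≃ₗ[ℂ] V := e.symm.trans ((SU.prodCongr SW).trans e) with hSV
    have hSVU : ∀ u : U, SV (u : V) = ((SU u : U) : V) := by
      intro u
      rw [hSV]
      simp only [LinearEquiv.trans_apply]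
      rw [hedef, Submodule.prodEquivOfIsCompl_symm_apply_left]
      have : (SU.prodCongr SW) ((u, 0) : U × W) = (SU u, 0) := by
        have h2 : (SU.prodCongr SW) ((u, 0) : U × W) = (SU u, SW 0) := rfl
        rw [h2, map_zero]
      rw [this, Submodule.coe_prodEquivOfIsCompl']
      simp
    have hSVW : ∀ w : W, SV (w : V) = ((SW w : W) : V) := by
      intro w
      rw [hSV]
      simp only [LinearEquiv.trans_apply]
      rw [hedef, Submodule.prodEquivOfIsCompl_symm_apply_right]
      have : (SU.prodCongr SW) ((0, w) : U × W) = (0, SW w) := by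
        have h2 : (SU.prodCongr SW) ((0, w) : U × W) = (SU 0, SW w) := rfl
        rw [h2, map_zero]
      rw [this, Submodule.coe_prodEquivOfIsCompl']
      simp
    refine ⟨SV, fun x => ?_⟩
    have hx : x ∈ U ⊔ W := hsup ▸ Submodule.mem_top
    rw [Submodule.mem_sup] at hx
    obtain ⟨y, hy, z, hz, rfl⟩ := hx
    have hCy : C y = ((CU ⟨y, hy⟩ : U) : V) := by
      rw [hCUdef, LinearMap.restrict_coe_apply]
    have hCz : C z = ((CW ⟨z, hz⟩ : W) : V) := by
      rw [hCWdef, LinearMap.restrict_coe_apply]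
    calc SV (C (y + z)) = SV (C y) + SV (C z) := by rw [map_add, map_add]
      _ = ((SU (CU ⟨y, hy⟩) : U) : V) + ((SW (CW ⟨z, hz⟩) : W) : V) := by
          rw [hCy, hCz, hSVU, hSVW]
      _ = lam • (((CU (SU ⟨y, hy⟩) : U) : V) + ((CW (SW ⟨z, hz⟩) : W) : V)) := by
          rw [hcommU, hSW]
          simp [smul_add]
      _ = lam • (C ((SU ⟨y, hy⟩ : U) : V) + C ((SW ⟨z, hz⟩ : W) : V)) := by
          rw [hCUdef, hCWdef, LinearMap.restrict_coe_apply, LinearMap.restrict_coe_apply]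
      _ = lam • C (SV (y + z)) := by
          rw [map_add SV, hSVU ⟨y, hy⟩, hSVW ⟨z, hz⟩, ← map_add C]

/-- For nilpotent skew-symmetric endomorphisms `C, C'` of a symplectic
vector space over `ℂ`, `C` is conjugate to a nonzero multiple of `C'` by an isometry
iff `C` is conjugate to `C'` by an isometry. -/
theorem stmt14 {V : Type*} [AddCommGroup V] [Module ℂ V] [FiniteDimensional ℂ V]
    (B : LinearMap.BilinForm ℂ V) (hB : B.Nondegenerate)
    (hBalt : ∀ x y : V, B x y = - B y x)
    (C C' : V →ₗ[ℂ] V)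
    (hCnil : IsNilpotent C) (hC'nil : IsNilpotent C')
    (hC : ∀ x y : V, B (C x) y = - B x (C y))
    (hC' : ∀ x y : V, B (C' x) y = - B x (C' y)) :
    (∃ (lam : ℂ) (P : V ≃ₗ[ℂ] V), lam ≠ 0 ∧
        (∀ x y : V, B (P x) (P y) = B x y) ∧
        (∀ x : V, C x = lam • P (C' (P.symm x)))) ↔
    (∃ Q : V ≃ₗ[ℂ] V, (∀ x y : V, B (Q x) (Q y) = B x y) ∧
        ∀ x : V, C x = Q (C' (Q.symm x))) := by
  constructor
  · rintro ⟨lam, P, hlam, hPiso, hPconj⟩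
    obtain ⟨S, hS⟩ := exists_scaling lam hlam (Module.finrank ℂ V) V C' le_rfl hC'nil
    -- the endomorphism A with B (A x) y = B (S x) (S y)
    set A : Module.End ℂ V :=
      ((B.toDual hB).symm : Module.Dual ℂ V →ₗ[ℂ] V) ∘ₗ
        (B.compl₁₂ (S : V →ₗ[ℂ] V) (S : V →ₗ[ℂ] V)) with hA
    have hAdef : ∀ x y : V, B (A x) y = B (S x) (S y) := by
      intro x y
      rw [hA]
      simp only [LinearMap.comp_apply]
      simp only [LinearEquiv.coe_coe]
      rw [LinearMap.BilinForm.apply_toDual_symm_apply]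
      simp [LinearMap.compl₁₂_apply]
    -- A is injective
    have hA0 : ∀ z : V, A z = 0 → z = 0 := by
      intro z hz
      have hSz : ∀ w : V, B (S z) w = 0 := by
        intro w
        obtain ⟨w', rfl⟩ := S.surjective w
        rw [← hAdef, hz]
        simp
      have := hB.1 _ hSz
      exact (map_eq_zero_iff S S.injective).mp this
    have hAinj : Function.Injective A := by
      intro a b hab
      have : A (a - b) = 0 := by rw [map_sub, hab, sub_self]
      have := hA0 _ this
      exact sub_eq_zero.mp this
    -- A commutes with C'
    have hAC : ∀ x : V, A (C' x) = C' (A x) := by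
      intro x
      have hzero : ∀ y : V, B (A (C' x) - C' (A x)) y = 0 := by
        intro y
        rw [map_sub, LinearMap.sub_apply]
        have h1 : B (A (C' x)) y = lam * - B (S x) (C' (S y)) := by
          rw [hAdef, hS, map_smul, LinearMap.smul_apply, smul_eq_mul, hC']
        have h2 : B (C' (A x)) y = - (B (S x) (lam • C' (S y))) := by
          rw [hC', hAdef, hS]
        rw [h1, h2, map_smul, smul_eq_mul]
        ring
      have := hB.1 _ hzero
      exact sub_eq_zero.mp this
    -- A is B-selfadjoint
    have hAsa : ∀ x y : V, B (A x) y = B x (A y) := by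
      intro x y
      rw [hAdef, hBalt x (A y), hAdef, hBalt (S y) (S x), neg_neg]
    -- polynomials in A are B-selfadjoint
    have hqsa : ∀ q : ℂ[X], ∀ x y : V, B ((aeval A q) x) y = B x ((aeval A q) y) := by
      have hpowsa : ∀ (n : ℕ) (x y : V), B ((A ^ n) x) y = B x ((A ^ n) y) := by
        intro n
        induction n with
        | zero => intro x y; simp
        | succ n ihn =>
          intro x y
          have h1 : ((A ^ (n + 1)) x : V) = A ((A ^ n) x) := by rw [pow_succ']; rfl
          have h2 : ((A ^ (n + 1)) y : V) = (A ^ n) (A y) := by rw [pow_succ]; rfl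
          rw [h1, h2, hAsa, ihn]
      intro q
      induction q using Polynomial.induction_on' with
      | add f g hf hg =>
        intro x y
        simp only [map_add, LinearMap.add_apply, map_add, LinearMap.BilinForm.add_left,
          LinearMap.BilinForm.add_right]
        rw [hf, hg]
      | monomial n a =>
        intro x y
        rw [aeval_monomial]
        simp only [Module.End.mul_apply, Module.algebraMap_end_apply, map_smul,
          LinearMap.smul_apply, smul_eq_mul]
        rw [hpowsa]
    -- square root of A
    obtain ⟨p, hp⟩ := exists_sqrt A hAinj
    set T : Module.End ℂ V := aeval A p with hT
    have hTA : ∀ z : V, T (T z) = A z := by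
      intro z
      have := LinearMap.congr_fun hp z
      simpa [Module.End.mul_apply] using this
    -- T commutes with C'
    have hTC : ∀ x : V, T (C' x) = C' (T x) := by
      have hcomm : Commute C' T := by
        refine Algebra.commute_of_mem_adjoin_singleton_of_commute
          (Polynomial.aeval_mem_adjoin_singleton ℂ A) ?_
        exact LinearMap.ext fun x => by
          simp only [Module.End.mul_apply]
          exact (hAC x).symm
      intro x
      exact (LinearMap.congr_fun hcomm.symm x :)
    -- T is B-selfadjoint
    have hTsa : ∀ x y : V, B (T x) y = B x (T y) := hqsa p
    -- T is bijective
    have hTinj : Function.Injective T := by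
      intro a b hab
      have h1 : T (a - b) = 0 := by rw [map_sub, hab, sub_self]
      have h2 : A (a - b) = 0 := by rw [← hTA, h1, map_zero]
      exact sub_eq_zero.mp (hA0 _ h2)
    have hTbij : Function.Bijective T :=
      ⟨hTinj, (LinearMap.injective_iff_surjective).mp hTinj⟩
    set Teq : V ≃ₗ[ℂ] V := LinearEquiv.ofBijective T hTbij with hTeqdef
    have hTeq : ∀ x : V, Teq x = T x := fun _ => rfl
    have hTTsymm : ∀ x : V, T (Teq.symm x) = x := by
      intro x
      rw [← hTeq]
      exact Teq.apply_symm_apply x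
    -- the final isometry Q
    set Q : V ≃ₗ[ℂ] V := Teq.symm.trans (S.trans P) with hQdef
    have hQapp : ∀ x : V, Q x = P (S (Teq.symm x)) := fun _ => rfl
    have hQsymm : ∀ x : V, Q.symm x = T (S.symm (P.symm x)) := by
      intro x
      rw [hQdef]
      simp only [LinearEquiv.symm_trans_apply]
      rw [LinearEquiv.symm_symm, hTeq]
    refine ⟨Q, ?_, ?_⟩
    · intro x y
      rw [hQapp, hQapp, hPiso, ← hAdef]
      have h1 : A (Teq.symm x) = T (T (Teq.symm x)) := (hTA _).symm
      rw [h1, hTTsymm, hTsa, hTTsymm]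
    · intro x
      rw [hQsymm, ← hTC]
      have h1 : Q (T (C' (S.symm (P.symm x)))) = P (S (Teq.symm (T (C' (S.symm (P.symm x)))))) :=
        hQapp _
      have h2 : Teq.symm (T (C' (S.symm (P.symm x)))) = C' (S.symm (P.symm x)) := by
        rw [← hTeq]
        exact Teq.symm_apply_apply _
      rw [h1, h2, hS, LinearEquiv.apply_symm_apply, map_smul]
      exact hPconj x
  · rintro ⟨Q, hQiso, hQconj⟩
    exact ⟨1, Q, one_ne_zero, hQiso, fun x => by rw [one_smul]; exact hQconj x⟩
end

section
/- Let g be a complex Lie algebra equipped with a symmetric bilinear form B, let X₀ ∈ g satisfy B(X₀, X₀) = 0, and let C₀ be a linear endomorphism of g that is skew-symmetric with respect to B and satisfies C₀(X₀) = 0. Suppose the Lie bracket of g is given by ⁅X, Y⁆ = B(X₀, X) • C₀(Y) − B(X₀, Y) • C₀(X) + B(C₀(X), Y) • X₀ for all X, Y ∈ g. Then g is solvable. (This is the bracket of the even part of a singular quadratic Lie superalgebra of type S₁, proved solvable in Section 5.) -/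
/-- A complex Lie algebra whose bracket has the form
`⁅X, Y⁆ = B(X₀, X) • C₀(Y) − B(X₀, Y) • C₀(X) + B(C₀(X), Y) • X₀`
with `B` symmetric, `B(X₀,X₀) = 0`, `C₀` skew-symmetric and `C₀(X₀) = 0`,
is solvable. -/
theorem stmt16 {g : Type*} [LieRing g] [LieAlgebra ℂ g] [FiniteDimensional ℂ g]
    (B : LinearMap.BilinForm ℂ g) (hBsymm : ∀ x y : g, B x y = B y x)
    (X0 : g) (hX0 : B X0 X0 = 0)
    (C0 : g →ₗ[ℂ] g)
    (hC0skew : ∀ x y : g, B (C0 x) y = - B x (C0 y))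
    (hC0X0 : C0 X0 = 0)
    (hbracket : ∀ X Y : g,
      ⁅X, Y⁆ = B X0 X • C0 Y - B X0 Y • C0 X + B (C0 X) Y • X0) :
    LieAlgebra.IsSolvable g := by
  have hBX0C0 : ∀ y : g, B X0 (C0 y) = 0 := by
    intro y
    have h := hC0skew X0 y
    rw [hC0X0] at h
    simp only [map_zero, LinearMap.zero_apply] at h
    exact neg_eq_zero.mp h.symm
  have h1 : ∀ x y : g, B X0 ⁅x, y⁆ = 0 := by
    intro x y
    rw [hbracket]
    simp [hBX0C0, hX0]
  -- the ideal ker (B X0)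
  let I : LieIdeal ℂ g :=
    { LinearMap.ker (B X0) with
      lie_mem := fun {x m} _ => by
        show ⁅x, m⁆ ∈ LinearMap.ker (B X0)
        rw [LinearMap.mem_ker]
        exact h1 x m }
  -- the ideal span {X0}
  let J : LieIdeal ℂ g :=
    { Submodule.span ℂ {X0} with
      lie_mem := fun {x m} hm => by
        show ⁅x, m⁆ ∈ Submodule.span ℂ {X0}
        rcases Submodule.mem_span_singleton.mp hm with ⟨a, rfl⟩
        rw [hbracket]
        have : C0 (a • X0) = 0 := by rw [map_smul, hC0X0, smul_zero]
        rw [this]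
        have hb : B X0 (a • X0) = 0 := by rw [map_smul, hX0, smul_zero]
        rw [hb]
        simp only [smul_zero, zero_smul, zero_sub, neg_zero, zero_add]
        exact Submodule.smul_mem _ _ (Submodule.mem_span_singleton_self _) }
  have hD1 : LieAlgebra.derivedSeries ℂ g 1 ≤ I := by
    rw [LieAlgebra.derivedSeries_def, LieAlgebra.derivedSeriesOfIdeal_succ,
      LieAlgebra.derivedSeriesOfIdeal_zero, LieSubmodule.lieIdeal_oper_eq_span]
    apply LieSubmodule.lieSpan_le.mpr
    rintro z ⟨x, y, rfl⟩
    exact h1 x y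
  have hIJ : ⁅I, I⁆ ≤ J := by
    rw [LieSubmodule.lieIdeal_oper_eq_span]
    apply LieSubmodule.lieSpan_le.mpr
    rintro z ⟨x, y, rfl⟩
    show ⁅(x : g), (y : g)⁆ ∈ Submodule.span ℂ {X0}
    have hx : B X0 (x : g) = 0 := x.2
    have hy : B X0 (y : g) = 0 := y.2
    rw [hbracket, hx, hy]
    simp only [zero_smul, sub_zero, zero_sub, neg_zero, zero_add]
    exact Submodule.smul_mem _ _ (Submodule.mem_span_singleton_self _)
  have hD2 : LieAlgebra.derivedSeries ℂ g 2 ≤ J := by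
    have : LieAlgebra.derivedSeries ℂ g 2 = ⁅LieAlgebra.derivedSeries ℂ g 1,
        LieAlgebra.derivedSeries ℂ g 1⁆ := by
      rw [LieAlgebra.derivedSeries_def, LieAlgebra.derivedSeriesOfIdeal_succ]
    rw [this]
    exact le_trans (LieSubmodule.mono_lie hD1 hD1) hIJ
  have hD3 : LieAlgebra.derivedSeries ℂ g 3 = ⊥ := by
    have heq : LieAlgebra.derivedSeries ℂ g 3 = ⁅LieAlgebra.derivedSeries ℂ g 2,
        LieAlgebra.derivedSeries ℂ g 2⁆ := by
      rw [LieAlgebra.derivedSeries_def, LieAlgebra.derivedSeriesOfIdeal_succ]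
    rw [heq, eq_bot_iff]
    refine le_trans (LieSubmodule.mono_lie hD2 hD2) ?_
    rw [LieSubmodule.lieIdeal_oper_eq_span]
    apply LieSubmodule.lieSpan_le.mpr
    rintro z ⟨x, y, rfl⟩
    have hx : (x : g) ∈ Submodule.span ℂ ({X0} : Set g) := x.2
    have hy : (y : g) ∈ Submodule.span ℂ ({X0} : Set g) := y.2
    rcases Submodule.mem_span_singleton.mp hx with ⟨a, ha⟩
    rcases Submodule.mem_span_singleton.mp hy with ⟨b, hb⟩
    show ⁅(x : g), (y : g)⁆ ∈ (⊥ : LieIdeal ℂ g)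
    rw [hbracket, ← ha, ← hb]
    simp [hC0X0, hX0]
  exact LieAlgebra.IsSolvable.mk hD3
end

section
/- Let (g, B) be a non-abelian quadratic Lie algebra over ℂ. Then there exist Lie ideals z and l of g such that: g = z ⊕ l as vector spaces with B(z, l) = 0; z is central, i.e. ⁅z, g⁆ = 0; the restrictions of B to z × z and to l × l are nondegenerate; l is non-abelian; and the center of l is totally isotropic, i.e. the center of l is contained in the derived ideal ⁅l, l⁆. -/
open LinearMap.BilinForm

private lemma lie_flip_zero {L : Type*} [LieRing L] {a x : L} (h : ⁅a, x⁆ = 0) : ⁅x, a⁆ = 0 := by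
  rw [← lie_skew, h, neg_zero]

/-- A non-abelian quadratic Lie algebra over `ℂ` decomposes as an
orthogonal direct sum `g = z ⊕ l` of ideals, where `z` is central, the restrictions
of `B` to `z` and `l` are nondegenerate, `l` is non-abelian, and the center of `l` is
totally isotropic, i.e. contained in the derived ideal `⁅l, l⁆`. -/
theorem stmt19 {g : Type*} [LieRing g] [LieAlgebra ℂ g] [FiniteDimensional ℂ g]
    (B : LinearMap.BilinForm ℂ g) (hB : B.Nondegenerate)
    (hBsymm : ∀ x y : g, B x y = B y x)
    (hBinv : ∀ x y z : g, B ⁅x, y⁆ z = B x ⁅y, z⁆)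
    (hnonab : ∃ x y : g, ⁅x, y⁆ ≠ 0) :
    ∃ z l : LieIdeal ℂ g,
      IsCompl (z : Submodule ℂ g) (l : Submodule ℂ g) ∧
      (∀ a ∈ z, ∀ b ∈ l, B a b = 0) ∧
      (∀ a ∈ z, ∀ x : g, ⁅a, x⁆ = 0) ∧
      (B.restrict (z : Submodule ℂ g)).Nondegenerate ∧
      (B.restrict (l : Submodule ℂ g)).Nondegenerate ∧
      (∃ a ∈ l, ∃ b ∈ l, ⁅a, b⁆ ≠ 0) ∧
      (∀ x ∈ l, (∀ y ∈ l, ⁅x, y⁆ = 0) →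
        x ∈ Submodule.span ℂ {m : g | ∃ a ∈ l, ∃ b ∈ l, m = ⁅a, b⁆}) := by
  classical
  have hrefl : B.IsRefl := fun x y h => by rw [hBsymm]; exact h
  -- the center as a submodule
  set Z : Submodule ℂ g :=
    { carrier := {x : g | ∀ y : g, ⁅x, y⁆ = 0}
      add_mem' := fun {a b} ha hb y => by rw [add_lie, ha y, hb y, add_zero]
      zero_mem' := fun y => zero_lie y
      smul_mem' := fun c a ha y => by rw [smul_lie, ha y, smul_zero] } with hZdef
  have hZmem : ∀ x : g, x ∈ Z ↔ ∀ y : g, ⁅x, y⁆ = 0 := fun x => Iff.rfl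
  -- derived submodule
  set D : Submodule ℂ g := Submodule.span ℂ {m : g | ∃ a b : g, m = ⁅a, b⁆} with hDdef
  have hDmem : ∀ a b : g, ⁅a, b⁆ ∈ D := fun a b => Submodule.subset_span ⟨a, b, rfl⟩
  -- Z is the orthogonal of D
  have hZD : Z = B.orthogonal D := by
    ext x
    constructor
    · intro hx n hn
      induction hn using Submodule.span_induction with
      | mem m hm =>
        obtain ⟨a, b, rfl⟩ := hm
        show B ⁅a, b⁆ x = 0
        rw [hBinv, hBsymm, lie_flip_zero ((hZmem x).mp hx b)]
        simp
      | zero => exact B.isOrtho_zero_left x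
      | add m n _ _ hm hn =>
        show B (m + n) x = 0
        rw [map_add, LinearMap.add_apply, show B m x = 0 from hm, show B n x = 0 from hn, add_zero]
      | smul c m _ hm =>
        show B (c • m) x = 0
        rw [map_smul, LinearMap.smul_apply, show B m x = 0 from hm, smul_zero]
    · intro hx y
      apply hB.1
      intro w
      rw [hBinv, hBsymm]
      exact hx ⁅y, w⁆ (hDmem y w)
  have hZorth : B.orthogonal Z = D := by rw [hZD, orthogonal_orthogonal hB hrefl]
  -- radical of B restricted to Z
  set R : Submodule ℂ g := Z ⊓ B.orthogonal Z with hRdef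
  have hRZ : R ≤ Z := inf_le_left
  -- complement of R inside Z
  obtain ⟨C, hC⟩ := Submodule.exists_isCompl (Submodule.comap Z.subtype R)
  set z : Submodule ℂ g := C.map Z.subtype with hzdef
  have hzZ : z ≤ Z := by rintro x ⟨⟨c, hc⟩, _, rfl⟩; exact hc
  have hzR_disj : z ⊓ R = ⊥ := by
    rw [eq_bot_iff]
    rintro x ⟨⟨⟨c, hcZ⟩, hcC, rfl⟩, hxR⟩
    have h1 : (⟨c, hcZ⟩ : Z) ∈ C ⊓ Submodule.comap Z.subtype R := ⟨hcC, hxR⟩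
    rw [inf_comm, hC.inf_eq_bot] at h1
    simp only [Submodule.mem_bot] at h1
    simp [h1]
  have hzR_sup : z ⊔ R = Z := by
    have h1 : Submodule.map Z.subtype (C ⊔ Submodule.comap Z.subtype R) = Z := by
      rw [sup_comm, hC.sup_eq_top, Submodule.map_top, Submodule.range_subtype]
    rwa [Submodule.map_sup, Submodule.map_comap_subtype, inf_eq_right.mpr hRZ] at h1
  -- B restricted to z is nondegenerate
  have hznd : (B.restrict z).Nondegenerate := by
    refine LinearMap.BilinForm.Nondegenerate.ofSeparatingLeft ?_
    rintro ⟨x, hxz⟩ hx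
    have hxZ : ∀ n ∈ Z, B n x = 0 := by
      intro n hn
      rw [← hzR_sup, Submodule.mem_sup] at hn
      obtain ⟨a, ha, r, hr, rfl⟩ := hn
      have h1 : B a x = 0 := by rw [hBsymm]; exact hx ⟨a, ha⟩
      have h2 : B r x = 0 := by
        rw [hBsymm]
        exact hr.2 x (hzZ hxz)
      rw [map_add, LinearMap.add_apply, h1, h2, add_zero]
    have hxR : x ∈ R := ⟨hzZ hxz, hxZ⟩
    have : x ∈ z ⊓ R := ⟨hxz, hxR⟩
    rw [hzR_disj, Submodule.mem_bot] at this
    exact Subtype.ext this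
  -- z is central
  have hzcentral : ∀ a ∈ z, ∀ x : g, ⁅a, x⁆ = 0 := fun a ha x => (hZmem a).mp (hzZ ha) x
  -- the two ideals
  set l : Submodule ℂ g := B.orthogonal z with hldef
  have hcompl : IsCompl z l := isCompl_orthogonal_of_restrict_nondegenerate hrefl hznd
  set zI : LieIdeal ℂ g :=
    { toSubmodule := z
      lie_mem := fun {x m} hm => by
        have h0 : ⁅x, m⁆ = 0 := lie_flip_zero (hzcentral m hm x)
        show ⁅x, m⁆ ∈ z
        rw [h0]; exact z.zero_mem } with hzIdef
  set lI : LieIdeal ℂ g :=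
    { toSubmodule := l
      lie_mem := fun {x m} hm => by
        show ⁅x, m⁆ ∈ l
        intro n hn
        show B n ⁅x, m⁆ = 0
        rw [← hBinv, hzcentral n hn x, map_zero, LinearMap.zero_apply] } with hlIdef
  have hzIco : (zI : Submodule ℂ g) = z := rfl
  have hlIco : (lI : Submodule ℂ g) = l := rfl
  refine ⟨zI, lI, ?_, ?_, ?_, ?_, ?_, ?_, ?_⟩
  · rw [hzIco, hlIco]; exact hcompl
  · intro a ha b hb
    exact hb a ha
  · intro a ha x
    exact hzcentral a ha x
  · rw [hzIco]; exact hznd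
  · rw [hlIco]
    refine LinearMap.BilinForm.Nondegenerate.ofSeparatingLeft ?_
    rintro ⟨x, hxl⟩ hx
    have hx0 : ∀ w : g, B x w = 0 := by
      intro w
      obtain ⟨a, b, ha, hb, rfl⟩ := Submodule.codisjoint_iff_exists_add_eq.mp hcompl.codisjoint w
      have h1 : B x a = 0 := by rw [hBsymm]; exact hxl a ha
      have h2 : B x b = 0 := hx ⟨b, hb⟩
      rw [map_add, h1, h2, add_zero]
    exact Subtype.ext (hB.1 x hx0)
  · obtain ⟨x, y, hxy⟩ := hnonab
    obtain ⟨a₁, b₁, ha₁, hb₁, rfl⟩ := Submodule.codisjoint_iff_exists_add_eq.mp hcompl.codisjoint x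
    obtain ⟨a₂, b₂, ha₂, hb₂, rfl⟩ := Submodule.codisjoint_iff_exists_add_eq.mp hcompl.codisjoint y
    refine ⟨b₁, hb₁, b₂, hb₂, ?_⟩
    intro h0
    apply hxy
    have hba : ⁅b₁, a₂⁆ = 0 := lie_flip_zero (hzcentral a₂ ha₂ b₁)
    rw [add_lie, lie_add, lie_add, hzcentral a₁ ha₁ a₂, hzcentral a₁ ha₁ b₂, hba, h0]
    simp
  · intro x hxl hx
    -- x is central in g
    have hxZ : x ∈ Z := by
      rw [hZmem]
      intro w
      obtain ⟨a, b, ha, hb, rfl⟩ := Submodule.codisjoint_iff_exists_add_eq.mp hcompl.codisjoint w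
      have h1 : ⁅x, a⁆ = 0 := lie_flip_zero (hzcentral a ha x)
      rw [lie_add, h1, hx b hb, add_zero]
    -- decompose x along z ⊔ R
    have hxZR : x ∈ z ⊔ R := hzR_sup ▸ hxZ
    rw [Submodule.mem_sup] at hxZR
    obtain ⟨a, ha, r, hr, rfl⟩ := hxZR
    have hrD : r ∈ D := hZorth ▸ hr.2
    have hDl : D ≤ l := by
      rw [← hZorth]
      exact orthogonal_le hzZ
    have hrl : r ∈ l := hDl hrD
    have hal : a ∈ l := by
      have h := l.sub_mem hxl hrl
      rwa [add_sub_cancel_right] at h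
    have ha0 : a = 0 := by
      have : a ∈ z ⊓ l := ⟨ha, hal⟩
      rwa [hcompl.inf_eq_bot, Submodule.mem_bot] at this
    subst ha0
    rw [zero_add]
    -- r ∈ D, and D is contained in the span of brackets of elements of l
    have hDspan : D ≤ Submodule.span ℂ {m : g | ∃ a ∈ lI, ∃ b ∈ lI, m = ⁅a, b⁆} := by
      rw [hDdef]
      apply Submodule.span_le.mpr
      rintro m ⟨p, q, rfl⟩
      obtain ⟨p₁, p₂, hp₁, hp₂, rfl⟩ := Submodule.codisjoint_iff_exists_add_eq.mp hcompl.codisjoint p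
      obtain ⟨q₁, q₂, hq₁, hq₂, rfl⟩ := Submodule.codisjoint_iff_exists_add_eq.mp hcompl.codisjoint q
      have hpq : ⁅p₁ + p₂, q₁ + q₂⁆ = ⁅p₂, q₂⁆ := by
        have h1 : ⁅p₂, q₁⁆ = 0 := lie_flip_zero (hzcentral q₁ hq₁ p₂)
        rw [add_lie, lie_add, lie_add, hzcentral p₁ hp₁ q₁, hzcentral p₁ hp₁ q₂, h1]
        simp
      rw [hpq]
      exact Submodule.subset_span ⟨p₂, hp₂, q₂, hq₂, rfl⟩
    exact hDspan hrD
end
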